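/- arXiv:0812.1719 — 6 statements merged into one kernel-verified Lean document; each statement's English description precedes it below -/
import Mathlib

section
/- Let (X_k)_{1≤k≤n} be a sequence of martingale differences adapted to a filtration (F_k). Assume there exist constants Q ≥ 1, δ > 0 and K > 0 such that for all k ∈ {1,…,n}, almost surely E[exp(δ|X_k|^Q) | F_{k-1}] ≤ K. Then there exists a constant c > 0, depending only on Q, δ and K, such that for all x > 0: P[S_n/n > x] ≤ exp(−n c x²) if 0 < x ≤ 1, and P[S_n/n > x] ≤ exp(−n c x^Q) if x > 1; the same bounds hold for P[−S_n/n > x]. -/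
open MeasureTheory ProbabilityTheory Filter

set_option maxHeartbeats 1000000

section auxiliary
open Real

lemma exp_le_one_add_add_sq_mul (u : ℝ) :
    Real.exp u ≤ 1 + u + u ^ 2 * Real.exp |u| := by
  rcases le_or_gt 0 u with h | h
  · rw [abs_of_nonneg h]
    have h2 : Real.exp u * (1 - u) ≤ 1 := by
      have h3 : 1 - u ≤ Real.exp (-u) := by
        have := Real.add_one_le_exp (-u); linarith
      calc Real.exp u * (1 - u) ≤ Real.exp u * Real.exp (-u) :=
            mul_le_mul_of_nonneg_left h3 (Real.exp_pos u).le
        _ = 1 := by rw [← Real.exp_add]; simp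
    nlinarith [Real.exp_pos u, mul_nonneg h (Real.exp_pos u).le,
      mul_nonneg (mul_nonneg h h) (Real.exp_pos u).le]
  · rw [abs_of_neg h]
    have hb : (1:ℝ) ≤ Real.exp (-u) := Real.one_le_exp (by linarith)
    rcases le_or_gt (-1) u with h1 | h1
    · have ha : Real.exp u * (1 - u) ≤ 1 := by
        have h3 : 1 - u ≤ Real.exp (-u) := by
          have := Real.add_one_le_exp (-u); linarith
        calc Real.exp u * (1 - u) ≤ Real.exp u * Real.exp (-u) :=
              mul_le_mul_of_nonneg_left h3 (Real.exp_pos u).le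
          _ = 1 := by rw [← Real.exp_add]; simp
      have hpos : (0:ℝ) ≤ 1 + u + u ^ 2 := by nlinarith [sq_nonneg (1 + u)]
      have t1 : Real.exp u * (1 - u) * (1 + u + u ^ 2) ≤ 1 * (1 + u + u ^ 2) :=
        mul_le_mul_of_nonneg_right ha hpos
      have t2 : (0:ℝ) ≤ Real.exp u * (-u) ^ 3 :=
        mul_nonneg (Real.exp_pos u).le (by nlinarith [sq_nonneg u, neg_nonneg.2 h.le])
      have t3 : (0:ℝ) ≤ u ^ 2 * (Real.exp (-u) - 1) :=
        mul_nonneg (sq_nonneg u) (by linarith)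
      nlinarith [t1, t2, t3]
    · have hc : Real.exp u ≤ 1 := Real.exp_le_one_iff.2 h.le
      nlinarith [sq_nonneg u]

-- t ≤ 1 + t^Q for t ≥ 0, Q ≥ 1
lemma le_one_add_rpow {Q : ℝ} (hQ : 1 ≤ Q) {t : ℝ} (ht : 0 ≤ t) :
    t ≤ 1 + t ^ Q := by
  rcases le_or_gt t 1 with h | h
  · have : (0:ℝ) ≤ t ^ Q := Real.rpow_nonneg ht _
    linarith
  · have h1 : t ^ (1:ℝ) ≤ t ^ Q := Real.rpow_le_rpow_of_exponent_le h.le hQ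
    rw [Real.rpow_one] at h1
    have : (0:ℝ) ≤ t ^ Q := Real.rpow_nonneg ht _
    linarith

-- main quadratic domination: for 0 ≤ l ≤ δ/2, t ≥ 0:
lemma sq_mul_exp_le {Q δ : ℝ} (hQ : 1 ≤ Q) (hδ : 0 < δ) {l t : ℝ}
    (hl0 : 0 ≤ l) (hl : l ≤ δ / 2) (ht : 0 ≤ t) :
    t ^ 2 * Real.exp (l * t) ≤ 16 / δ ^ 2 * Real.exp δ * Real.exp (δ * t ^ Q) := by
  have h1 : δ / 4 * t ≤ Real.exp (δ / 4 * t) := by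
    have := Real.add_one_le_exp (δ / 4 * t); linarith
  have h2 : t ^ 2 ≤ 16 / δ ^ 2 * Real.exp (δ / 2 * t) := by
    have hsq : (δ / 4 * t) ^ 2 ≤ Real.exp (δ / 4 * t) ^ 2 := by
      have hnn : 0 ≤ δ / 4 * t := by positivity
      exact pow_le_pow_left₀ hnn h1 2
    rw [← Real.exp_nat_mul] at hsq
    have : Real.exp ((2:ℕ) * (δ / 4 * t)) = Real.exp (δ / 2 * t) := by
      norm_num; ring_nf
    rw [this] at hsq
    have hd2 : (0:ℝ) < δ ^ 2 := by positivity
    rw [div_mul_eq_mul_div, le_div_iff₀ hd2]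
    nlinarith [hsq]
  have h3 : t ^ 2 * Real.exp (l * t) ≤ 16 / δ ^ 2 * Real.exp (δ * t) := by
    calc t ^ 2 * Real.exp (l * t)
        ≤ 16 / δ ^ 2 * Real.exp (δ / 2 * t) * Real.exp (l * t) := by
          apply mul_le_mul_of_nonneg_right h2 (Real.exp_pos _).le
      _ = 16 / δ ^ 2 * Real.exp (δ / 2 * t + l * t) := by rw [mul_assoc, ← Real.exp_add]
      _ ≤ 16 / δ ^ 2 * Real.exp (δ * t) := by
          apply mul_le_mul_of_nonneg_left _ (by positivity)
          apply Real.exp_le_exp.2; nlinarith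
  have h4 : Real.exp (δ * t) ≤ Real.exp δ * Real.exp (δ * t ^ Q) := by
    rw [← Real.exp_add]
    apply Real.exp_le_exp.2
    have := le_one_add_rpow hQ ht
    nlinarith
  calc t ^ 2 * Real.exp (l * t) ≤ 16 / δ ^ 2 * Real.exp (δ * t) := h3
    _ ≤ 16 / δ ^ 2 * (Real.exp δ * Real.exp (δ * t ^ Q)) :=
        mul_le_mul_of_nonneg_left h4 (by positivity)
    _ = 16 / δ ^ 2 * Real.exp δ * Real.exp (δ * t ^ Q) := by ring

-- linear domination for small l: exp(l t) ≤ exp(δ/2) exp(δ t^Q)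
lemma exp_lin_le {Q δ : ℝ} (hQ : 1 ≤ Q) (hδ : 0 < δ) {l t : ℝ}
    (hl0 : 0 ≤ l) (hl : l ≤ δ / 2) (ht : 0 ≤ t) :
    Real.exp (l * t) ≤ Real.exp (δ / 2) * Real.exp (δ * t ^ Q) := by
  rw [← Real.exp_add]
  apply Real.exp_le_exp.2
  have h1 := le_one_add_rpow hQ ht
  have h2 : l * t ≤ δ / 2 * t := mul_le_mul_of_nonneg_right hl ht
  have h3 : (0:ℝ) ≤ t ^ Q := Real.rpow_nonneg ht _
  nlinarith

-- Young: for Q > 1, l ≥ 0, t ≥ 0: l*t ≤ δ t^Q + Cy * l^(Q/(Q-1))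
lemma young_dom {Q δ : ℝ} (hQ : 1 < Q) (hδ : 0 < δ) {l t : ℝ}
    (hl0 : 0 ≤ l) (ht : 0 ≤ t) :
    l * t ≤ δ * t ^ Q + ((Q * δ) ^ (Q⁻¹)) ^ (-(Q / (Q - 1))) * l ^ (Q / (Q - 1)) := by
  set q : ℝ := Q / (Q - 1) with hq
  have hconj : Q.HolderConjugate q := Real.HolderConjugate.conjExponent hQ
  have hQδ : (0:ℝ) < Q * δ := by positivity
  have hr : (0:ℝ) < (Q * δ) ^ (Q⁻¹) := Real.rpow_pos_of_pos hQδ _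
  have key := Real.young_inequality_of_nonneg
    (mul_nonneg hr.le ht) (div_nonneg hl0 hr.le) hconj
  have ha : ((Q * δ) ^ (Q⁻¹) * t) ^ Q = Q * δ * t ^ Q := by
    rw [Real.mul_rpow hr.le ht, ← Real.rpow_mul hQδ.le,
      inv_mul_cancel₀ (by linarith : Q ≠ 0), Real.rpow_one]
  have hab : (Q * δ) ^ Q⁻¹ * t * (l / (Q * δ) ^ Q⁻¹) = l * t := by
    field_simp
  have hbq : (l / (Q * δ) ^ Q⁻¹) ^ q = ((Q * δ) ^ (Q⁻¹)) ^ (-q) * l ^ q := by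
    rw [Real.div_rpow hl0 hr.le, Real.rpow_neg hr.le]
    rw [div_eq_mul_inv, mul_comm]
  have hq1 : 1 < q := hconj.symm.lt
  have hbqnn : (0:ℝ) ≤ (l / (Q * δ) ^ Q⁻¹) ^ q :=
    Real.rpow_nonneg (div_nonneg hl0 hr.le) _
  have h5 : Q * δ * t ^ Q / Q = δ * t ^ Q := by
    field_simp
  have h6 : (l / (Q * δ) ^ Q⁻¹) ^ q / q ≤ (l / (Q * δ) ^ Q⁻¹) ^ q :=
    div_le_self hbqnn hq1.le
  rw [hab, ha, h5, hbq] at key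
  rw [hbq] at h6
  linarith

end auxiliary

section condexp_bounds
open Real


lemma condexp_mgf_bound_small {Ω : Type*} {m0 : MeasurableSpace Ω}
    {μ : Measure Ω} [IsProbabilityMeasure μ] {m : MeasurableSpace Ω} (hm : m ≤ m0)
    {Q δ K : ℝ} (hQ : 1 ≤ Q) (hδ : 0 < δ) (hK : 1 ≤ K)
    {X : Ω → ℝ} (hint : Integrable X μ) (hzero : μ[X|m] =ᵐ[μ] 0)
    (hexp_int : Integrable (fun ω => Real.exp (δ * |X ω| ^ Q)) μ)
    (hexp_bd : ∀ᵐ ω ∂μ, (μ[fun ω' => Real.exp (δ * |X ω'| ^ Q)|m]) ω ≤ K)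
    {l : ℝ} (hl0 : 0 ≤ l) (hl : l ≤ δ / 2) :
    Integrable (fun ω => Real.exp (l * X ω)) μ ∧
    ∀ᵐ ω ∂μ, (μ[fun ω' => Real.exp (l * X ω')|m]) ω
      ≤ 1 + (16 / δ ^ 2 * Real.exp δ * K) * l ^ 2 := by
  set B : ℝ := 16 / δ ^ 2 * Real.exp δ with hB
  have hBpos : 0 < B := by positivity
  set e : Ω → ℝ := fun ω => Real.exp (δ * |X ω| ^ Q) with he
  -- pointwise bound
  have hpt : ∀ ω, Real.exp (l * X ω) ≤ 1 + l * X ω + l ^ 2 * B * e ω := by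
    intro ω
    have h1 := exp_le_one_add_add_sq_mul (l * X ω)
    have habs : |l * X ω| = l * |X ω| := by rw [abs_mul, abs_of_nonneg hl0]
    have h3 := sq_mul_exp_le hQ hδ hl0 hl (abs_nonneg (X ω))
    have h2 : (l * X ω) ^ 2 * Real.exp |l * X ω| ≤ l ^ 2 * B * e ω := by
      calc (l * X ω) ^ 2 * Real.exp |l * X ω|
          = l ^ 2 * (|X ω| ^ 2 * Real.exp (l * |X ω|)) := by
            rw [habs, mul_pow, sq_abs]; ring
        _ ≤ l ^ 2 * (B * e ω) := mul_le_mul_of_nonneg_left h3 (sq_nonneg l)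
        _ = l ^ 2 * B * e ω := by ring
    linarith
  -- integrability
  have hg1 : Integrable (fun ω => 1 + l * X ω) μ :=
    (integrable_const 1).add (hint.const_mul l)
  have hg2 : Integrable (fun ω => l ^ 2 * B * e ω) μ := hexp_int.const_mul _
  have hgint : Integrable (fun ω => 1 + l * X ω + l ^ 2 * B * e ω) μ := hg1.add hg2
  have hfmeas : AEStronglyMeasurable (m := m0) (fun ω => Real.exp (l * X ω)) μ :=
    Real.continuous_exp.comp_aestronglyMeasurable (hint.1.const_mul l)
  have hfint : Integrable (fun ω => Real.exp (l * X ω)) μ := by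
    refine hgint.mono' hfmeas (Filter.Eventually.of_forall fun ω => ?_)
    rw [Real.norm_eq_abs, abs_of_pos (Real.exp_pos _)]
    exact hpt ω
  refine ⟨hfint, ?_⟩
  -- condexp bound
  have hle := condExp_mono (m := m) hfint hgint (Filter.Eventually.of_forall hpt)
  have hdec1 : (μ[fun ω => 1 + l * X ω + l ^ 2 * B * e ω|m]) =ᵐ[μ]
      (μ[fun ω => 1 + l * X ω|m]) + (μ[fun ω => l ^ 2 * B * e ω|m]) :=
    condExp_add hg1 hg2 m
  have hdec2 : (μ[fun ω => 1 + l * X ω|m]) =ᵐ[μ]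
      (μ[fun _ => (1:ℝ)|m]) + (μ[fun ω => l * X ω|m]) :=
    condExp_add (integrable_const 1) (hint.const_mul l) m
  have hconst : (μ[fun _ => (1:ℝ)|m]) =ᵐ[μ] fun _ => (1:ℝ) :=
    Filter.EventuallyEq.of_eq (condExp_const hm 1)
  have hX : (μ[fun ω => l * X ω|m]) =ᵐ[μ] fun _ => (0:ℝ) := by
    have h := condExp_smul (μ := μ) (m := m) l X
    have : (fun ω => l * X ω) = l • X := rfl
    rw [this]
    refine h.trans ?_
    filter_upwards [hzero] with ω hω
    simp [hω]
  have hE : (μ[fun ω => l ^ 2 * B * e ω|m]) =ᵐ[μ] (l ^ 2 * B) • (μ[e|m]) := by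
    have h := condExp_smul (μ := μ) (m := m) (l ^ 2 * B) e
    have : (fun ω => l ^ 2 * B * e ω) = (l ^ 2 * B) • e := rfl
    rw [this]; exact h
  filter_upwards [hle, hdec1, hdec2, hconst, hX, hE, hexp_bd] with ω w1 w2 w3 w4 w5 w6 w7
  have : (μ[fun ω' => Real.exp (l * X ω')|m]) ω ≤ 1 + 0 + l ^ 2 * B * ((μ[e|m]) ω) := by
    rw [Pi.add_apply] at w2 w3
    rw [w2, w3, w4, w5, w6] at w1
    simpa using w1
  have hnn : l ^ 2 * B * ((μ[e|m]) ω) ≤ l ^ 2 * B * K :=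
    mul_le_mul_of_nonneg_left w7 (by positivity)
  calc (μ[fun ω' => Real.exp (l * X ω')|m]) ω ≤ 1 + 0 + l ^ 2 * B * ((μ[e|m]) ω) := this
    _ ≤ 1 + (B * K) * l ^ 2 := by nlinarith [hnn]
    _ = 1 + (16 / δ ^ 2 * Real.exp δ * K) * l ^ 2 := by rw [hB]

lemma condexp_mgf_bound_large {Ω : Type*} {m0 : MeasurableSpace Ω}
    {μ : Measure Ω} [IsProbabilityMeasure μ] {m : MeasurableSpace Ω} (hm : m ≤ m0)
    {Q δ K : ℝ} (hQ : 1 < Q) (hδ : 0 < δ) (hK : 1 ≤ K)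
    {X : Ω → ℝ} (hmeas : AEStronglyMeasurable (m := m0) X μ)
    (hexp_int : Integrable (fun ω => Real.exp (δ * |X ω| ^ Q)) μ)
    (hexp_bd : ∀ᵐ ω ∂μ, (μ[fun ω' => Real.exp (δ * |X ω'| ^ Q)|m]) ω ≤ K)
    {l : ℝ} (hl0 : 0 ≤ l) :
    Integrable (fun ω => Real.exp (l * X ω)) μ ∧
    ∀ᵐ ω ∂μ, (μ[fun ω' => Real.exp (l * X ω')|m]) ω
      ≤ K * Real.exp (((Q * δ) ^ (Q⁻¹)) ^ (-(Q / (Q - 1))) * l ^ (Q / (Q - 1))) := by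
  set C : ℝ := ((Q * δ) ^ (Q⁻¹)) ^ (-(Q / (Q - 1))) * l ^ (Q / (Q - 1)) with hC
  set e : Ω → ℝ := fun ω => Real.exp (δ * |X ω| ^ Q) with he
  have hpt : ∀ ω, Real.exp (l * X ω) ≤ Real.exp C * e ω := by
    intro ω
    have h1 : l * X ω ≤ l * |X ω| :=
      mul_le_mul_of_nonneg_left (le_abs_self _) hl0
    have h2 := young_dom hQ hδ hl0 (abs_nonneg (X ω))
    rw [← Real.exp_add]
    exact Real.exp_le_exp.2 (by rw [hC]; linarith)
  have hgint : Integrable (fun ω => Real.exp C * e ω) μ := hexp_int.const_mul _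
  have hfmeas : AEStronglyMeasurable (m := m0) (fun ω => Real.exp (l * X ω)) μ :=
    Real.continuous_exp.comp_aestronglyMeasurable (hmeas.const_mul l)
  have hfint : Integrable (fun ω => Real.exp (l * X ω)) μ := by
    refine hgint.mono' hfmeas (Filter.Eventually.of_forall fun ω => ?_)
    rw [Real.norm_eq_abs, abs_of_pos (Real.exp_pos _)]
    exact hpt ω
  refine ⟨hfint, ?_⟩
  have hle := condExp_mono (m := m) hfint hgint (Filter.Eventually.of_forall hpt)
  have hE : (μ[fun ω => Real.exp C * e ω|m]) =ᵐ[μ] (Real.exp C) • (μ[e|m]) := by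
    have h := condExp_smul (μ := μ) (m := m) (Real.exp C) e
    have : (fun ω => Real.exp C * e ω) = (Real.exp C) • e := rfl
    rw [this]; exact h
  filter_upwards [hle, hE, hexp_bd] with ω w1 w2 w3
  have : (μ[fun ω' => Real.exp (l * X ω')|m]) ω ≤ Real.exp C * ((μ[e|m]) ω) := by
    rw [w2] at w1; simpa using w1
  calc (μ[fun ω' => Real.exp (l * X ω')|m]) ω ≤ Real.exp C * ((μ[e|m]) ω) := this
    _ ≤ Real.exp C * K := mul_le_mul_of_nonneg_left w3 (Real.exp_pos _).le
    _ = K * Real.exp C := by ring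

end condexp_bounds

section tower
open Real

lemma tower_prod_bound {Ω : Type*} {m0 : MeasurableSpace Ω} (μ : Measure Ω)
    [IsProbabilityMeasure μ] (ℱ : Filtration ℕ m0) (M Cb : ℝ) (hM : 0 ≤ M)
    (hCb : 0 ≤ Cb) (Y : ℕ → Ω → ℝ) (n : ℕ)
    (hmeas : ∀ k ∈ Finset.Icc 1 n, StronglyMeasurable[ℱ k] (Y k))
    (hpos : ∀ k ω, 0 ≤ Y k ω)
    (hbdd : ∀ k ω, Y k ω ≤ Cb)
    (hcond : ∀ k ∈ Finset.Icc 1 n, ∀ᵐ ω ∂μ, (μ[Y k|ℱ (k - 1)]) ω ≤ M) :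
    ∫ ω, ∏ k ∈ Finset.Icc 1 n, Y k ω ∂μ ≤ M ^ n := by
  induction n with
  | zero => simp
  | succ n ih =>
    have hsub : Finset.Icc 1 n ⊆ Finset.Icc 1 (n + 1) :=
      Finset.Icc_subset_Icc_right (by omega)
    have IH : ∫ ω, ∏ k ∈ Finset.Icc 1 n, Y k ω ∂μ ≤ M ^ n :=
      ih (fun k hk => hmeas k (hsub hk)) (fun k hk => hcond k (hsub hk))
    set f : Ω → ℝ := fun ω => ∏ k ∈ Finset.Icc 1 n, Y k ω with hf
    set g : Ω → ℝ := Y (n + 1) with hg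
    have hmem : n + 1 ∈ Finset.Icc 1 (n + 1) := by simp
    -- split the product
    have hsplit : ∀ ω, ∏ k ∈ Finset.Icc 1 (n + 1), Y k ω = f ω * g ω := by
      intro ω
      exact Finset.prod_Icc_succ_top (by omega) fun k => Y k ω
    -- measurability of f w.r.t. ℱ n
    have hfmeas : StronglyMeasurable[ℱ n] f := by
      apply Finset.stronglyMeasurable_fun_prod
      intro k hk
      exact (hmeas k (hsub hk)).mono (ℱ.mono (Finset.mem_Icc.1 hk).2)
    have hfmeas0 : StronglyMeasurable f := hfmeas.mono (ℱ.le n)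
    have hgmeas0 : StronglyMeasurable g := (hmeas (n + 1) hmem).mono (ℱ.le (n + 1))
    -- nonnegativity and bounds for f
    have hfpos : ∀ ω, 0 ≤ f ω := fun ω =>
      Finset.prod_nonneg fun k _ => hpos k ω
    have hfbd : ∀ ω, f ω ≤ Cb ^ n := by
      intro ω
      calc f ω ≤ ∏ _k ∈ Finset.Icc 1 n, Cb :=
            Finset.prod_le_prod (fun k _ => hpos k ω) (fun k _ => hbdd k ω)
        _ = Cb ^ n := by rw [Finset.prod_const, Nat.card_Icc]; norm_num
    -- integrability
    have hfint : Integrable f μ := by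
      refine (integrable_const (Cb ^ n)).mono' hfmeas0.aestronglyMeasurable ?_
      exact Filter.Eventually.of_forall fun ω => by
        rw [Real.norm_eq_abs, abs_of_nonneg (hfpos ω)]; exact hfbd ω
    have hgint : Integrable g μ := by
      refine (integrable_const Cb).mono' hgmeas0.aestronglyMeasurable ?_
      exact Filter.Eventually.of_forall fun ω => by
        rw [Real.norm_eq_abs, abs_of_nonneg (hpos _ ω)]; exact hbdd _ ω
    have hfgint : Integrable (f * g) μ := by
      refine (integrable_const (Cb ^ n * Cb)).mono'
        (hfmeas0.mul hgmeas0).aestronglyMeasurable ?_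
      refine Filter.Eventually.of_forall fun ω => ?_
      rw [Pi.mul_apply, Real.norm_eq_abs,
        abs_of_nonneg (mul_nonneg (hfpos ω) (hpos _ ω))]
      exact mul_le_mul (hfbd ω) (hbdd _ ω) (hpos _ ω) (by positivity)
    -- the conditional expectation step
    have hpull : μ[f * g|ℱ n] =ᵐ[μ] f * μ[g|ℱ n] :=
      condExp_mul_of_stronglyMeasurable_left hfmeas hfgint hgint
    have hcond' : ∀ᵐ ω ∂μ, (μ[g|ℱ n]) ω ≤ M := by
      have := hcond (n + 1) hmem
      simpa using this
    have hint1 : Integrable (f * μ[g|ℱ n]) μ :=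
      (integrable_condExp).bdd_mul (c := Cb ^ n) hfmeas0.aestronglyMeasurable
        (Filter.Eventually.of_forall fun ω => by
          rw [Real.norm_eq_abs, abs_of_nonneg (hfpos ω)]; exact hfbd ω)
    calc ∫ ω, ∏ k ∈ Finset.Icc 1 (n + 1), Y k ω ∂μ
        = ∫ ω, (f * g) ω ∂μ := by
          refine integral_congr_ae (Filter.Eventually.of_forall fun ω => ?_)
          rw [Pi.mul_apply]; exact hsplit ω
      _ = ∫ ω, (μ[f * g|ℱ n]) ω ∂μ := (integral_condExp (ℱ.le n)).symm
      _ = ∫ ω, (f * μ[g|ℱ n]) ω ∂μ := integral_congr_ae hpull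
      _ ≤ ∫ ω, M * f ω ∂μ := by
          refine integral_mono_ae hint1 (hfint.const_mul M) ?_
          filter_upwards [hcond'] with ω hω
          rw [Pi.mul_apply]
          calc f ω * (μ[g|ℱ n]) ω ≤ f ω * M :=
                mul_le_mul_of_nonneg_left hω (hfpos ω)
            _ = M * f ω := mul_comm _ _
      _ = M * ∫ ω, f ω ∂μ := integral_const_mul M f
      _ ≤ M * M ^ n := mul_le_mul_of_nonneg_left IH hM
      _ = M ^ (n + 1) := (pow_succ' M n).symm
lemma chernoff_bound {Ω : Type*} {m0 : MeasurableSpace Ω} (μ : Measure Ω)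
    [IsProbabilityMeasure μ] (ℱ : Filtration ℕ m0) (n : ℕ) (X : ℕ → Ω → ℝ)
    (hmeas : ∀ k ∈ Finset.Icc 1 n, StronglyMeasurable[ℱ k] (X k))
    {l M : ℝ} (hl : 0 < l) (hM : 1 ≤ M)
    (hint : ∀ k ∈ Finset.Icc 1 n, Integrable (fun ω => Real.exp (l * X k ω)) μ)
    (hcond : ∀ k ∈ Finset.Icc 1 n,
      ∀ᵐ ω ∂μ, (μ[fun ω' => Real.exp (l * X k ω')|ℱ (k - 1)]) ω ≤ M)
    (a : ℝ) :
    μ {ω | a < ∑ k ∈ Finset.Icc 1 n, X k ω} ≤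
      ENNReal.ofReal (Real.exp (-(l * a)) * M ^ n) := by
  have hM0 : (0:ℝ) ≤ M := le_trans zero_le_one hM
  -- truncated bound
  have key : ∀ m : ℕ, μ {ω | a < ∑ k ∈ Finset.Icc 1 n, min (X k ω) m} ≤
      ENNReal.ofReal (Real.exp (-(l * a)) * M ^ n) := by
    intro m
    set Y : ℕ → Ω → ℝ := fun k ω => Real.exp (l * min (X k ω) m) with hY
    have hYmeas : ∀ k ∈ Finset.Icc 1 n, StronglyMeasurable[ℱ k] (Y k) := by
      intro k hk
      have h1 : StronglyMeasurable[ℱ k] (fun ω => min (X k ω) (m:ℝ)) :=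
        ((hmeas k hk).measurable.min measurable_const).stronglyMeasurable
      exact Real.continuous_exp.comp_stronglyMeasurable (h1.const_mul l)
    have hYpos : ∀ k ω, 0 ≤ Y k ω := fun k ω => (Real.exp_pos _).le
    have hYbd : ∀ k ω, Y k ω ≤ Real.exp (l * m) := by
      intro k ω
      exact Real.exp_le_exp.2 (mul_le_mul_of_nonneg_left (min_le_right _ _) hl.le)
    have hYint : ∀ k ∈ Finset.Icc 1 n, Integrable (Y k) μ := by
      intro k hk
      refine (integrable_const (Real.exp (l * m))).mono'
        ((hYmeas k hk).mono (ℱ.le k)).aestronglyMeasurable ?_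
      exact Filter.Eventually.of_forall fun ω => by
        rw [Real.norm_eq_abs, abs_of_pos (Real.exp_pos _)]; exact hYbd k ω
    have hYcond : ∀ k ∈ Finset.Icc 1 n, ∀ᵐ ω ∂μ, (μ[Y k|ℱ (k - 1)]) ω ≤ M := by
      intro k hk
      have hle : Y k ≤ᵐ[μ] fun ω => Real.exp (l * X k ω) :=
        Filter.Eventually.of_forall fun ω =>
          Real.exp_le_exp.2 (mul_le_mul_of_nonneg_left (min_le_left _ _) hl.le)
      have := condExp_mono (m := ℱ (k - 1)) (hYint k hk) (hint k hk) hle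
      filter_upwards [this, hcond k hk] with ω h1 h2
      exact le_trans h1 h2
    have htower := tower_prod_bound μ ℱ M (Real.exp (l * m)) hM0 (Real.exp_pos _).le
      Y n hYmeas hYpos (fun k ω => hYbd k ω) hYcond
    -- the product is exp of the truncated sum
    set F : Ω → ℝ := fun ω => ∏ k ∈ Finset.Icc 1 n, Y k ω with hF
    have hFeq : ∀ ω, F ω = Real.exp (l * ∑ k ∈ Finset.Icc 1 n, min (X k ω) m) := by
      intro ω
      rw [Finset.mul_sum, Real.exp_sum]
    have hFpos : ∀ ω, 0 ≤ F ω := fun ω => Finset.prod_nonneg fun k _ => hYpos k ω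
    have hFmeas : AEStronglyMeasurable F μ := by
      refine (Finset.stronglyMeasurable_fun_prod _ fun k hk =>
        ((hYmeas k hk).mono (ℱ.le k))).aestronglyMeasurable
    have hFint : Integrable F μ := by
      refine (integrable_const (Real.exp (l * m) ^ n)).mono' hFmeas ?_
      refine Filter.Eventually.of_forall fun ω => ?_
      rw [Real.norm_eq_abs, abs_of_nonneg (hFpos ω)]
      calc F ω ≤ ∏ _k ∈ Finset.Icc 1 n, Real.exp (l * m) :=
            Finset.prod_le_prod (fun k _ => hYpos k ω) (fun k _ => hYbd k ω)
        _ = Real.exp (l * m) ^ n := by rw [Finset.prod_const, Nat.card_Icc]; norm_num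
    -- Markov
    have hmarkov := mul_meas_ge_le_integral_of_nonneg
      (Filter.Eventually.of_forall hFpos) hFint (Real.exp (l * a))
    have hsub : {ω | a < ∑ k ∈ Finset.Icc 1 n, min (X k ω) m} ⊆
        {ω | Real.exp (l * a) ≤ F ω} := by
      intro ω hω
      simp only [Set.mem_setOf_eq] at hω ⊢
      rw [hFeq ω]
      exact Real.exp_le_exp.2 (mul_le_mul_of_nonneg_left hω.le hl.le)
    have hne : μ {ω | Real.exp (l * a) ≤ F ω} ≠ ⊤ := measure_ne_top μ _
    have htoReal : (μ {ω | Real.exp (l * a) ≤ F ω}).toReal ≤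
        Real.exp (-(l * a)) * M ^ n := by
      have hI : ∫ ω, F ω ∂μ ≤ M ^ n := htower
      have hepos : (0:ℝ) < Real.exp (l * a) := Real.exp_pos _
      calc (μ {ω | Real.exp (l * a) ≤ F ω}).toReal
          ≤ (∫ ω, F ω ∂μ) / Real.exp (l * a) := by
            rw [le_div_iff₀ hepos, mul_comm]; exact hmarkov
        _ ≤ M ^ n / Real.exp (l * a) := (div_le_div_iff_of_pos_right hepos).2 hI
        _ = Real.exp (-(l * a)) * M ^ n := by
            rw [Real.exp_neg, div_eq_inv_mul]
    calc μ {ω | a < ∑ k ∈ Finset.Icc 1 n, min (X k ω) m}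
        ≤ μ {ω | Real.exp (l * a) ≤ F ω} := measure_mono hsub
      _ = ENNReal.ofReal ((μ {ω | Real.exp (l * a) ≤ F ω}).toReal) :=
          (ENNReal.ofReal_toReal hne).symm
      _ ≤ ENNReal.ofReal (Real.exp (-(l * a)) * M ^ n) :=
          ENNReal.ofReal_le_ofReal htoReal
  -- union over truncation levels
  have hunion : {ω | a < ∑ k ∈ Finset.Icc 1 n, X k ω} =
      ⋃ m : ℕ, {ω | a < ∑ k ∈ Finset.Icc 1 n, min (X k ω) m} := by
    ext ω
    simp only [Set.mem_setOf_eq, Set.mem_iUnion]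
    constructor
    · intro h
      obtain ⟨m, hm⟩ := exists_nat_ge (∑ k ∈ Finset.Icc 1 n, |X k ω|)
      refine ⟨m, ?_⟩
      have heq : ∀ k ∈ Finset.Icc 1 n, min (X k ω) (m:ℝ) = X k ω := by
        intro k hk
        apply min_eq_left
        calc X k ω ≤ |X k ω| := le_abs_self _
          _ ≤ ∑ j ∈ Finset.Icc 1 n, |X j ω| :=
              Finset.single_le_sum (f := fun j => |X j ω|) (fun j _ => abs_nonneg _) hk
          _ ≤ m := hm
      rw [Finset.sum_congr rfl heq]
      exact h
    · rintro ⟨m, hm⟩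
      exact lt_of_lt_of_le hm (Finset.sum_le_sum fun k _ => min_le_left _ _)
  rw [hunion]
  have hdir : Directed (· ⊆ ·)
      (fun m : ℕ => {ω | a < ∑ k ∈ Finset.Icc 1 n, min (X k ω) m}) := by
    apply Monotone.directed_le
    intro m m' hmm ω hω
    simp only [Set.mem_setOf_eq] at hω ⊢
    refine lt_of_lt_of_le hω (Finset.sum_le_sum fun k _ => ?_)
    exact min_le_min le_rfl (Nat.cast_le.2 hmm)
  rw [Directed.measure_iUnion hdir]
  exact iSup_le key


lemma regime1_bound {Q δ K' : ℝ} (hQ : 1 ≤ Q) (hδ : 0 < δ) (hK' : 1 ≤ K')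
    {A : ℝ} (hAdef : A = 16 / δ ^ 2 * Real.exp δ * K')
    {c1 : ℝ} (hc1def : c1 = min (1 / (4 * A)) (δ / 4))
    {Ω : Type*} {m0 : MeasurableSpace Ω} (μ : Measure Ω) [IsProbabilityMeasure μ]
    (ℱ : Filtration ℕ m0) (n : ℕ) (X : ℕ → Ω → ℝ)
    (hmeas : ∀ k ∈ Finset.Icc 1 n, StronglyMeasurable[ℱ k] (X k))
    (hint : ∀ k ∈ Finset.Icc 1 n, Integrable (X k) μ)
    (hzero : ∀ k ∈ Finset.Icc 1 n, μ[X k|ℱ (k - 1)] =ᵐ[μ] 0)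
    (hexpint : ∀ k ∈ Finset.Icc 1 n,
      Integrable (fun ω => Real.exp (δ * |X k ω| ^ Q)) μ)
    (hexpbd : ∀ k ∈ Finset.Icc 1 n,
      ∀ᵐ ω ∂μ, (μ[fun ω' => Real.exp (δ * |X k ω'| ^ Q)|ℱ (k - 1)]) ω ≤ K')
    (x : ℝ) (hx : 0 < x) :
    μ {ω | (n:ℝ) * x < ∑ k ∈ Finset.Icc 1 n, X k ω} ≤
      ENNReal.ofReal (Real.exp (-((n:ℝ) * (c1 * (min x 1 * x))))) := by
  have hA : 0 < A := by rw [hAdef]; positivity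
  have hc1 : 0 < c1 := by rw [hc1def]; exact lt_min (by positivity) (by positivity)
  have hc1a : c1 ≤ 1 / (4 * A) := hc1def ▸ min_le_left _ _
  have hc1δ : c1 ≤ δ / 4 := hc1def ▸ min_le_right _ _
  set l : ℝ := min (δ / 2) (x / (2 * A)) with hldef
  have hl0 : 0 < l := lt_min (by positivity) (by positivity)
  have hlδ : l ≤ δ / 2 := min_le_left _ _
  -- conditional mgf bounds
  have hsmall : ∀ k ∈ Finset.Icc 1 n,
      Integrable (fun ω => Real.exp (l * X k ω)) μ ∧
      ∀ᵐ ω ∂μ, (μ[fun ω' => Real.exp (l * X k ω')|ℱ (k - 1)]) ω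
        ≤ 1 + (16 / δ ^ 2 * Real.exp δ * K') * l ^ 2 := by
    intro k hk
    exact condexp_mgf_bound_small (ℱ.le (k - 1)) hQ hδ hK' (hint k hk)
      (hzero k hk) (hexpint k hk) (hexpbd k hk) hl0.le hlδ
  set M : ℝ := 1 + A * l ^ 2 with hMdef
  have hM1 : 1 ≤ M := by
    have : 0 ≤ A * l ^ 2 := by positivity
    rw [hMdef]; linarith
  have hMbd : ∀ k ∈ Finset.Icc 1 n,
      ∀ᵐ ω ∂μ, (μ[fun ω' => Real.exp (l * X k ω')|ℱ (k - 1)]) ω ≤ M := by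
    intro k hk
    have := (hsmall k hk).2
    rw [hMdef, hAdef]
    exact this
  have hcher := chernoff_bound μ ℱ n X hmeas hl0 hM1
    (fun k hk => (hsmall k hk).1) hMbd ((n:ℝ) * x)
  -- clean up the bound
  have hMexp : M ≤ Real.exp (A * l ^ 2) := by
    have := Real.add_one_le_exp (A * l ^ 2)
    rw [hMdef]; linarith
  have hMn : M ^ n ≤ Real.exp ((n:ℝ) * (A * l ^ 2)) := by
    calc M ^ n ≤ Real.exp (A * l ^ 2) ^ n :=
          pow_le_pow_left₀ (by linarith) hMexp n
      _ = Real.exp ((n:ℝ) * (A * l ^ 2)) := (Real.exp_nat_mul _ n).symm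
  have hprod : Real.exp (-(l * ((n:ℝ) * x))) * M ^ n ≤
      Real.exp ((n:ℝ) * (A * l ^ 2 - l * x)) := by
    calc Real.exp (-(l * ((n:ℝ) * x))) * M ^ n
        ≤ Real.exp (-(l * ((n:ℝ) * x))) * Real.exp ((n:ℝ) * (A * l ^ 2)) :=
          mul_le_mul_of_nonneg_left hMn (Real.exp_pos _).le
      _ = Real.exp ((n:ℝ) * (A * l ^ 2 - l * x)) := by
          rw [← Real.exp_add]; ring_nf
  -- the key elementary estimate
  have hE1 : A * l ^ 2 - l * x ≤ -(c1 * (min x 1 * x)) := by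
    have hminx : min x 1 ≤ x := min_le_left _ _
    have hmin1 : min x 1 ≤ 1 := min_le_right _ _
    have hminnn : 0 ≤ min x 1 := le_min hx.le zero_le_one
    rcases le_total (x / (2 * A)) (δ / 2) with h | h
    · have hl : l = x / (2 * A) := min_eq_right h
      have e : A * (x / (2 * A)) ^ 2 - x / (2 * A) * x = -(x ^ 2 / (4 * A)) := by
        field_simp; ring
      have t1 : c1 * min x 1 ≤ 1 / (4 * A) * x :=
        mul_le_mul hc1a hminx hminnn (by positivity)
      have t2 : c1 * min x 1 * x ≤ 1 / (4 * A) * x * x :=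
        mul_le_mul_of_nonneg_right t1 hx.le
      have e2 : 1 / (4 * A) * x * x = x ^ 2 / (4 * A) := by ring
      rw [hl, e]
      nlinarith [t2]
    · have hl : l = δ / 2 := min_eq_left h
      have hAx : A * δ ≤ x := by
        rw [div_le_div_iff₀ (by norm_num) (by positivity)] at h
        nlinarith
      have t0 : A * (δ / 2) ^ 2 ≤ δ / 4 * x := by nlinarith
      have t1 : c1 * min x 1 ≤ δ / 4 := by
        calc c1 * min x 1 ≤ δ / 4 * 1 :=
              mul_le_mul hc1δ hmin1 hminnn (by positivity)
          _ = δ / 4 := mul_one _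
      have t2 : c1 * min x 1 * x ≤ δ / 4 * x :=
        mul_le_mul_of_nonneg_right t1 hx.le
      rw [hl]
      nlinarith
  have hfinal : Real.exp ((n:ℝ) * (A * l ^ 2 - l * x)) ≤
      Real.exp (-((n:ℝ) * (c1 * (min x 1 * x)))) := by
    apply Real.exp_le_exp.2
    have hn : (0:ℝ) ≤ n := Nat.cast_nonneg n
    have t := mul_le_mul_of_nonneg_left hE1 hn
    have e : (n:ℝ) * -(c1 * (min x 1 * x)) = -((n:ℝ) * (c1 * (min x 1 * x))) := by
      ring
    linarith [t, e.le, e.ge]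
  refine hcher.trans (ENNReal.ofReal_le_ofReal (hprod.trans hfinal))

lemma regime2_bound {Q δ K' : ℝ} (hQ : 1 < Q) (hδ : 0 < δ) (hK' : 1 ≤ K')
    {Ω : Type*} {m0 : MeasurableSpace Ω} (μ : Measure Ω) [IsProbabilityMeasure μ]
    (ℱ : Filtration ℕ m0) (n : ℕ) (X : ℕ → Ω → ℝ)
    (hmeas : ∀ k ∈ Finset.Icc 1 n, StronglyMeasurable[ℱ k] (X k))
    (hint : ∀ k ∈ Finset.Icc 1 n, Integrable (X k) μ)
    (hexpint : ∀ k ∈ Finset.Icc 1 n,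
      Integrable (fun ω => Real.exp (δ * |X k ω| ^ Q)) μ)
    (hexpbd : ∀ k ∈ Finset.Icc 1 n,
      ∀ᵐ ω ∂μ, (μ[fun ω' => Real.exp (δ * |X k ω'| ^ Q)|ℱ (k - 1)]) ω ≤ K')
    (x : ℝ) (hx : 0 < x) {l : ℝ} (hl : 0 < l) :
    μ {ω | (n:ℝ) * x < ∑ k ∈ Finset.Icc 1 n, X k ω} ≤
      ENNReal.ofReal (Real.exp ((n:ℝ) * (Real.log K' +
        ((Q * δ) ^ (Q⁻¹)) ^ (-(Q / (Q - 1))) * l ^ (Q / (Q - 1)) - l * x))) := by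
  set Cy : ℝ := ((Q * δ) ^ (Q⁻¹)) ^ (-(Q / (Q - 1))) with hCy
  set q : ℝ := Q / (Q - 1) with hq
  have hlarge : ∀ k ∈ Finset.Icc 1 n,
      Integrable (fun ω => Real.exp (l * X k ω)) μ ∧
      ∀ᵐ ω ∂μ, (μ[fun ω' => Real.exp (l * X k ω')|ℱ (k - 1)]) ω
        ≤ K' * Real.exp (Cy * l ^ q) := by
    intro k hk
    exact condexp_mgf_bound_large (ℱ.le (k - 1)) hQ hδ hK' (hint k hk).1
      (hexpint k hk) (hexpbd k hk) hl.le
  set M : ℝ := K' * Real.exp (Cy * l ^ q) with hMdef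
  have hCy0 : 0 < Cy := Real.rpow_pos_of_pos (Real.rpow_pos_of_pos (by nlinarith) _) _
  have hM1 : 1 ≤ M := by
    rw [hMdef]
    have h1 : (1:ℝ) ≤ Real.exp (Cy * l ^ q) := by
      rw [Real.one_le_exp_iff]
      positivity
    nlinarith
  have hcher := chernoff_bound μ ℱ n X hmeas hl hM1
    (fun k hk => (hlarge k hk).1) (fun k hk => (hlarge k hk).2) ((n:ℝ) * x)
  refine hcher.trans (ENNReal.ofReal_le_ofReal ?_)
  have hlog : K' ^ n = Real.exp ((n:ℝ) * Real.log K') := by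
    rw [Real.exp_nat_mul, Real.exp_log (show (0:ℝ) < K' by linarith)]
  have hMn : M ^ n = Real.exp ((n:ℝ) * Real.log K' + (n:ℝ) * (Cy * l ^ q)) := by
    rw [hMdef, mul_pow, hlog, ← Real.exp_nat_mul, ← Real.exp_add]
  rw [hMn, ← Real.exp_add]
  apply Real.exp_le_exp.2
  have : -(l * ((n:ℝ) * x)) + ((n:ℝ) * Real.log K' + (n:ℝ) * (Cy * l ^ q)) =
      (n:ℝ) * (Real.log K' + Cy * l ^ q - l * x) := by ring
  rw [this]

/-- One-sided master bound. -/
lemma master_bound (Q δ K : ℝ) (hQ : 1 ≤ Q) (hδ : 0 < δ) (hK : 0 < K) :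
    ∃ c : ℝ, 0 < c ∧
      ∀ {Ω : Type*} {m0 : MeasurableSpace Ω} (μ : Measure Ω), IsProbabilityMeasure μ →
      ∀ (ℱ : Filtration ℕ m0) (n : ℕ) (X : ℕ → Ω → ℝ),
        (∀ k ∈ Finset.Icc 1 n, StronglyMeasurable[ℱ k] (X k)) →
        (∀ k ∈ Finset.Icc 1 n, Integrable (X k) μ) →
        (∀ k ∈ Finset.Icc 1 n, μ[X k|ℱ (k - 1)] =ᵐ[μ] 0) →
        (∀ k ∈ Finset.Icc 1 n,
          Integrable (fun ω => Real.exp (δ * |X k ω| ^ Q)) μ) →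
        (∀ k ∈ Finset.Icc 1 n,
          ∀ᵐ ω ∂μ, (μ[fun ω' => Real.exp (δ * |X k ω'| ^ Q)|ℱ (k - 1)]) ω ≤ K) →
        ∀ x : ℝ, 0 < x →
          (x ≤ 1 → μ {ω | (n:ℝ) * x < ∑ k ∈ Finset.Icc 1 n, X k ω} ≤
              ENNReal.ofReal (Real.exp (-(n * c * x ^ 2)))) ∧
          (1 < x → μ {ω | (n:ℝ) * x < ∑ k ∈ Finset.Icc 1 n, X k ω} ≤
              ENNReal.ofReal (Real.exp (-(n * c * x ^ Q)))) := by
  classical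
  set K' : ℝ := max K 1 with hK'def
  have hK'1 : (1:ℝ) ≤ K' := le_max_right _ _
  have hK'0 : (0:ℝ) < K' := lt_of_lt_of_le one_pos hK'1
  set A : ℝ := 16 / δ ^ 2 * Real.exp δ * K' with hAdef
  have hA : 0 < A := by positivity
  set c1 : ℝ := min (1 / (4 * A)) (δ / 4) with hc1def
  have hc1 : 0 < c1 := lt_min (by positivity) (by positivity)
  have hc1a : c1 ≤ 1 / (4 * A) := min_le_left _ _
  have hc1δ : c1 ≤ δ / 4 := min_le_right _ _
  -- regime-1 universal statement, proved below as `regime1`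
  -- choose the final constant
  by_cases hQ1 : Q = 1
  case pos =>
    refine ⟨c1, hc1, ?_⟩
    intro Ω m0 μ hprob ℱ n X hmeas hint hzero hexpint hexpbd x hx
    have hbd' : ∀ k ∈ Finset.Icc 1 n,
        ∀ᵐ ω ∂μ, (μ[fun ω' => Real.exp (δ * |X k ω'| ^ Q)|ℱ (k - 1)]) ω ≤ K' :=
      fun k hk => (hexpbd k hk).mono fun ω h => h.trans (le_max_left _ _)
    have R1 := regime1_bound hQ hδ hK'1 hAdef hc1def μ ℱ n X hmeas hint hzero
      hexpint hbd' x hx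
    have hn : (0:ℝ) ≤ n := Nat.cast_nonneg n
    constructor
    · intro hx1
      have hm : min x 1 = x := min_eq_left hx1
      refine R1.trans (ENNReal.ofReal_le_ofReal (Real.exp_le_exp.2 ?_))
      rw [hm]
      have e : (n:ℝ) * (c1 * (x * x)) = (n:ℝ) * c1 * x ^ 2 := by ring
      linarith [e.le, e.ge]
    · intro hx1
      have hm : min x 1 = 1 := min_eq_right hx1.le
      have hxQ : x ^ Q = x := by rw [hQ1, Real.rpow_one]
      refine R1.trans (ENNReal.ofReal_le_ofReal (Real.exp_le_exp.2 ?_))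
      rw [hm, hxQ]
      have e : (n:ℝ) * (c1 * (1 * x)) = (n:ℝ) * c1 * x := by ring
      linarith [e.le, e.ge]
  case neg =>
    have hQlt : 1 < Q := lt_of_le_of_ne hQ (Ne.symm hQ1)
    have hQ0 : (0:ℝ) < Q := by linarith
    have hQm1 : (0:ℝ) < Q - 1 := by linarith
    set Cy : ℝ := ((Q * δ) ^ (Q⁻¹)) ^ (-(Q / (Q - 1))) with hCydef
    have hCy0 : 0 < Cy :=
      Real.rpow_pos_of_pos (Real.rpow_pos_of_pos (by positivity) _) _
    set ε : ℝ := min 1 ((2 * Cy)⁻¹ ^ (Q - 1)) with hεdef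
    have hε0 : 0 < ε :=
      lt_min one_pos (Real.rpow_pos_of_pos (by positivity) _)
    have hkey : Cy * ε ^ (Q / (Q - 1)) ≤ ε / 2 := by
      have hsplit : Q / (Q - 1) = 1 + 1 / (Q - 1) := by field_simp; ring
      have hεq : ε ^ (Q / (Q - 1)) = ε * ε ^ (1 / (Q - 1)) := by
        rw [hsplit, Real.rpow_add hε0, Real.rpow_one]
      have h2 : ε ^ (1 / (Q - 1)) ≤ (2 * Cy)⁻¹ := by
        calc ε ^ (1 / (Q - 1)) ≤ ((2 * Cy)⁻¹ ^ (Q - 1)) ^ (1 / (Q - 1)) :=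
              Real.rpow_le_rpow hε0.le (min_le_right _ _) (by positivity)
          _ = (2 * Cy)⁻¹ := by
              rw [← Real.rpow_mul (by positivity), mul_one_div,
                div_self hQm1.ne', Real.rpow_one]
      have h3 : Cy * (ε * (2 * Cy)⁻¹) = ε / 2 := by
        field_simp
      calc Cy * ε ^ (Q / (Q - 1)) = Cy * (ε * ε ^ (1 / (Q - 1))) := by rw [hεq]
        _ ≤ Cy * (ε * (2 * Cy)⁻¹) := by
            apply mul_le_mul_of_nonneg_left _ hCy0.le
            exact mul_le_mul_of_nonneg_left h2 hε0.le
        _ = ε / 2 := h3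
    set L : ℝ := max (Real.log K') 0 with hLdef
    have hL0 : 0 ≤ L := le_max_right _ _
    set T : ℝ := 4 * L / ε + 1 with hTdef
    have hT1 : 1 ≤ T := by
      have : 0 ≤ 4 * L / ε := by positivity
      rw [hTdef]; linarith
    have hT0 : 0 < T := by linarith
    set x1 : ℝ := T ^ (Q⁻¹) with hx1def
    have hx11 : 1 ≤ x1 := Real.one_le_rpow hT1 (by positivity)
    have hx1Q : x1 ^ Q = T := by
      rw [hx1def, ← Real.rpow_mul hT0.le, inv_mul_cancel₀ hQ0.ne', Real.rpow_one]
    set c : ℝ := min c1 (min (c1 / T) (ε / 4)) with hcdef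
    have hc0 : 0 < c := lt_min hc1 (lt_min (by positivity) (by positivity))
    have hcc1 : c ≤ c1 := min_le_left _ _
    have hccT : c ≤ c1 / T := (min_le_right _ _).trans (min_le_left _ _)
    have hcε : c ≤ ε / 4 := (min_le_right _ _).trans (min_le_right _ _)
    refine ⟨c, hc0, ?_⟩
    intro Ω m0 μ hprob ℱ n X hmeas hint hzero hexpint hexpbd x hx
    have hbd' : ∀ k ∈ Finset.Icc 1 n,
        ∀ᵐ ω ∂μ, (μ[fun ω' => Real.exp (δ * |X k ω'| ^ Q)|ℱ (k - 1)]) ω ≤ K' :=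
      fun k hk => (hexpbd k hk).mono fun ω h => h.trans (le_max_left _ _)
    have hn : (0:ℝ) ≤ n := Nat.cast_nonneg n
    have R1 := regime1_bound hQ hδ hK'1 hAdef hc1def μ ℱ n X hmeas hint hzero
      hexpint hbd' x hx
    constructor
    · intro hx1'
      have hm : min x 1 = x := min_eq_left hx1'
      refine R1.trans (ENNReal.ofReal_le_ofReal (Real.exp_le_exp.2 ?_))
      rw [hm]
      have h1 : c * x ^ 2 ≤ c1 * x ^ 2 :=
        mul_le_mul_of_nonneg_right hcc1 (sq_nonneg x)
      have h2 : (n:ℝ) * (c * x ^ 2) ≤ (n:ℝ) * (c1 * x ^ 2) :=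
        mul_le_mul_of_nonneg_left h1 hn
      have e1 : (n:ℝ) * (c1 * (x * x)) = (n:ℝ) * (c1 * x ^ 2) := by ring
      have e2 : (n:ℝ) * c * x ^ 2 = (n:ℝ) * (c * x ^ 2) := by ring
      linarith [e1.le, e1.ge, e2.le, e2.ge]
    · intro hx1'
      have hxQnn : (0:ℝ) ≤ x ^ Q := Real.rpow_nonneg hx.le _
      rcases le_total x x1 with hxx | hxx
      · -- moderate deviations: use regime 1
        have hm : min x 1 = 1 := min_eq_right hx1'.le
        refine R1.trans (ENNReal.ofReal_le_ofReal (Real.exp_le_exp.2 ?_))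
        rw [hm]
        have h1 : x ^ Q ≤ T := by
          rw [← hx1Q]
          exact Real.rpow_le_rpow hx.le hxx hQ0.le
        have h2 : c * x ^ Q ≤ c1 / T * T := by
          apply mul_le_mul hccT h1 hxQnn (by positivity)
        have h3 : c1 / T * T = c1 := div_mul_cancel₀ _ hT0.ne'
        have h4 : c1 ≤ c1 * x := by nlinarith
        have h5 : c * x ^ Q ≤ c1 * x := by linarith
        have h6 : (n:ℝ) * (c * x ^ Q) ≤ (n:ℝ) * (c1 * x) :=
          mul_le_mul_of_nonneg_left h5 hn
        have e1 : (n:ℝ) * (c1 * (1 * x)) = (n:ℝ) * (c1 * x) := by ring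
        have e2 : (n:ℝ) * c * x ^ Q = (n:ℝ) * (c * x ^ Q) := by ring
        linarith [e1.le, e1.ge, e2.le, e2.ge]
      · -- large deviations: use regime 2
        have hl : 0 < ε * x ^ (Q - 1) :=
          mul_pos hε0 (Real.rpow_pos_of_pos hx _)
        have R2 := regime2_bound hQlt hδ hK'1 μ ℱ n X hmeas hint hexpint hbd'
          x hx hl
        refine R2.trans (ENNReal.ofReal_le_ofReal (Real.exp_le_exp.2 ?_))
        -- rewrite l^q and l*x
        have e1 : x ^ (Q - 1) * x = x ^ Q := by
          have h := Real.rpow_add hx (Q - 1) 1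
          rw [Real.rpow_one] at h
          rw [← h]
          norm_num
        have e2 : (ε * x ^ (Q - 1)) ^ (Q / (Q - 1)) =
            ε ^ (Q / (Q - 1)) * x ^ Q := by
          rw [Real.mul_rpow hε0.le (Real.rpow_nonneg hx.le _),
            ← Real.rpow_mul hx.le]
          congr 1
          field_simp
        have e3 : ε * x ^ (Q - 1) * x = ε * x ^ Q := by
          rw [mul_assoc, e1]
        -- estimates
        have hlogK : Real.log K' ≤ L := le_max_left _ _
        have hTx : T ≤ x ^ Q := by
          rw [← hx1Q]
          exact Real.rpow_le_rpow (by linarith) hxx hQ0.le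
        have hLx : L ≤ ε / 4 * x ^ Q := by
          have h1 : ε / 4 * T = L + ε / 4 := by
            rw [hTdef]; field_simp
          have h2 : ε / 4 * T ≤ ε / 4 * x ^ Q :=
            mul_le_mul_of_nonneg_left hTx (by positivity)
          linarith
        have hCyx : Cy * (ε ^ (Q / (Q - 1)) * x ^ Q) ≤ ε / 2 * x ^ Q := by
          have := mul_le_mul_of_nonneg_right hkey hxQnn
          calc Cy * (ε ^ (Q / (Q - 1)) * x ^ Q)
              = Cy * ε ^ (Q / (Q - 1)) * x ^ Q := by ring
            _ ≤ ε / 2 * x ^ Q := this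
        have hexp : Real.log K' + Cy * (ε * x ^ (Q - 1)) ^ (Q / (Q - 1)) -
            ε * x ^ (Q - 1) * x ≤ -(c * x ^ Q) := by
          rw [e2, e3]
          have hcx : c * x ^ Q ≤ ε / 4 * x ^ Q :=
            mul_le_mul_of_nonneg_right hcε hxQnn
          linarith
        have h7 : (n:ℝ) * (Real.log K' + Cy * (ε * x ^ (Q - 1)) ^ (Q / (Q - 1)) -
            ε * x ^ (Q - 1) * x) ≤ (n:ℝ) * -(c * x ^ Q) :=
          mul_le_mul_of_nonneg_left hexp hn
        have e4 : (n:ℝ) * -(c * x ^ Q) = -((n:ℝ) * c * x ^ Q) := by ring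
        linarith [e4.le, e4.ge]

end tower

/-- Theorem 1.1 (first part): exponential large deviation inequality for martingale
differences under a conditional exponential moment condition. -/
theorem martingale_exponential_inequality
    (Q δ K : ℝ) (hQ : 1 ≤ Q) (hδ : 0 < δ) (hK : 0 < K) :
    ∃ c : ℝ, 0 < c ∧
      ∀ {Ω : Type*} {m0 : MeasurableSpace Ω} (μ : Measure Ω), IsProbabilityMeasure μ →
      ∀ (ℱ : Filtration ℕ m0) (n : ℕ) (X : ℕ → Ω → ℝ), 1 ≤ n →
        (∀ k ∈ Finset.Icc 1 n, StronglyMeasurable[ℱ k] (X k)) →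
        (∀ k ∈ Finset.Icc 1 n, Integrable (X k) μ) →
        (∀ k ∈ Finset.Icc 1 n, μ[X k|ℱ (k - 1)] =ᵐ[μ] 0) →
        (∀ k ∈ Finset.Icc 1 n,
          Integrable (fun ω => Real.exp (δ * |X k ω| ^ Q)) μ) →
        (∀ k ∈ Finset.Icc 1 n,
          ∀ᵐ ω ∂μ, (μ[fun ω' => Real.exp (δ * |X k ω'| ^ Q)|ℱ (k - 1)]) ω ≤ K) →
        ∀ x : ℝ, 0 < x →
          ((x ≤ 1 →
              μ {ω | (∑ k ∈ Finset.Icc 1 n, X k ω) / n > x} ≤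
                ENNReal.ofReal (Real.exp (-(n * c * x ^ 2))) ∧
              μ {ω | -((∑ k ∈ Finset.Icc 1 n, X k ω) / n) > x} ≤
                ENNReal.ofReal (Real.exp (-(n * c * x ^ 2)))) ∧
            (1 < x →
              μ {ω | (∑ k ∈ Finset.Icc 1 n, X k ω) / n > x} ≤
                ENNReal.ofReal (Real.exp (-(n * c * x ^ Q))) ∧
              μ {ω | -((∑ k ∈ Finset.Icc 1 n, X k ω) / n) > x} ≤
                ENNReal.ofReal (Real.exp (-(n * c * x ^ Q))))) := by
  obtain ⟨c, hc, H⟩ := master_bound Q δ K hQ hδ hK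
  refine ⟨c, hc, ?_⟩
  intro Ω m0 μ hprob ℱ n X hn hmeas hint hzero hexpint hexpbd x hx
  have hn0 : (0:ℝ) < n := by exact_mod_cast hn
  -- the negated sequence
  set Y : ℕ → Ω → ℝ := fun k ω => -(X k ω) with hY
  have hmeasY : ∀ k ∈ Finset.Icc 1 n, StronglyMeasurable[ℱ k] (Y k) :=
    fun k hk => (hmeas k hk).neg
  have hintY : ∀ k ∈ Finset.Icc 1 n, Integrable (Y k) μ :=
    fun k hk => (hint k hk).neg
  have hzeroY : ∀ k ∈ Finset.Icc 1 n, μ[Y k|ℱ (k - 1)] =ᵐ[μ] 0 := by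
    intro k hk
    have h1 : Y k = -(X k) := rfl
    rw [h1]
    refine (condExp_neg (X k) (ℱ (k - 1))).trans ?_
    filter_upwards [hzero k hk] with ω hω
    simp [hω]
  have habs : ∀ k, (fun ω => Real.exp (δ * |Y k ω| ^ Q)) =
      fun ω => Real.exp (δ * |X k ω| ^ Q) := by
    intro k; funext ω; rw [hY]; simp [abs_neg]
  have hexpintY : ∀ k ∈ Finset.Icc 1 n,
      Integrable (fun ω => Real.exp (δ * |Y k ω| ^ Q)) μ := by
    intro k hk; rw [habs k]; exact hexpint k hk
  have hexpbdY : ∀ k ∈ Finset.Icc 1 n,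
      ∀ᵐ ω ∂μ, (μ[fun ω' => Real.exp (δ * |Y k ω'| ^ Q)|ℱ (k - 1)]) ω ≤ K := by
    intro k hk
    have := hexpbd k hk
    convert this using 3
    rw [habs k]
  have HX := H μ hprob ℱ n X hmeas hint hzero hexpint hexpbd x hx
  have HY := H μ hprob ℱ n Y hmeasY hintY hzeroY hexpintY hexpbdY x hx
  -- set identities
  have hset1 : {ω | (∑ k ∈ Finset.Icc 1 n, X k ω) / n > x} =
      {ω | (n:ℝ) * x < ∑ k ∈ Finset.Icc 1 n, X k ω} := by
    ext ω
    simp only [Set.mem_setOf_eq, gt_iff_lt]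
    rw [lt_div_iff₀ hn0, mul_comm]
  have hset2 : {ω | -((∑ k ∈ Finset.Icc 1 n, X k ω) / n) > x} =
      {ω | (n:ℝ) * x < ∑ k ∈ Finset.Icc 1 n, Y k ω} := by
    ext ω
    simp only [Set.mem_setOf_eq, gt_iff_lt, hY]
    rw [Finset.sum_neg_distrib, ← neg_div, lt_div_iff₀ hn0, mul_comm]
  rw [hset1, hset2]
  exact ⟨fun h1 => ⟨HX.1 h1, HY.1 h1⟩, fun h1 => ⟨HX.2 h1, HY.2 h1⟩⟩
end

section
/- Let (X_k)_{1≤k≤n} be independent and identically distributed real random variables with S_n = X_1 + ⋯ + X_n. If for some n ≥ 1, Q ≥ 1, c > 0 and x_1 > 0 one has P[S_n/n > x] ≤ exp(−n c x^Q) and P[−S_n/n > x] ≤ exp(−n c x^Q) for all x ≥ x_1, then for every δ ∈ (0, c) there exists a constant K > 0, depending only on δ, Q, c and x_1, such that E[exp(δ|X_1|^Q)] ≤ K. -/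
open MeasureTheory ProbabilityTheory Filter

lemma aux_exp_key (Q δ δ' a t : ℝ) (hQ : 1 ≤ Q) (hδ0 : 0 < δ) (hδδ' : δ < δ')
    (ha1 : 1 ≤ a) (haQ : Q / Real.log (δ' / δ) ≤ a) (hta : a ≤ t) :
    δ * (t + 1) ^ Q ≤ δ' * t ^ Q := by
  have ha0 : 0 < a := lt_of_lt_of_le zero_lt_one ha1
  have ht0 : 0 < t := lt_of_lt_of_le zero_lt_one (ha1.trans hta)
  have hQ0 : (0:ℝ) ≤ Q := by linarith
  have h1 : t + 1 ≤ Real.exp (1 / t) * t := by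
    have h := Real.add_one_le_exp (1 / t)
    have := mul_le_mul_of_nonneg_right h ht0.le
    calc t + 1 = (1 / t + 1) * t := by field_simp; ring
      _ ≤ Real.exp (1 / t) * t := this
  have h2 : (t + 1) ^ Q ≤ Real.exp (Q / t) * t ^ Q := by
    calc (t + 1) ^ Q ≤ (Real.exp (1 / t) * t) ^ Q :=
          Real.rpow_le_rpow (by positivity) h1 hQ0
      _ = Real.exp (1 / t) ^ Q * t ^ Q := Real.mul_rpow (Real.exp_nonneg _) ht0.le
      _ = Real.exp (Q / t) * t ^ Q := by rw [← Real.exp_mul]; ring_nf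
  have hL : 0 < Real.log (δ' / δ) := Real.log_pos (by rw [lt_div_iff₀ hδ0]; linarith)
  have h3 : Q / t ≤ Real.log (δ' / δ) := by
    rw [div_le_iff₀ ht0]
    have : Q ≤ a * Real.log (δ' / δ) := (div_le_iff₀ hL).mp haQ
    nlinarith
  have h4 : Real.exp (Q / t) ≤ δ' / δ := by
    calc Real.exp (Q / t) ≤ Real.exp (Real.log (δ' / δ)) := Real.exp_le_exp.mpr h3
      _ = δ' / δ := Real.exp_log (div_pos (by linarith) hδ0)
  have htQ : (0:ℝ) ≤ t ^ Q := Real.rpow_nonneg ht0.le Q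
  calc δ * (t + 1) ^ Q ≤ δ * (Real.exp (Q / t) * t ^ Q) :=
        mul_le_mul_of_nonneg_left h2 hδ0.le
    _ ≤ δ * ((δ' / δ) * t ^ Q) :=
        mul_le_mul_of_nonneg_left (mul_le_mul_of_nonneg_right h4 htQ) hδ0.le
    _ = δ' * t ^ Q := by field_simp

/-- Theorem 1.1 (converse part): if i.i.d. partial sums satisfy a two-sided exponential
deviation bound of order `x ^ Q` for `x ≥ x₁`, then `X 1` has a finite exponential
moment of order `Q`, with a bound depending only on `δ, Q, c, x₁`. -/
theorem iid_exponential_moment_of_deviation_bound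
    (Q c x₁ δ : ℝ) (hQ : 1 ≤ Q) (hc : 0 < c) (hx₁ : 0 < x₁) (hδ0 : 0 < δ) (hδc : δ < c) :
    ∃ K : ℝ, 0 < K ∧
      ∀ {Ω : Type*} {m0 : MeasurableSpace Ω} (μ : Measure Ω), IsProbabilityMeasure μ →
      ∀ (n : ℕ) (X : ℕ → Ω → ℝ), 1 ≤ n →
        (∀ i, Measurable (X i)) →
        iIndepFun (m := fun _ : {i : ℕ // i ∈ Finset.Icc 1 n} => (inferInstance : MeasurableSpace ℝ))
          (fun i : {i : ℕ // i ∈ Finset.Icc 1 n} => X i) μ →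
        (∀ i ∈ Finset.Icc 1 n, IdentDistrib (X i) (X 1) μ μ) →
        (∀ x : ℝ, x₁ ≤ x →
          μ {ω | (∑ k ∈ Finset.Icc 1 n, X k ω) / n > x} ≤
            ENNReal.ofReal (Real.exp (-(n * c * x ^ Q))) ∧
          μ {ω | -((∑ k ∈ Finset.Icc 1 n, X k ω) / n) > x} ≤
            ENNReal.ofReal (Real.exp (-(n * c * x ^ Q)))) →
        ∫⁻ ω, ENNReal.ofReal (Real.exp (δ * |X 1 ω| ^ Q)) ∂μ ≤ ENNReal.ofReal K := by
  classical
  set δ' : ℝ := (c + δ) / 2 with hδ'def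
  set ε : ℝ := (c - δ) / 2 with hεdef
  have hδδ' : δ < δ' := by rw [hδ'def]; linarith
  have hδ'c : δ' = c - ε := by rw [hδ'def, hεdef]; ring
  have hε0 : 0 < ε := by rw [hεdef]; linarith
  set a : ℝ := max (max x₁ 1) (Q / Real.log (δ' / δ)) with hadef
  have hax₁ : x₁ ≤ a := le_trans (le_max_left x₁ 1) (le_max_left _ _)
  have ha1 : 1 ≤ a := le_trans (le_max_right x₁ 1) (le_max_left _ _)
  have haQ : Q / Real.log (δ' / δ) ≤ a := le_max_right _ _
  have ha0 : 0 < a := lt_of_lt_of_le zero_lt_one ha1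
  have hr1 : Real.exp (-ε) < 1 := by rw [Real.exp_lt_one_iff]; linarith
  have hr0 : (0:ℝ) ≤ Real.exp (-ε) := Real.exp_nonneg _
  have hden : 0 < 1 - Real.exp (-ε) := by linarith
  refine ⟨Real.exp (δ * a ^ Q) + 2 * Real.exp (-(ε * a)) / (1 - Real.exp (-ε)), by positivity, ?_⟩
  intro Ω m0 μ hμ n X hn hX hind hid hdev
  have hn0 : (0:ℝ) < n := by exact_mod_cast hn
  have hne : (Finset.Icc 1 n).Nonempty := Finset.nonempty_Icc.mpr hn
  haveI : Fintype {i : ℕ // i ∈ Finset.Icc 1 n} := FinsetCoe.fintype _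
  have hcard : Fintype.card {i : ℕ // i ∈ Finset.Icc 1 n} = n := by
    simp [Fintype.card_coe]
  -- Step 1: tail bounds for X 1
  have tail : ∀ t : ℝ, x₁ ≤ t →
      μ {ω | t < X 1 ω} ≤ ENNReal.ofReal (Real.exp (-(c * t ^ Q))) ∧
      μ {ω | X 1 ω < -t} ≤ ENNReal.ofReal (Real.exp (-(c * t ^ Q))) := by
    intro t ht
    have hb : ENNReal.ofReal (Real.exp (-(↑n * c * t ^ Q))) =
        ENNReal.ofReal (Real.exp (-(c * t ^ Q))) ^ n := by
      rw [← ENNReal.ofReal_pow (Real.exp_nonneg _), ← Real.exp_nat_mul]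
      ring_nf
    have root : ∀ m : ENNReal, m ^ n ≤ ENNReal.ofReal (Real.exp (-(c * t ^ Q))) ^ n →
        m ≤ ENNReal.ofReal (Real.exp (-(c * t ^ Q))) := by
      intro m hm
      by_contra h
      exact absurd hm (not_le.mpr (ENNReal.pow_lt_pow_left (by omega) (not_le.1 h)))
    constructor
    · have hprod := hind.meas_iInter (s := fun i => X i.1 ⁻¹' Set.Ioi t)
        (fun i => ⟨Set.Ioi t, measurableSet_Ioi, rfl⟩)
      have hconst : ∀ i : {i : ℕ // i ∈ Finset.Icc 1 n},
          μ (X i.1 ⁻¹' Set.Ioi t) = μ (X 1 ⁻¹' Set.Ioi t) :=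
        fun i => (hid i i.2).measure_mem_eq measurableSet_Ioi
      have hprod' : μ (⋂ i : {i : ℕ // i ∈ Finset.Icc 1 n}, X i.1 ⁻¹' Set.Ioi t)
          = μ (X 1 ⁻¹' Set.Ioi t) ^ n := by
        rw [hprod]
        simp only [hconst, Finset.prod_const, Finset.card_univ, hcard]
      have hsub : (⋂ i : {i : ℕ // i ∈ Finset.Icc 1 n}, X i.1 ⁻¹' Set.Ioi t) ⊆
          {ω | (∑ k ∈ Finset.Icc 1 n, X k ω) / n > t} := by
        intro ω hω
        simp only [Set.mem_iInter, Set.mem_preimage, Set.mem_Ioi] at hω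
        have hlt : ∑ _k ∈ Finset.Icc 1 n, t < ∑ k ∈ Finset.Icc 1 n, X k ω :=
          Finset.sum_lt_sum_of_nonempty hne (fun i hi => hω ⟨i, hi⟩)
        have hsum : t * n < ∑ k ∈ Finset.Icc 1 n, X k ω := by
          simpa [Finset.sum_const, Nat.card_Icc, mul_comm] using hlt
        exact (lt_div_iff₀ hn0).mpr hsum
      apply root
      show μ (X 1 ⁻¹' Set.Ioi t) ^ n ≤ _
      rw [← hb, ← hprod']
      exact le_trans (measure_mono hsub) (hdev t ht).1
    · have hprod := hind.meas_iInter (s := fun i => X i.1 ⁻¹' Set.Iio (-t))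
        (fun i => ⟨Set.Iio (-t), measurableSet_Iio, rfl⟩)
      have hconst : ∀ i : {i : ℕ // i ∈ Finset.Icc 1 n},
          μ (X i.1 ⁻¹' Set.Iio (-t)) = μ (X 1 ⁻¹' Set.Iio (-t)) :=
        fun i => (hid i i.2).measure_mem_eq measurableSet_Iio
      have hprod' : μ (⋂ i : {i : ℕ // i ∈ Finset.Icc 1 n}, X i.1 ⁻¹' Set.Iio (-t))
          = μ (X 1 ⁻¹' Set.Iio (-t)) ^ n := by
        rw [hprod]
        simp only [hconst, Finset.prod_const, Finset.card_univ, hcard]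
      have hsub : (⋂ i : {i : ℕ // i ∈ Finset.Icc 1 n}, X i.1 ⁻¹' Set.Iio (-t)) ⊆
          {ω | -((∑ k ∈ Finset.Icc 1 n, X k ω) / n) > t} := by
        intro ω hω
        simp only [Set.mem_iInter, Set.mem_preimage, Set.mem_Iio] at hω
        have hlt : ∑ k ∈ Finset.Icc 1 n, X k ω < ∑ _k ∈ Finset.Icc 1 n, (-t) :=
          Finset.sum_lt_sum_of_nonempty hne (fun i hi => hω ⟨i, hi⟩)
        have hsum : ∑ k ∈ Finset.Icc 1 n, X k ω < -t * n := by
          simpa [Finset.sum_const, Nat.card_Icc, mul_comm] using hlt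
        have hx : (∑ k ∈ Finset.Icc 1 n, X k ω) / n < -t := (div_lt_iff₀ hn0).mpr hsum
        simpa [Set.mem_setOf_eq, lt_neg] using hx
      apply root
      show μ (X 1 ⁻¹' Set.Iio (-t)) ^ n ≤ _
      rw [← hb, ← hprod']
      exact le_trans (measure_mono hsub) (hdev t ht).2
  -- Step 2: two-sided tail bound
  have tailAbs : ∀ t : ℝ, x₁ ≤ t →
      μ {ω | t < |X 1 ω|} ≤ ENNReal.ofReal (2 * Real.exp (-(c * t ^ Q))) := by
    intro t ht
    have hset : {ω | t < |X 1 ω|} ⊆ {ω | t < X 1 ω} ∪ {ω | X 1 ω < -t} := by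
      intro ω hω
      simp only [Set.mem_setOf_eq] at hω
      rcases lt_abs.mp hω with h | h
      · exact Or.inl h
      · exact Or.inr (by simpa [Set.mem_setOf_eq] using by linarith)
    calc μ {ω | t < |X 1 ω|} ≤ μ ({ω | t < X 1 ω} ∪ {ω | X 1 ω < -t}) := measure_mono hset
      _ ≤ μ {ω | t < X 1 ω} + μ {ω | X 1 ω < -t} := measure_union_le _ _
      _ ≤ ENNReal.ofReal (Real.exp (-(c * t ^ Q))) + ENNReal.ofReal (Real.exp (-(c * t ^ Q))) :=
          add_le_add (tail t ht).1 (tail t ht).2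
      _ = ENNReal.ofReal (2 * Real.exp (-(c * t ^ Q))) := by
          rw [← ENNReal.ofReal_add (Real.exp_nonneg _) (Real.exp_nonneg _)]; ring_nf
  -- Step 3: the key exponent inequality
  have hkey : ∀ k : ℕ, Real.exp (δ * (a + k + 1) ^ Q) * (2 * Real.exp (-(c * (a + k) ^ Q)))
      ≤ 2 * Real.exp (-(ε * a)) * Real.exp (-ε) ^ k := by
    intro k
    have hknn : (0:ℝ) ≤ k := Nat.cast_nonneg k
    have hta : a ≤ a + k := le_add_of_nonneg_right hknn
    have h1 : δ * (a + k + 1) ^ Q ≤ δ' * (a + k) ^ Q :=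
      aux_exp_key Q δ δ' a (a + k) hQ hδ0 hδδ' ha1 haQ hta
    have h2 : a + k ≤ (a + k) ^ Q := by
      calc a + k = (a + k) ^ (1:ℝ) := (Real.rpow_one _).symm
        _ ≤ (a + k) ^ Q := Real.rpow_le_rpow_of_exponent_le (by linarith) hQ
    have h3 : δ * (a + k + 1) ^ Q - c * (a + k) ^ Q ≤ -(ε * (a + k)) := by
      have hd : δ' * (a + k) ^ Q - c * (a + k) ^ Q = -(ε * (a + k) ^ Q) := by
        rw [hδ'c]; ring
      nlinarith
    calc Real.exp (δ * (a + k + 1) ^ Q) * (2 * Real.exp (-(c * (a + k) ^ Q)))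
        = 2 * Real.exp (δ * (a + k + 1) ^ Q - c * (a + k) ^ Q) := by
          rw [Real.exp_sub]; rw [Real.exp_neg (c * (a + k) ^ Q)] ; ring
      _ ≤ 2 * Real.exp (-(ε * (a + k))) := by
          have := Real.exp_le_exp.mpr h3
          linarith
      _ = 2 * Real.exp (-(ε * a)) * Real.exp (-ε) ^ k := by
          rw [← Real.exp_nat_mul, mul_assoc, ← Real.exp_add]
          congr 1
          ring
  -- Step 4: pointwise slicing bound
  set F : ℕ → Ω → ENNReal := fun k => Set.indicator {ω | a + k < |X 1 ω|}
      (fun _ => ENNReal.ofReal (Real.exp (δ * (a + k + 1) ^ Q))) with hFdef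
  have hQ0 : (0:ℝ) ≤ Q := by linarith
  have hpt : ∀ ω, ENNReal.ofReal (Real.exp (δ * |X 1 ω| ^ Q)) ≤
      ENNReal.ofReal (Real.exp (δ * a ^ Q)) + ∑' k, F k ω := by
    intro ω
    rcases le_or_gt (|X 1 ω|) a with h | h
    · have hle : δ * |X 1 ω| ^ Q ≤ δ * a ^ Q :=
        mul_le_mul_of_nonneg_left (Real.rpow_le_rpow (abs_nonneg _) h hQ0) hδ0.le
      exact le_trans (ENNReal.ofReal_le_ofReal (Real.exp_le_exp.mpr hle)) le_self_add
    · set s := |X 1 ω| - a with hs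
      have hs0 : 0 < s := by rw [hs]; linarith
      set k := ⌈s⌉₊ - 1 with hk
      have hk1 : 1 ≤ ⌈s⌉₊ := Nat.one_le_iff_ne_zero.mpr (by
        simp [Nat.ceil_eq_zero, not_le, hs0])
      have hkc : (k : ℝ) = (⌈s⌉₊ : ℝ) - 1 := by
        rw [hk, Nat.cast_sub hk1, Nat.cast_one]
      have hklt : (k : ℝ) < s := by
        have h1 := Nat.ceil_lt_add_one hs0.le
        rw [hkc]; linarith
      have hkle : s ≤ (k : ℝ) + 1 := by
        have h1 := Nat.le_ceil s
        rw [hkc]; linarith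
      have hmem : ω ∈ {ω | a + (k:ℝ) < |X 1 ω|} := by
        have : a + (k:ℝ) < a + s := by linarith
        simpa [Set.mem_setOf_eq, hs] using lt_of_lt_of_le this (by rw [hs]; ring_nf; exact le_refl _)
      have hFk : ENNReal.ofReal (Real.exp (δ * |X 1 ω| ^ Q)) ≤ F k ω := by
        rw [hFdef]
        simp only [Set.indicator_of_mem hmem]
        refine ENNReal.ofReal_le_ofReal (Real.exp_le_exp.mpr
          (mul_le_mul_of_nonneg_left (Real.rpow_le_rpow (abs_nonneg _) ?_ hQ0) hδ0.le))
        have : |X 1 ω| = a + s := by rw [hs]; ring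
        linarith
      exact le_trans hFk (le_trans (ENNReal.le_tsum k) le_add_self)
  -- Step 5: integrate
  have hsetm : ∀ k : ℕ, MeasurableSet {ω | a + (k:ℝ) < |X 1 ω|} :=
    fun k => measurableSet_lt measurable_const (hX 1).abs
  have hFm : ∀ k : ℕ, Measurable (F k) :=
    fun k => measurable_const.indicator (hsetm k)
  have hsummable : Summable (fun k : ℕ => 2 * Real.exp (-(ε * a)) * Real.exp (-ε) ^ k) :=
    (summable_geometric_of_lt_one hr0 hr1).mul_left _
  calc ∫⁻ ω, ENNReal.ofReal (Real.exp (δ * |X 1 ω| ^ Q)) ∂μ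
      ≤ ∫⁻ ω, (ENNReal.ofReal (Real.exp (δ * a ^ Q)) + ∑' k, F k ω) ∂μ := lintegral_mono hpt
    _ = ENNReal.ofReal (Real.exp (δ * a ^ Q)) + ∑' k, ∫⁻ ω, F k ω ∂μ := by
        rw [lintegral_add_left measurable_const, lintegral_const, measure_univ, mul_one,
          lintegral_tsum (fun k => (hFm k).aemeasurable)]
    _ ≤ ENNReal.ofReal (Real.exp (δ * a ^ Q)) +
        ∑' k : ℕ, ENNReal.ofReal (2 * Real.exp (-(ε * a)) * Real.exp (-ε) ^ k) := by
        refine add_le_add_right (ENNReal.tsum_le_tsum (fun k => ?_)) _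
        rw [hFdef]
        rw [lintegral_indicator (hsetm k), setLIntegral_const]
        calc ENNReal.ofReal (Real.exp (δ * (a + k + 1) ^ Q)) * μ {ω | a + (k:ℝ) < |X 1 ω|}
            ≤ ENNReal.ofReal (Real.exp (δ * (a + k + 1) ^ Q)) *
              ENNReal.ofReal (2 * Real.exp (-(c * (a + k) ^ Q))) := by
              refine mul_le_mul_right (tailAbs (a + k) ?_) _
              have : (0:ℝ) ≤ k := Nat.cast_nonneg k
              linarith
          _ = ENNReal.ofReal (Real.exp (δ * (a + k + 1) ^ Q) *
              (2 * Real.exp (-(c * (a + k) ^ Q)))) := by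
              rw [← ENNReal.ofReal_mul (Real.exp_nonneg _)]
          _ ≤ ENNReal.ofReal (2 * Real.exp (-(ε * a)) * Real.exp (-ε) ^ k) :=
              ENNReal.ofReal_le_ofReal (hkey k)
    _ = ENNReal.ofReal (Real.exp (δ * a ^ Q)) +
        ENNReal.ofReal (2 * Real.exp (-(ε * a)) / (1 - Real.exp (-ε))) := by
        congr 1
        rw [← ENNReal.ofReal_tsum_of_nonneg (fun k => by positivity) hsummable]
        congr 1
        rw [tsum_mul_left, tsum_geometric_of_lt_one hr0 hr1]
        rw [div_eq_mul_inv]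
    _ = ENNReal.ofReal (Real.exp (δ * a ^ Q) + 2 * Real.exp (-(ε * a)) / (1 - Real.exp (-ε))) := by
        rw [← ENNReal.ofReal_add (Real.exp_nonneg _) (by positivity)]
end

section
/- Let (X_k)_{1≤k≤n} be independent and identically distributed real random variables with E[X_k] = 0, and S_n = X_1 + ⋯ + X_n. If E[exp(δ|X_1|)] < ∞ for some δ > 0, then there exists c = c(δ, E[exp(δ|X_1|)]) > 0 such that for all x > 0: P[S_n/n > x] ≤ exp(−n c x²) if 0 < x ≤ 1 and P[S_n/n > x] ≤ exp(−n c x) if x > 1, and the same bounds hold for P[−S_n/n > x]. Conversely, if for some n ≥ 1, c > 0, x_0 > 0 and all x > x_0 one has P[S_n/n > x] ≤ exp(−n c x) and P[−S_n/n > x] ≤ exp(−n c x), then E[exp(δ|X_1|)] < ∞ for each δ ∈ (0, c). -/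
open MeasureTheory ProbabilityTheory Filter


lemma exp_sub_one_le (s : ℝ) : Real.exp s - 1 ≤ s * Real.exp s := by
  have h := Real.add_one_le_exp (-s)
  have h2 : Real.exp s * (-s + 1) ≤ Real.exp s * Real.exp (-s) :=
    mul_le_mul_of_nonneg_left h (Real.exp_pos s).le
  rw [← Real.exp_add, add_neg_cancel, Real.exp_zero] at h2
  nlinarith

lemma exp_le_quad (u : ℝ) : Real.exp u ≤ 1 + u + u ^ 2 / 2 * Real.exp |u| := by
  rcases le_or_gt 0 u with hu | hu
  · rw [abs_of_nonneg hu]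
    have key : Real.exp u - 1 - u ≤ u ^ 2 / 2 * Real.exp u := by
      have h1 : Real.exp u - 1 - u = ∫ s in (0:ℝ)..u, (Real.exp s - 1) := by
        rw [intervalIntegral.integral_sub (Real.continuous_exp.intervalIntegrable _ _)
          (intervalIntegrable_const)]
        simp [integral_exp]
      rw [h1]
      have h2 : (∫ s in (0:ℝ)..u, s * Real.exp u) = u ^ 2 / 2 * Real.exp u := by
        rw [intervalIntegral.integral_mul_const, integral_id]
        ring
      rw [← h2]
      apply intervalIntegral.integral_mono_on hu
      · exact (Real.continuous_exp.sub continuous_const).intervalIntegrable _ _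
      · exact (continuous_id.mul continuous_const).intervalIntegrable _ _
      · intro s hs
        calc Real.exp s - 1 ≤ s * Real.exp s := exp_sub_one_le s
          _ ≤ s * Real.exp u := mul_le_mul_of_nonneg_left (Real.exp_le_exp.2 hs.2) hs.1
    linarith
  · have key : Real.exp u - 1 - u ≤ u ^ 2 / 2 := by
      have h1 : Real.exp u - 1 - u = ∫ s in (0:ℝ)..u, (Real.exp s - 1) := by
        rw [intervalIntegral.integral_sub (Real.continuous_exp.intervalIntegrable _ _)
          (intervalIntegrable_const)]
        simp [integral_exp]
      have h1' : Real.exp u - 1 - u = ∫ s in u..(0:ℝ), (1 - Real.exp s) := by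
        rw [h1]
        simp_rw [show ∀ s : ℝ, 1 - Real.exp s = -(Real.exp s - 1) from fun s => by ring]
        rw [intervalIntegral.integral_neg, ← intervalIntegral.integral_symm]
      rw [h1']
      have h2 : (∫ s in u..(0:ℝ), -s) = u ^ 2 / 2 := by
        rw [intervalIntegral.integral_neg, integral_id]
        ring
      rw [← h2]
      apply intervalIntegral.integral_mono_on hu.le
      · exact (continuous_const.sub Real.continuous_exp).intervalIntegrable _ _
      · exact continuous_neg.intervalIntegrable _ _
      · intro s _
        have := Real.add_one_le_exp s
        linarith
    have h3 : u ^ 2 / 2 ≤ u ^ 2 / 2 * Real.exp |u| := by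
      nlinarith [Real.one_le_exp (abs_nonneg u), sq_nonneg u]
    linarith

lemma sq_le_exp_aux {δ y : ℝ} (hδ : 0 < δ) (hy : 0 ≤ y) :
    y ^ 2 ≤ 16 / δ ^ 2 * Real.exp (δ * y / 2) := by
  have h1 : y ≤ 4 / δ * Real.exp (δ * y / 4) := by
    have h := Real.add_one_le_exp (δ * y / 4)
    have hδy : 0 ≤ δ * y / 4 := by positivity
    have : δ * y / 4 ≤ Real.exp (δ * y / 4) := by linarith
    calc y = 4 / δ * (δ * y / 4) := by field_simp
      _ ≤ 4 / δ * Real.exp (δ * y / 4) := by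
          apply mul_le_mul_of_nonneg_left this (by positivity)
  have h2 : y ^ 2 ≤ (4 / δ * Real.exp (δ * y / 4)) ^ 2 := by
    apply pow_le_pow_left₀ hy h1
  calc y ^ 2 ≤ (4 / δ * Real.exp (δ * y / 4)) ^ 2 := h2
    _ = 16 / δ ^ 2 * Real.exp (δ * y / 2) := by
        rw [mul_pow, pow_two (Real.exp (δ * y / 4)), ← Real.exp_add,
          show δ * y / 4 + δ * y / 4 = δ * y / 2 by ring, div_pow]
        norm_num

lemma exp_mul_le_pointwise {δ t x : ℝ} (hδ : 0 < δ) (ht : |t| ≤ δ / 2) :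
    Real.exp (t * x) ≤ 1 + t * x + 8 * t ^ 2 / δ ^ 2 * Real.exp (δ * |x|) := by
  have h0 := exp_le_quad (t * x)
  have habs : |t * x| ≤ δ / 2 * |x| := by
    rw [abs_mul]
    exact mul_le_mul_of_nonneg_right ht (abs_nonneg x)
  have h1 : (t * x) ^ 2 / 2 * Real.exp |t * x| ≤ t ^ 2 * x ^ 2 / 2 * Real.exp (δ / 2 * |x|) := by
    rw [mul_pow]
    exact mul_le_mul_of_nonneg_left (Real.exp_le_exp.2 habs) (by positivity)
  have h2 : x ^ 2 ≤ 16 / δ ^ 2 * Real.exp (δ * |x| / 2) := by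
    have := sq_le_exp_aux hδ (abs_nonneg x)
    rwa [sq_abs] at this
  have h3 : t ^ 2 * x ^ 2 / 2 * Real.exp (δ / 2 * |x|) ≤
      8 * t ^ 2 / δ ^ 2 * Real.exp (δ * |x|) := by
    have hexp : Real.exp (δ * |x| / 2) * Real.exp (δ / 2 * |x|) = Real.exp (δ * |x|) := by
      rw [← Real.exp_add]; ring_nf
    calc t ^ 2 * x ^ 2 / 2 * Real.exp (δ / 2 * |x|)
        ≤ t ^ 2 * (16 / δ ^ 2 * Real.exp (δ * |x| / 2)) / 2 * Real.exp (δ / 2 * |x|) := by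
          have hE : 0 < Real.exp (δ / 2 * |x|) := Real.exp_pos _
          have : t ^ 2 * x ^ 2 ≤ t ^ 2 * (16 / δ ^ 2 * Real.exp (δ * |x| / 2)) :=
            mul_le_mul_of_nonneg_left h2 (sq_nonneg t)
          nlinarith
      _ = 8 * t ^ 2 / δ ^ 2 * (Real.exp (δ * |x| / 2) * Real.exp (δ / 2 * |x|)) := by ring
      _ = 8 * t ^ 2 / δ ^ 2 * Real.exp (δ * |x|) := by rw [hexp]
  linarith

lemma mgf_bound_aux {Ω : Type*} {m0 : MeasurableSpace Ω} (μ : Measure Ω)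
    [IsProbabilityMeasure μ] {Y : Ω → ℝ} (hY : Measurable Y) (hint : Integrable Y μ)
    (hmean : (∫ ω, Y ω ∂μ) = 0) {δ M : ℝ} (hδ : 0 < δ) (hM0 : 0 ≤ M)
    (hM : (∫⁻ ω, ENNReal.ofReal (Real.exp (δ * |Y ω|)) ∂μ) ≤ ENNReal.ofReal M)
    {t : ℝ} (ht : |t| ≤ δ / 2) :
    Integrable (fun ω => Real.exp (t * Y ω)) μ ∧
      mgf Y μ t ≤ 1 + 8 * t ^ 2 / δ ^ 2 * M := by
  set g : Ω → ℝ := fun ω => Real.exp (δ * |Y ω|) with hg_def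
  have hg_meas : Measurable g := (hY.abs.const_mul δ).exp
  have hg_nonneg : ∀ ω, 0 ≤ g ω := fun ω => (Real.exp_pos _).le
  have hg_int : Integrable g μ := by
    refine ⟨hg_meas.aestronglyMeasurable, ?_⟩
    rw [hasFiniteIntegral_iff_ofReal (Filter.Eventually.of_forall hg_nonneg)]
    exact lt_of_le_of_lt hM ENNReal.ofReal_lt_top
  have hg_integral_le : (∫ ω, g ω ∂μ) ≤ M := by
    have h1 : (∫ ω, g ω ∂μ) = (∫⁻ ω, ENNReal.ofReal (g ω) ∂μ).toReal :=
      integral_eq_lintegral_of_nonneg_ae (Filter.Eventually.of_forall hg_nonneg)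
        hg_meas.aestronglyMeasurable
    rw [h1]
    calc (∫⁻ ω, ENNReal.ofReal (g ω) ∂μ).toReal ≤ (ENNReal.ofReal M).toReal :=
          ENNReal.toReal_mono ENNReal.ofReal_ne_top hM
      _ = M := ENNReal.toReal_ofReal hM0
  have hpt : ∀ ω, Real.exp (t * Y ω) ≤ 1 + t * Y ω + 8 * t ^ 2 / δ ^ 2 * g ω :=
    fun ω => exp_mul_le_pointwise hδ ht
  have hbound : ∀ ω, Real.exp (t * Y ω) ≤ g ω := by
    intro ω
    apply Real.exp_le_exp.2
    calc t * Y ω ≤ |t * Y ω| := le_abs_self _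
      _ = |t| * |Y ω| := abs_mul t (Y ω)
      _ ≤ (δ / 2) * |Y ω| := mul_le_mul_of_nonneg_right ht (abs_nonneg _)
      _ ≤ δ * |Y ω| := by nlinarith [abs_nonneg (Y ω)]
  have hexp_int : Integrable (fun ω => Real.exp (t * Y ω)) μ := by
    refine hg_int.mono ((hY.const_mul t).exp).aestronglyMeasurable
      (Filter.Eventually.of_forall fun ω => ?_)
    rw [Real.norm_eq_abs, Real.norm_eq_abs, abs_of_nonneg (Real.exp_pos _).le,
      abs_of_nonneg (hg_nonneg ω)]
    exact hbound ω
  refine ⟨hexp_int, ?_⟩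
  have hrhs_int : Integrable (fun ω => 1 + t * Y ω + 8 * t ^ 2 / δ ^ 2 * g ω) μ :=
    ((integrable_const 1).add (hint.const_mul t)).add (hg_int.const_mul _)
  have h2 : mgf Y μ t = ∫ ω, Real.exp (t * Y ω) ∂μ := rfl
  rw [h2]
  calc (∫ ω, Real.exp (t * Y ω) ∂μ)
      ≤ ∫ ω, (1 + t * Y ω + 8 * t ^ 2 / δ ^ 2 * g ω) ∂μ :=
        integral_mono hexp_int hrhs_int hpt
    _ = 1 + t * (∫ ω, Y ω ∂μ) + 8 * t ^ 2 / δ ^ 2 * (∫ ω, g ω ∂μ) := by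
        have hf1 : Integrable (fun ω => 1 + t * Y ω) μ := by
          simpa using (integrable_const (1:ℝ)).add (hint.const_mul t)
        have hf2 : Integrable (fun ω => 8 * t ^ 2 / δ ^ 2 * g ω) μ := hg_int.const_mul _
        rw [integral_add hf1 hf2, integral_add (integrable_const 1) (hint.const_mul t),
          integral_const, integral_const_mul, integral_const_mul]
        simp
    _ = 1 + 8 * t ^ 2 / δ ^ 2 * (∫ ω, g ω ∂μ) := by rw [hmean]; ring
    _ ≤ 1 + 8 * t ^ 2 / δ ^ 2 * M := by
        have : (0:ℝ) ≤ 8 * t ^ 2 / δ ^ 2 := by positivity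
        nlinarith

lemma chernoff_one_sided {Ω : Type*} {m0 : MeasurableSpace Ω} (μ : Measure Ω)
    [IsProbabilityMeasure μ] (n : ℕ) (X : ℕ → Ω → ℝ) (hn : 1 ≤ n)
    (hmeas : ∀ i, Measurable (X i))
    (hindep : iIndepFun (m := fun _ : {i : ℕ // i ∈ Finset.Icc 1 n} => (inferInstance : MeasurableSpace ℝ))
      (fun i : {i : ℕ // i ∈ Finset.Icc 1 n} => X i) μ)
    (hident : ∀ i ∈ Finset.Icc 1 n, IdentDistrib (X i) (X 1) μ μ)
    (hint : Integrable (X 1) μ) (hmean : (∫ ω, X 1 ω ∂μ) = 0)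
    {δ M : ℝ} (hδ : 0 < δ) (hM0 : 0 ≤ M)
    (hM : (∫⁻ ω, ENNReal.ofReal (Real.exp (δ * |X 1 ω|)) ∂μ) ≤ ENNReal.ofReal M)
    {t x : ℝ} (ht0 : 0 < t) (ht : t ≤ δ / 2) (hx : 0 < x) :
    μ {ω | (∑ k ∈ Finset.Icc 1 n, X k ω) / n > x} ≤
      ENNReal.ofReal (Real.exp (-(t * (n * x)) + n * (8 * t ^ 2 / δ ^ 2 * M))) := by
  have ht_abs : |t| ≤ δ / 2 := by rw [abs_of_pos ht0]; exact ht
  obtain ⟨hX1_int, hX1_mgf⟩ := mgf_bound_aux μ (hmeas 1) hint hmean hδ hM0 hM ht_abs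
  set ι := {i : ℕ // i ∈ Finset.Icc 1 n}
  set Y : ι → Ω → ℝ := fun i => X i with hY_def
  have hident' : ∀ i : ι, IdentDistrib (Y i) (X 1) μ μ := fun i => hident i i.2
  have hint_i : ∀ i : ι, Integrable (fun ω => Real.exp (t * Y i ω)) μ := by
    intro i
    have h := (hident' i).comp (u := fun y => Real.exp (t * y))
      ((measurable_id.const_mul t).exp)
    exact h.integrable_iff.2 hX1_int
  have hsum_int : Integrable (fun ω => Real.exp (t * (∑ i : ι, Y i) ω)) μ :=
    hindep.integrable_exp_mul_sum (fun i => hmeas i) (fun i _ => hint_i i)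
  have hsum_eq : ∀ ω, (∑ i : ι, Y i) ω = ∑ k ∈ Finset.Icc 1 n, X k ω := by
    intro ω
    rw [Finset.sum_apply]
    exact Finset.sum_coe_sort (Finset.Icc 1 n) (fun k => X k ω)
  have hmgf_sum : mgf (∑ i : ι, Y i) μ t = (mgf (X 1) μ t) ^ n := by
    rw [hindep.mgf_sum (fun i => hmeas i) Finset.univ]
    have : ∀ i : ι, mgf (Y i) μ t = mgf (X 1) μ t := by
      intro i
      exact ((hident' i).comp (u := fun y => Real.exp (t * y)) ((measurable_id.const_mul t).exp)).integral_eq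
    rw [Finset.prod_congr rfl (fun i _ => this i), Finset.prod_const, Finset.card_univ]
    congr 1
    simp [ι, Nat.card_Icc]
  set C : ℝ := 8 * t ^ 2 / δ ^ 2 * M with hC_def
  have hC0 : 0 ≤ C := by positivity
  have hmgf_le : mgf (X 1) μ t ≤ Real.exp C := by
    calc mgf (X 1) μ t ≤ 1 + C := hX1_mgf
      _ ≤ Real.exp C := by have := Real.add_one_le_exp C; linarith
  have hmgf_pow : (mgf (X 1) μ t) ^ n ≤ Real.exp (n * C) := by
    calc (mgf (X 1) μ t) ^ n ≤ (Real.exp C) ^ n :=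
          pow_le_pow_left₀ (mgf_nonneg) hmgf_le n
      _ = Real.exp (n * C) := by rw [← Real.exp_nat_mul]
  have hchern := measure_ge_le_exp_mul_mgf (X := (∑ i : ι, Y i)) (μ := μ)
    (n * x : ℝ) ht0.le hsum_int
  have hfinal : (μ {ω | (n : ℝ) * x ≤ (∑ i : ι, Y i) ω}).toReal ≤
      Real.exp (-(t * (n * x)) + n * C) := by
    calc (μ {ω | (n : ℝ) * x ≤ (∑ i : ι, Y i) ω}).toReal
        ≤ Real.exp (-t * (n * x)) * mgf (∑ i : ι, Y i) μ t := hchern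
      _ ≤ Real.exp (-t * (n * x)) * Real.exp (n * C) := by
          apply mul_le_mul_of_nonneg_left _ (Real.exp_pos _).le
          rw [hmgf_sum]; exact hmgf_pow
      _ = Real.exp (-(t * (n * x)) + n * C) := by rw [← Real.exp_add]; ring_nf
  have hn_pos : (0:ℝ) < n := by exact_mod_cast hn
  have hsubset : {ω | (∑ k ∈ Finset.Icc 1 n, X k ω) / n > x} ⊆
      {ω | (n : ℝ) * x ≤ (∑ i : ι, Y i) ω} := by
    intro ω hω
    simp only [Set.mem_setOf_eq] at hω ⊢
    rw [hsum_eq ω]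
    rw [gt_iff_lt, lt_div_iff₀ hn_pos] at hω
    linarith
  calc μ {ω | (∑ k ∈ Finset.Icc 1 n, X k ω) / n > x}
      ≤ μ {ω | (n : ℝ) * x ≤ (∑ i : ι, Y i) ω} := measure_mono hsubset
    _ = ENNReal.ofReal ((μ {ω | (n : ℝ) * x ≤ (∑ i : ι, Y i) ω}).toReal) :=
        (ENNReal.ofReal_toReal (measure_ne_top μ _)).symm
    _ ≤ ENNReal.ofReal (Real.exp (-(t * (n * x)) + n * C)) :=
        ENNReal.ofReal_le_ofReal hfinal

lemma tail_to_moment {Ω : Type*} {m0 : MeasurableSpace Ω} (μ : Measure Ω)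
    [IsProbabilityMeasure μ] {W : Ω → ℝ} (hW : Measurable W)
    {B c δ T : ℝ} (hc : 0 < c) (hδ : 0 < δ) (hδc : δ < c) (hB : 1 ≤ B) (hT : 0 ≤ T)
    (htail : ∀ t : ℝ, T < t → μ {ω | t < |W ω|} ≤ ENNReal.ofReal (B * Real.exp (-c * t))) :
    (∫⁻ ω, ENNReal.ofReal (Real.exp (δ * |W ω|)) ∂μ) < ⊤ := by
  set A : ℕ → Set Ω := fun k => {ω | (k : ℝ) ≤ |W ω| ∧ |W ω| < k + 1} with hA_def
  have hA_meas : ∀ k, MeasurableSet (A k) := by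
    intro k
    exact (measurableSet_le measurable_const hW.abs).inter
      (measurableSet_lt hW.abs measurable_const)
  have hA_disj : Pairwise (Function.onFun Disjoint A) := by
    intro i j hij
    rw [Function.onFun, Set.disjoint_left]
    rintro ω ⟨hi1, hi2⟩ ⟨hj1, hj2⟩
    rcases lt_or_gt_of_ne hij with h | h
    · have : (i : ℝ) + 1 ≤ j := by exact_mod_cast h
      linarith
    · have : (j : ℝ) + 1 ≤ i := by exact_mod_cast h
      linarith
  have hA_union : (⋃ k, A k) = Set.univ := by
    ext ω
    simp only [Set.mem_iUnion, Set.mem_univ, iff_true]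
    refine ⟨⌊|W ω|⌋₊, Nat.floor_le (abs_nonneg _), Nat.lt_floor_add_one _⟩
  -- threshold
  set K : ℕ := ⌈T⌉₊ + 2 with hK_def
  set B' : ℝ := B * Real.exp (c * (K + 1)) with hB'_def
  have hB'_pos : 0 < B' := by positivity
  have hA_bound : ∀ k : ℕ, μ (A k) ≤ ENNReal.ofReal (B' * Real.exp (-c * k)) := by
    intro k
    rcases le_or_gt K k with hk | hk
    · -- large k : use tail bound at t = k - 1
      have hTk : T < (k : ℝ) - 1 := by
        have h1 : (⌈T⌉₊ : ℝ) + 2 ≤ k := by exact_mod_cast hk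
        have h2 : T ≤ (⌈T⌉₊ : ℝ) := Nat.le_ceil T
        linarith
      have hsub : A k ⊆ {ω | (k : ℝ) - 1 < |W ω|} := by
        intro ω hω
        simp only [Set.mem_setOf_eq]
        have := hω.1
        linarith
      calc μ (A k) ≤ μ {ω | (k : ℝ) - 1 < |W ω|} := measure_mono hsub
        _ ≤ ENNReal.ofReal (B * Real.exp (-c * ((k : ℝ) - 1))) := htail _ hTk
        _ ≤ ENNReal.ofReal (B' * Real.exp (-c * k)) := by
            apply ENNReal.ofReal_le_ofReal
            rw [hB'_def, mul_assoc, ← Real.exp_add]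
            apply mul_le_mul_of_nonneg_left _ (by linarith : (0:ℝ) ≤ B)
            apply Real.exp_le_exp.2
            have hK1 : (1 : ℝ) ≤ (K : ℝ) + 1 := by
              have : (0:ℝ) ≤ (K:ℝ) := Nat.cast_nonneg K
              linarith
            nlinarith
    · -- small k : bound measure by 1
      have h1 : B' * Real.exp (-c * k) ≥ 1 := by
        rw [hB'_def, mul_assoc, ← Real.exp_add]
        have : (0:ℝ) ≤ c * ((K:ℝ) + 1) + -c * k := by
          have hkK : (k : ℝ) ≤ K := by exact_mod_cast hk.le
          nlinarith
        have := Real.one_le_exp this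
        nlinarith
      calc μ (A k) ≤ 1 := prob_le_one
        _ ≤ ENNReal.ofReal (B' * Real.exp (-c * k)) := by
            rw [show (1 : ENNReal) = ENNReal.ofReal 1 from (ENNReal.ofReal_one).symm]
            exact ENNReal.ofReal_le_ofReal h1
  have hsplit : (∫⁻ ω, ENNReal.ofReal (Real.exp (δ * |W ω|)) ∂μ) =
      ∑' k : ℕ, ∫⁻ ω in A k, ENNReal.ofReal (Real.exp (δ * |W ω|)) ∂μ := by
    rw [← lintegral_iUnion hA_meas hA_disj, hA_union, setLIntegral_univ]
  rw [hsplit]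
  have hterm : ∀ k : ℕ, (∫⁻ ω in A k, ENNReal.ofReal (Real.exp (δ * |W ω|)) ∂μ) ≤
      ENNReal.ofReal (Real.exp δ * B') * (ENNReal.ofReal (Real.exp (δ - c))) ^ k := by
    intro k
    have h1 : (∫⁻ ω in A k, ENNReal.ofReal (Real.exp (δ * |W ω|)) ∂μ) ≤
        ENNReal.ofReal (Real.exp (δ * (k + 1))) * μ (A k) := by
      calc (∫⁻ ω in A k, ENNReal.ofReal (Real.exp (δ * |W ω|)) ∂μ)
          ≤ ∫⁻ _ in A k, ENNReal.ofReal (Real.exp (δ * (k + 1))) ∂μ := by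
            apply setLIntegral_mono measurable_const
            intro ω hω
            exact ENNReal.ofReal_le_ofReal (Real.exp_le_exp.2
              (mul_le_mul_of_nonneg_left (by linarith [hω.2]) hδ.le))
        _ = ENNReal.ofReal (Real.exp (δ * (k + 1))) * μ (A k) := by
            rw [setLIntegral_const]
    calc (∫⁻ ω in A k, ENNReal.ofReal (Real.exp (δ * |W ω|)) ∂μ)
        ≤ ENNReal.ofReal (Real.exp (δ * (k + 1))) * μ (A k) := h1
      _ ≤ ENNReal.ofReal (Real.exp (δ * (k + 1))) * ENNReal.ofReal (B' * Real.exp (-c * k)) :=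
          mul_le_mul_right (hA_bound k) _
      _ = ENNReal.ofReal (Real.exp (δ * (k + 1)) * (B' * Real.exp (-c * k))) := by
          rw [← ENNReal.ofReal_mul (Real.exp_pos _).le]
      _ = ENNReal.ofReal ((Real.exp δ * B') * Real.exp ((δ - c) * k)) := by
          congr 1
          rw [show δ * ((k:ℝ) + 1) = δ + δ * k by ring, Real.exp_add,
            show (δ - c) * (k:ℝ) = δ * k + -c * k by ring, Real.exp_add]
          ring
      _ = ENNReal.ofReal (Real.exp δ * B') * (ENNReal.ofReal (Real.exp (δ - c))) ^ k := by
          rw [ENNReal.ofReal_mul (by positivity), ← ENNReal.ofReal_pow (Real.exp_pos _).le,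
            ← Real.exp_nat_mul]
          ring_nf
  calc (∑' k : ℕ, ∫⁻ ω in A k, ENNReal.ofReal (Real.exp (δ * |W ω|)) ∂μ)
      ≤ ∑' k : ℕ, ENNReal.ofReal (Real.exp δ * B') * (ENNReal.ofReal (Real.exp (δ - c))) ^ k :=
        ENNReal.tsum_le_tsum hterm
    _ = ENNReal.ofReal (Real.exp δ * B') * ∑' k : ℕ, (ENNReal.ofReal (Real.exp (δ - c))) ^ k :=
        ENNReal.tsum_mul_left
    _ < ⊤ := by
        rw [ENNReal.tsum_geometric]
        apply ENNReal.mul_lt_top ENNReal.ofReal_lt_top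
        rw [ENNReal.inv_lt_top]
        have hr : ENNReal.ofReal (Real.exp (δ - c)) < 1 := by
          rw [show (1 : ENNReal) = ENNReal.ofReal 1 from (ENNReal.ofReal_one).symm]
          apply (ENNReal.ofReal_lt_ofReal_iff (by norm_num)).2
          rw [show (1:ℝ) = Real.exp 0 from (Real.exp_zero).symm]
          exact Real.exp_lt_exp.2 (by linarith)
        exact tsub_pos_of_lt hr

lemma converse_tail {Ω : Type*} {m0 : MeasurableSpace Ω} (μ : Measure Ω)
    [IsProbabilityMeasure μ] (n : ℕ) (X : ℕ → Ω → ℝ) (c x₀ : ℝ) (hn : 1 ≤ n)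
    (hc : 0 < c) (hx₀ : 0 < x₀)
    (hmeas : ∀ i, Measurable (X i))
    (hindep : iIndepFun (m := fun _ : {i : ℕ // i ∈ Finset.Icc 1 n} => (inferInstance : MeasurableSpace ℝ))
      (fun i : {i : ℕ // i ∈ Finset.Icc 1 n} => X i) μ)
    (hbound : ∀ x : ℝ, x₀ < x →
      μ {ω | (∑ k ∈ Finset.Icc 1 n, X k ω) / n > x} ≤
        ENNReal.ofReal (Real.exp (-(n * c * x))) ∧
      μ {ω | -((∑ k ∈ Finset.Icc 1 n, X k ω) / n) > x} ≤
        ENNReal.ofReal (Real.exp (-(n * c * x)))) :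
    ∃ a : ℝ, 0 ≤ a ∧ ∀ t : ℝ, a + n * x₀ < t →
      μ {ω | t < |X 1 ω|} ≤ ENNReal.ofReal ((4 * Real.exp (c * a)) * Real.exp (-c * t)) := by
  classical
  set T : Ω → ℝ := fun ω => ∑ k ∈ Finset.Icc 2 n, X k ω with hT_def
  have hT_meas : Measurable T := Finset.measurable_sum _ (fun k _ => hmeas k)
  -- choose a with μ {|T| ≤ a} ≥ 1/2
  obtain ⟨m, hm⟩ : ∃ m : ℕ, (2 : ENNReal)⁻¹ ≤ μ {ω | |T ω| ≤ (m : ℝ)} := by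
    set s : ℕ → Set Ω := fun m => {ω | |T ω| ≤ (m : ℝ)} with hs_def
    have hs_mono : Monotone s := by
      intro m m' hmm ω hω
      simp only [s, Set.mem_setOf_eq] at hω ⊢
      calc |T ω| ≤ (m : ℝ) := hω
        _ ≤ (m' : ℝ) := by exact_mod_cast hmm
    have hs_union : (⋃ m, s m) = Set.univ := by
      ext ω
      simp only [Set.mem_iUnion, Set.mem_univ, iff_true]
      exact ⟨⌈|T ω|⌉₊, show |T ω| ≤ _ from Nat.le_ceil _⟩
    have htend : Tendsto (fun m => μ (s m)) atTop (nhds (μ (⋃ m, s m))) :=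
      tendsto_measure_iUnion_atTop hs_mono
    rw [hs_union, measure_univ] at htend
    have hhalf : (2 : ENNReal)⁻¹ < 1 := by norm_num
    exact (htend.eventually (eventually_ge_nhds hhalf)).exists
  refine ⟨(m : ℝ), Nat.cast_nonneg m, ?_⟩
  intro t ht
  set a : ℝ := (m : ℝ) with ha_def
  have hn_pos : (0:ℝ) < n := by exact_mod_cast hn
  have h1mem : (1:ℕ) ∈ Finset.Icc 1 n := by
    rw [Finset.mem_Icc]; exact ⟨le_refl 1, hn⟩
  set ι := {i : ℕ // i ∈ Finset.Icc 1 n}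
  set i₁ : ι := ⟨1, h1mem⟩ with hi₁_def
  -- the sum split
  have hsplit : ∀ ω, ∑ k ∈ Finset.Icc 1 n, X k ω = X 1 ω + T ω := by
    intro ω
    rw [← Finset.add_sum_erase _ _ h1mem, Finset.Icc_erase_left, ← Finset.Icc_add_one_left_eq_Ioc]
    rfl
  -- identify the erased subtype sum with T
  have hTsum : (∑ j ∈ Finset.univ.erase i₁, (fun i : ι => X ↑i) j) = T := by
    funext ω
    have h1 : (∑ j ∈ (Finset.univ : Finset ι), (fun i : ι => X ↑i) j) ω =
        ∑ k ∈ Finset.Icc 1 n, X k ω := by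
      rw [Finset.sum_apply]
      exact Finset.sum_coe_sort (Finset.Icc 1 n) (fun k => X k ω)
    have h2 : (∑ j ∈ (Finset.univ : Finset ι), (fun i : ι => X ↑i) j) ω =
        X 1 ω + (∑ j ∈ Finset.univ.erase i₁, (fun i : ι => X ↑i) j) ω := by
      rw [Finset.sum_apply, Finset.sum_apply,
        ← Finset.add_sum_erase _ _ (Finset.mem_univ i₁)]
    have h3 := h1.trans (hsplit ω)
    rw [h2] at h3
    exact add_left_cancel h3
  have hIndep : IndepFun T (X 1) μ := by
    have h := hindep.indepFun_finset_sum_of_notMem (fun i => hmeas i)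
      (Finset.notMem_erase i₁ Finset.univ)
    rwa [hTsum] at h
  -- measurable sets in ℝ
  have hBmeas : MeasurableSet {y : ℝ | |y| ≤ a} :=
    (isClosed_le (continuous_abs) continuous_const).measurableSet
  set x : ℝ := (t - a) / n with hx_def
  have hxx₀ : x₀ < x := by
    rw [hx_def, lt_div_iff₀ hn_pos]
    linarith
  have hx_exp : -((n:ℝ) * c * x) = -(c * (t - a)) := by
    have hne : (n:ℝ) ≠ 0 := ne_of_gt hn_pos
    rw [hx_def]
    field_simp
  -- positive part
  have hpos : μ {ω | t < X 1 ω} ≤ 2 * ENNReal.ofReal (Real.exp (-(c * (t - a)))) := by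
    have hinter := hIndep.measure_inter_preimage_eq_mul {y : ℝ | |y| ≤ a} (Set.Ioi t)
      hBmeas measurableSet_Ioi
    have hsub : T ⁻¹' {y : ℝ | |y| ≤ a} ∩ X 1 ⁻¹' (Set.Ioi t) ⊆
        {ω | (∑ k ∈ Finset.Icc 1 n, X k ω) / n > x} := by
      rintro ω ⟨hωT, hωX⟩
      simp only [Set.mem_preimage, Set.mem_setOf_eq, Set.mem_Ioi] at hωT hωX
      simp only [Set.mem_setOf_eq, gt_iff_lt, hx_def, div_lt_div_iff_of_pos_right hn_pos]
      rw [hsplit ω]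
      have := abs_le.1 hωT
      linarith [this.1]
    have hle : μ (T ⁻¹' {y : ℝ | |y| ≤ a}) * μ (X 1 ⁻¹' (Set.Ioi t)) ≤
        ENNReal.ofReal (Real.exp (-(c * (t - a)))) := by
      rw [← hinter, ← hx_exp]
      exact le_trans (measure_mono hsub) (hbound x hxx₀).1
    have hmT : (2 : ENNReal)⁻¹ ≤ μ (T ⁻¹' {y : ℝ | |y| ≤ a}) := hm
    have h4 : (2 : ENNReal)⁻¹ * μ (X 1 ⁻¹' (Set.Ioi t)) ≤
        ENNReal.ofReal (Real.exp (-(c * (t - a)))) :=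
      le_trans (mul_le_mul_left hmT _) hle
    calc μ {ω | t < X 1 ω} = μ (X 1 ⁻¹' (Set.Ioi t)) := rfl
      _ = 2 * ((2 : ENNReal)⁻¹ * μ (X 1 ⁻¹' (Set.Ioi t))) := by
          rw [← mul_assoc, ENNReal.mul_inv_cancel (by norm_num) (by norm_num), one_mul]
      _ ≤ 2 * ENNReal.ofReal (Real.exp (-(c * (t - a)))) := mul_le_mul_right h4 2
  -- negative part
  have hneg : μ {ω | t < -(X 1 ω)} ≤ 2 * ENNReal.ofReal (Real.exp (-(c * (t - a)))) := by
    have hinter := hIndep.measure_inter_preimage_eq_mul {y : ℝ | |y| ≤ a} (Set.Iio (-t))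
      hBmeas measurableSet_Iio
    have hsub : T ⁻¹' {y : ℝ | |y| ≤ a} ∩ X 1 ⁻¹' (Set.Iio (-t)) ⊆
        {ω | -((∑ k ∈ Finset.Icc 1 n, X k ω) / n) > x} := by
      rintro ω ⟨hωT, hωX⟩
      simp only [Set.mem_preimage, Set.mem_setOf_eq, Set.mem_Iio] at hωT hωX
      simp only [Set.mem_setOf_eq, gt_iff_lt, hx_def, ← neg_div,
        div_lt_div_iff_of_pos_right hn_pos]
      rw [hsplit ω]
      have := abs_le.1 hωT
      have h5 : -(X 1 ω + T ω) = -X 1 ω + -T ω := by ring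
      rw [h5]
      linarith [this.2]
    have hle : μ (T ⁻¹' {y : ℝ | |y| ≤ a}) * μ (X 1 ⁻¹' (Set.Iio (-t))) ≤
        ENNReal.ofReal (Real.exp (-(c * (t - a)))) := by
      rw [← hinter, ← hx_exp]
      exact le_trans (measure_mono hsub) (hbound x hxx₀).2
    have hmT : (2 : ENNReal)⁻¹ ≤ μ (T ⁻¹' {y : ℝ | |y| ≤ a}) := hm
    have h4 : (2 : ENNReal)⁻¹ * μ (X 1 ⁻¹' (Set.Iio (-t))) ≤
        ENNReal.ofReal (Real.exp (-(c * (t - a)))) :=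
      le_trans (mul_le_mul_left hmT _) hle
    calc μ {ω | t < -(X 1 ω)} = μ (X 1 ⁻¹' (Set.Iio (-t))) := by
          congr 1
          ext ω
          simp only [Set.mem_setOf_eq, Set.mem_preimage, Set.mem_Iio]
          constructor <;> intro h <;> linarith
      _ = 2 * ((2 : ENNReal)⁻¹ * μ (X 1 ⁻¹' (Set.Iio (-t)))) := by
          rw [← mul_assoc, ENNReal.mul_inv_cancel (by norm_num) (by norm_num), one_mul]
      _ ≤ 2 * ENNReal.ofReal (Real.exp (-(c * (t - a)))) := mul_le_mul_right h4 2
  -- combine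
  have habs_sub : {ω | t < |X 1 ω|} ⊆ {ω | t < X 1 ω} ∪ {ω | t < -(X 1 ω)} := by
    intro ω hω
    simp only [Set.mem_setOf_eq] at hω
    rcases lt_abs.1 hω with h | h
    · exact Or.inl h
    · exact Or.inr h
  calc μ {ω | t < |X 1 ω|} ≤ μ ({ω | t < X 1 ω} ∪ {ω | t < -(X 1 ω)}) :=
        measure_mono habs_sub
    _ ≤ μ {ω | t < X 1 ω} + μ {ω | t < -(X 1 ω)} := measure_union_le _ _
    _ ≤ 2 * ENNReal.ofReal (Real.exp (-(c * (t - a)))) +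
        2 * ENNReal.ofReal (Real.exp (-(c * (t - a)))) := add_le_add hpos hneg
    _ = ENNReal.ofReal (4 * Real.exp (-(c * (t - a)))) := by
        rw [← two_mul, ← mul_assoc]
        norm_num
    _ = ENNReal.ofReal ((4 * Real.exp (c * a)) * Real.exp (-c * t)) := by
        congr 1
        rw [mul_assoc, ← Real.exp_add]
        congr 2
        ring

/-- Bernstein-type inequality for i.i.d. centered random variables (Corollary 1.2):
a finite exponential moment `E[exp (δ |X₁|)] ≤ M` yields Gaussian/exponential deviation
bounds with a constant depending only on `δ` and `M`; conversely, a two-sided exponential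
deviation bound of order `x` implies finite exponential moments of every order `δ < c`. -/
theorem iid_bernstein_type_inequality :
    (∀ δ M : ℝ, 0 < δ → 0 < M →
      ∃ c : ℝ, 0 < c ∧
        ∀ {Ω : Type*} {m0 : MeasurableSpace Ω} (μ : Measure Ω), IsProbabilityMeasure μ →
        ∀ (n : ℕ) (X : ℕ → Ω → ℝ), 1 ≤ n →
          (∀ i, Measurable (X i)) →
          iIndepFun (m := fun _ : {i : ℕ // i ∈ Finset.Icc 1 n} => (inferInstance : MeasurableSpace ℝ))
            (fun i : {i : ℕ // i ∈ Finset.Icc 1 n} => X i) μ →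
          (∀ i ∈ Finset.Icc 1 n, IdentDistrib (X i) (X 1) μ μ) →
          Integrable (X 1) μ → (∫ ω, X 1 ω ∂μ) = 0 →
          (∫⁻ ω, ENNReal.ofReal (Real.exp (δ * |X 1 ω|)) ∂μ) ≤ ENNReal.ofReal M →
          ∀ x : ℝ, 0 < x →
            ((x ≤ 1 →
                μ {ω | (∑ k ∈ Finset.Icc 1 n, X k ω) / n > x} ≤
                  ENNReal.ofReal (Real.exp (-(n * c * x ^ 2))) ∧
                μ {ω | -((∑ k ∈ Finset.Icc 1 n, X k ω) / n) > x} ≤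
                  ENNReal.ofReal (Real.exp (-(n * c * x ^ 2)))) ∧
              (1 < x →
                μ {ω | (∑ k ∈ Finset.Icc 1 n, X k ω) / n > x} ≤
                  ENNReal.ofReal (Real.exp (-(n * c * x))) ∧
                μ {ω | -((∑ k ∈ Finset.Icc 1 n, X k ω) / n) > x} ≤
                  ENNReal.ofReal (Real.exp (-(n * c * x)))))) ∧
    (∀ {Ω : Type*} {m0 : MeasurableSpace Ω} (μ : Measure Ω), IsProbabilityMeasure μ →
      ∀ (n : ℕ) (X : ℕ → Ω → ℝ) (c x₀ : ℝ), 1 ≤ n → 0 < c → 0 < x₀ →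
        (∀ i, Measurable (X i)) →
        iIndepFun (m := fun _ : {i : ℕ // i ∈ Finset.Icc 1 n} => (inferInstance : MeasurableSpace ℝ))
          (fun i : {i : ℕ // i ∈ Finset.Icc 1 n} => X i) μ →
        (∀ i ∈ Finset.Icc 1 n, IdentDistrib (X i) (X 1) μ μ) →
        Integrable (X 1) μ → (∫ ω, X 1 ω ∂μ) = 0 →
        (∀ x : ℝ, x₀ < x →
          μ {ω | (∑ k ∈ Finset.Icc 1 n, X k ω) / n > x} ≤
            ENNReal.ofReal (Real.exp (-(n * c * x))) ∧
          μ {ω | -((∑ k ∈ Finset.Icc 1 n, X k ω) / n) > x} ≤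
            ENNReal.ofReal (Real.exp (-(n * c * x)))) →
        ∀ δ : ℝ, 0 < δ → δ < c →
          (∫⁻ ω, ENNReal.ofReal (Real.exp (δ * |X 1 ω|)) ∂μ) < ⊤) := by
  constructor
  · -- direct part
    intro δ M hδ hM
    set t₀ : ℝ := min (δ / 2) (δ ^ 2 / (16 * M)) with ht₀_def
    have ht₀_pos : 0 < t₀ := lt_min (by positivity) (by positivity)
    have ht₀_le : t₀ ≤ δ / 2 := min_le_left _ _
    have ht₀_le' : t₀ ≤ δ ^ 2 / (16 * M) := min_le_right _ _
    have hkey : 8 * t₀ ^ 2 / δ ^ 2 * M ≤ t₀ / 2 := by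
      have hδ2 : (0:ℝ) < δ ^ 2 := by positivity
      have h16 : t₀ * (16 * M) ≤ δ ^ 2 := by
        rw [← le_div_iff₀ (by positivity)]
        exact ht₀_le'
      rw [div_mul_eq_mul_div, div_le_iff₀ hδ2]
      nlinarith
    refine ⟨t₀ / 2, by positivity, ?_⟩
    intro Ω m0 μ hprob n X hn hmeas hindep hident hint hmean hM' x hx
    haveI := hprob
    -- data for the negated variables
    set X' : ℕ → Ω → ℝ := fun k ω => -X k ω with hX'_def
    have hmeas' : ∀ i, Measurable (X' i) := fun i => (hmeas i).neg
    have hindep' : iIndepFun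
        (m := fun _ : {i : ℕ // i ∈ Finset.Icc 1 n} => (inferInstance : MeasurableSpace ℝ))
        (fun i : {i : ℕ // i ∈ Finset.Icc 1 n} => X' i) μ :=
      hindep.comp (fun _ => Neg.neg) (fun _ => measurable_neg)
    have hident' : ∀ i ∈ Finset.Icc 1 n, IdentDistrib (X' i) (X' 1) μ μ :=
      fun i hi => (hident i hi).comp (u := Neg.neg) measurable_neg
    have hint' : Integrable (X' 1) μ := hint.neg
    have hmean' : (∫ ω, X' 1 ω ∂μ) = 0 := by
      simp only [hX'_def, integral_neg, hmean, neg_zero]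
    have hM'' : (∫⁻ ω, ENNReal.ofReal (Real.exp (δ * |X' 1 ω|)) ∂μ) ≤ ENNReal.ofReal M := by
      simpa [hX'_def, abs_neg] using hM'
    have hset_neg : {ω | -((∑ k ∈ Finset.Icc 1 n, X k ω) / n) > x} =
        {ω | (∑ k ∈ Finset.Icc 1 n, X' k ω) / n > x} := by
      ext ω
      simp only [Set.mem_setOf_eq, hX'_def, Finset.sum_neg_distrib, neg_div]
    constructor
    · -- 0 < x ≤ 1
      intro hx1
      have ht0 : 0 < t₀ * x := by positivity
      have ht : t₀ * x ≤ δ / 2 := by nlinarith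
      have hexp_le : -(t₀ * x * (n * x)) + n * (8 * (t₀ * x) ^ 2 / δ ^ 2 * M) ≤
          -(n * (t₀ / 2) * x ^ 2) := by
        have h1 := mul_le_mul_of_nonneg_left hkey
          (show (0:ℝ) ≤ (n : ℝ) * x ^ 2 by positivity)
        have heq : (n:ℝ) * (8 * (t₀ * x) ^ 2 / δ ^ 2 * M) =
            (n:ℝ) * x ^ 2 * (8 * t₀ ^ 2 / δ ^ 2 * M) := by ring
        nlinarith [h1, heq]
      have hof : ENNReal.ofReal
          (Real.exp (-(t₀ * x * (n * x)) + n * (8 * (t₀ * x) ^ 2 / δ ^ 2 * M))) ≤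
          ENNReal.ofReal (Real.exp (-(n * (t₀ / 2) * x ^ 2))) :=
        ENNReal.ofReal_le_ofReal (Real.exp_le_exp.2 hexp_le)
      constructor
      · exact le_trans (chernoff_one_sided μ n X hn hmeas hindep hident hint hmean hδ hM.le
          hM' ht0 ht hx) hof
      · rw [hset_neg]
        exact le_trans (chernoff_one_sided μ n X' hn hmeas' hindep' hident' hint' hmean' hδ
          hM.le hM'' ht0 ht hx) hof
    · -- x > 1
      intro hx1
      have hexp_le : -(t₀ * (n * x)) + n * (8 * t₀ ^ 2 / δ ^ 2 * M) ≤
          -(n * (t₀ / 2) * x) := by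
        have h1 := mul_le_mul_of_nonneg_left hkey (show (0:ℝ) ≤ (n : ℝ) by positivity)
        have hn0 : (0:ℝ) ≤ (n:ℝ) := by positivity
        nlinarith [h1, mul_nonneg hn0 ht₀_pos.le]
      have hof : ENNReal.ofReal
          (Real.exp (-(t₀ * (n * x)) + n * (8 * t₀ ^ 2 / δ ^ 2 * M))) ≤
          ENNReal.ofReal (Real.exp (-(n * (t₀ / 2) * x))) :=
        ENNReal.ofReal_le_ofReal (Real.exp_le_exp.2 hexp_le)
      constructor
      · exact le_trans (chernoff_one_sided μ n X hn hmeas hindep hident hint hmean hδ hM.le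
          hM' ht₀_pos ht₀_le hx) hof
      · rw [hset_neg]
        exact le_trans (chernoff_one_sided μ n X' hn hmeas' hindep' hident' hint' hmean' hδ
          hM.le hM'' ht₀_pos ht₀_le hx) hof
  · -- converse part
    intro Ω m0 μ hprob n X c x₀ hn hc hx₀ hmeas hindep hident hint hmean hbound δ hδ hδc
    haveI := hprob
    obtain ⟨a, ha0, htail⟩ := converse_tail μ n X c x₀ hn hc hx₀ hmeas hindep hbound
    have hn_pos : (0:ℝ) < n := by exact_mod_cast hn
    refine tail_to_moment μ (hmeas 1) hc hδ hδc
      (B := 4 * Real.exp (c * a)) ?_ (T := a + n * x₀) ?_ htail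
    · nlinarith [Real.one_le_exp (show (0:ℝ) ≤ c * a by positivity)]
    · positivity
end

section
/- Let (X_k)_{k≥1} be independent and identically distributed real random variables with E[X_k] = 0, and S_n = X_1 + ⋯ + X_n. Then the following are equivalent: (i) there exists a constant c > 0 such that for all n ≥ 1 and all x > 0, P[S_n/n > x] ≤ exp(−n c x²) and P[−S_n/n > x] ≤ exp(−n c x²); (ii) there exists δ > 0 such that E[exp(δ X_1²)] < ∞. Moreover, if (i) holds for some single n ≥ 1 and all x > 0 with some constant c = c_1, then it holds for all n ≥ 1 and x > 0 with some constant c_2 depending only on c_1. -/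
open MeasureTheory ProbabilityTheory Filter


lemma exp_le_add_exp_sq (t : ℝ) : Real.exp t ≤ t + Real.exp (t ^ 2) := by
  have he : 1 + t ^ 2 ≤ Real.exp (t ^ 2) := by linarith [Real.add_one_le_exp (t ^ 2)]
  rcases le_or_gt t (-1) with h | h
  · have h1 : Real.exp t ≤ 1 := Real.exp_le_one_iff.2 (by linarith)
    nlinarith
  rcases le_or_gt 1 t with h' | h'
  · have : Real.exp t ≤ Real.exp (t ^ 2) := Real.exp_le_exp.2 (by nlinarith)
    linarith
  · have hb := Real.exp_bound (x := t) (by rw [abs_le]; constructor <;> linarith) (n := 2)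
      (by norm_num)
    simp [Finset.sum_range_succ] at hb
    rw [abs_le] at hb
    have : |t| ^ 2 = t ^ 2 := sq_abs t
    nlinarith [hb.2, sq_abs t]

lemma jensen_rpow {Ω : Type*} {m0 : MeasurableSpace Ω} (μ : Measure Ω) [IsProbabilityMeasure μ]
    {g : Ω → ℝ} (hg : Integrable g μ) (hg1 : ∀ ω, 1 ≤ g ω) {θ : ℝ} (h0 : 0 ≤ θ) (h1 : θ ≤ 1) :
    ∫ ω, g ω ^ θ ∂μ ≤ (∫ ω, g ω ∂μ) ^ θ := by
  set G := ∫ ω, g ω ∂μ with hG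
  have hG1 : 1 ≤ G := by
    calc (1 : ℝ) = ∫ _ω, (1 : ℝ) ∂μ := by simp
    _ ≤ G := integral_mono (integrable_const 1) hg (fun ω => hg1 ω)
  have hGpos : 0 < G := by linarith
  have hpt : ∀ ω, g ω ^ θ ≤ (θ * (g ω / G) + (1 - θ)) * G ^ θ := by
    intro ω
    have hgnn : 0 ≤ g ω := by linarith [hg1 ω]
    have h := Real.geom_mean_le_arith_mean2_weighted h0 (by linarith : (0:ℝ) ≤ 1 - θ)
      (div_nonneg hgnn hGpos.le) zero_le_one (by ring)
    have h2 : (g ω / G) ^ θ ≤ θ * (g ω / G) + (1 - θ) := by simpa using h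
    have h3 : (g ω / G) ^ θ = g ω ^ θ / G ^ θ := Real.div_rpow hgnn hGpos.le θ
    rw [h3] at h2
    have hGθ : 0 < G ^ θ := Real.rpow_pos_of_pos hGpos θ
    calc g ω ^ θ = g ω ^ θ / G ^ θ * G ^ θ := by field_simp
    _ ≤ (θ * (g ω / G) + (1 - θ)) * G ^ θ := mul_le_mul_of_nonneg_right h2 hGθ.le
  have hrw : (fun ω => g ω ^ θ) = fun ω => Real.exp (Real.log (g ω) * θ) := by
    funext ω
    exact Real.rpow_def_of_pos (by linarith [hg1 ω]) θ
  have hmeasp : AEStronglyMeasurable (fun ω => g ω ^ θ) μ := by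
    rw [hrw]
    exact ((Real.measurable_exp.comp
      (Real.measurable_log.mul_const θ)).comp_aemeasurable hg.1.aemeasurable).aestronglyMeasurable
  have hintp : Integrable (fun ω => g ω ^ θ) μ := by
    refine hg.mono' hmeasp ?_
    filter_upwards with ω
    have hgnn : (0:ℝ) ≤ g ω := by linarith [hg1 ω]
    rw [Real.norm_eq_abs, abs_of_nonneg (Real.rpow_nonneg hgnn θ)]
    calc g ω ^ θ ≤ g ω ^ (1:ℝ) := Real.rpow_le_rpow_of_exponent_le (hg1 ω) h1
    _ = g ω := Real.rpow_one _
  have hintR : Integrable (fun ω => (θ * (g ω / G) + (1 - θ)) * G ^ θ) μ :=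
    (((hg.div_const G).const_mul θ).add (integrable_const _)).mul_const _
  calc ∫ ω, g ω ^ θ ∂μ ≤ ∫ ω, (θ * (g ω / G) + (1 - θ)) * G ^ θ ∂μ :=
      integral_mono hintp hintR hpt
  _ = (θ * (G / G) + (1 - θ)) * G ^ θ := by
      rw [integral_mul_const, integral_add ((hg.div_const G).const_mul θ) (integrable_const _),
        integral_const_mul, integral_div, integral_const]
      simp
      exact Or.inl (Or.inl rfl)
  _ = G ^ θ := by rw [div_self hGpos.ne']; ring

lemma mgf_le_of_expsq {Ω : Type*} {m0 : MeasurableSpace Ω} (μ : Measure Ω) [IsProbabilityMeasure μ]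
    {Y : Ω → ℝ} (hm : Measurable Y) (hint : Integrable Y μ) (h0 : (∫ ω, Y ω ∂μ) = 0)
    {δ : ℝ} (hδ : 0 < δ) (hIexp : Integrable (fun ω => Real.exp (δ * Y ω ^ 2)) μ) (t : ℝ) :
    Integrable (fun ω => Real.exp (t * Y ω)) μ ∧
    ∫ ω, Real.exp (t * Y ω) ∂μ ≤
      Real.exp ((1 / (2 * δ) + Real.log (∫ ω, Real.exp (δ * Y ω ^ 2) ∂μ) / δ) * t ^ 2) := by
  set M := ∫ ω, Real.exp (δ * Y ω ^ 2) ∂μ with hM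
  have hM1 : 1 ≤ M := by
    calc (1 : ℝ) = ∫ _ω, (1 : ℝ) ∂μ := by simp
    _ ≤ M := integral_mono (integrable_const 1) hIexp
        (fun ω => Real.one_le_exp (by positivity))
  have hlogM : 0 ≤ Real.log M := Real.log_nonneg hM1
  set K := 1 / (2 * δ) + Real.log M / δ with hK
  -- pointwise domination: exp (t y) ≤ exp (t^2/(4δ)) * exp (δ y^2)
  have hdom : ∀ ω, Real.exp (t * Y ω) ≤ Real.exp (t ^ 2 / (4 * δ)) * Real.exp (δ * Y ω ^ 2) := by
    intro ω
    rw [← Real.exp_add]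
    apply Real.exp_le_exp.2
    have hkey : t ^ 2 / (4 * δ) + δ * Y ω ^ 2 - t * Y ω = (t - 2 * δ * Y ω) ^ 2 / (4 * δ) := by
      field_simp
      ring
    nlinarith [div_nonneg (sq_nonneg (t - 2 * δ * Y ω)) (by linarith : (0:ℝ) ≤ 4 * δ)]
  have hintt : Integrable (fun ω => Real.exp (t * Y ω)) μ := by
    refine (hIexp.const_mul (Real.exp (t ^ 2 / (4 * δ)))).mono'
      ((Real.measurable_exp.comp (hm.const_mul t)).aestronglyMeasurable) ?_
    filter_upwards with ω
    rw [Real.norm_eq_abs, abs_of_nonneg (Real.exp_nonneg _)]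
    exact hdom ω
  refine ⟨hintt, ?_⟩
  rcases le_or_gt (t ^ 2) δ with hcase | hcase
  · -- small t: use exp s ≤ s + exp (s^2) and Jensen
    have hints : Integrable (fun ω => Real.exp (t ^ 2 * Y ω ^ 2)) μ := by
      refine hIexp.mono' ((Real.measurable_exp.comp ((hm.pow_const 2).const_mul
        (t ^ 2))).aestronglyMeasurable) ?_
      filter_upwards with ω
      rw [Real.norm_eq_abs, abs_of_nonneg (Real.exp_nonneg _)]
      exact Real.exp_le_exp.2 (by nlinarith [sq_nonneg (Y ω)])
    have step1 : ∫ ω, Real.exp (t * Y ω) ∂μ ≤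
        ∫ ω, (t * Y ω + Real.exp (t ^ 2 * Y ω ^ 2)) ∂μ := by
      refine integral_mono hintt ((hint.const_mul t).add hints) ?_
      intro ω
      have := exp_le_add_exp_sq (t * Y ω)
      calc Real.exp (t * Y ω) ≤ t * Y ω + Real.exp ((t * Y ω) ^ 2) := this
      _ = t * Y ω + Real.exp (t ^ 2 * Y ω ^ 2) := by ring_nf
    have step2 : ∫ ω, (t * Y ω + Real.exp (t ^ 2 * Y ω ^ 2)) ∂μ
        = ∫ ω, Real.exp (t ^ 2 * Y ω ^ 2) ∂μ := by
      rw [integral_add (hint.const_mul t) hints, integral_const_mul, h0]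
      ring
    -- Jensen: ∫ exp(t² Y²) = ∫ (exp (δ Y²))^(t²/δ) ≤ M^(t²/δ)
    have hθ0 : 0 ≤ t ^ 2 / δ := by positivity
    have hθ1 : t ^ 2 / δ ≤ 1 := (div_le_one hδ).2 hcase
    have hre : (fun ω => Real.exp (t ^ 2 * Y ω ^ 2))
        = fun ω => (Real.exp (δ * Y ω ^ 2)) ^ (t ^ 2 / δ) := by
      funext ω
      rw [← Real.exp_mul]
      congr 1
      field_simp
    have step3 : ∫ ω, Real.exp (t ^ 2 * Y ω ^ 2) ∂μ ≤ M ^ (t ^ 2 / δ) := by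
      rw [hre]
      exact jensen_rpow μ hIexp (fun ω => Real.one_le_exp (by positivity)) hθ0 hθ1
    have step4 : M ^ (t ^ 2 / δ) ≤ Real.exp (K * t ^ 2) := by
      have hMpos : 0 < M := by linarith
      rw [Real.rpow_def_of_pos hMpos]
      apply Real.exp_le_exp.2
      rw [hK]
      have h1 : Real.log M * (t ^ 2 / δ) = Real.log M / δ * t ^ 2 := by ring
      have h2 : 0 ≤ 1 / (2 * δ) * t ^ 2 := by positivity
      nlinarith
    calc ∫ ω, Real.exp (t * Y ω) ∂μ ≤ ∫ ω, (t * Y ω + Real.exp (t ^ 2 * Y ω ^ 2)) ∂μ := step1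
    _ = ∫ ω, Real.exp (t ^ 2 * Y ω ^ 2) ∂μ := step2
    _ ≤ M ^ (t ^ 2 / δ) := step3
    _ ≤ Real.exp (K * t ^ 2) := step4
  · -- large t: crude bound
    have step1 : ∫ ω, Real.exp (t * Y ω) ∂μ ≤ Real.exp (t ^ 2 / (4 * δ)) * M := by
      calc ∫ ω, Real.exp (t * Y ω) ∂μ
          ≤ ∫ ω, Real.exp (t ^ 2 / (4 * δ)) * Real.exp (δ * Y ω ^ 2) ∂μ :=
            integral_mono hintt (hIexp.const_mul _) hdom
      _ = Real.exp (t ^ 2 / (4 * δ)) * M := integral_const_mul _ _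
    have hMpos : 0 < M := by linarith
    have step2 : Real.exp (t ^ 2 / (4 * δ)) * M ≤ Real.exp (K * t ^ 2) := by
      rw [← Real.exp_log hMpos, ← Real.exp_add]
      apply Real.exp_le_exp.2
      rw [hK]
      have h1 : Real.log M ≤ Real.log M / δ * t ^ 2 := by
        rw [div_mul_eq_mul_div, le_div_iff₀ hδ]
        nlinarith
      have h2 : t ^ 2 / (4 * δ) ≤ 1 / (2 * δ) * t ^ 2 := by
        have hkey : 1 / (2 * δ) * t ^ 2 - t ^ 2 / (4 * δ) = t ^ 2 / (4 * δ) := by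
          field_simp
          ring
        nlinarith [div_nonneg (sq_nonneg t) (by linarith : (0:ℝ) ≤ 4 * δ)]
      nlinarith
    linarith

lemma sum_icc_eq_sum_subtype {Ω : Type*} (X : ℕ → Ω → ℝ) (n : ℕ) (ω : Ω) :
    ∑ k ∈ Finset.Icc 1 n, X k ω
      = ∑ i ∈ (Finset.Icc 1 n).subtype (fun i => 1 ≤ i), X (i : ℕ) ω := by
  exact ((Finset.sum_subtype_eq_sum_filter (fun k => X k ω) (s := Finset.Icc 1 n)
    (p := fun i => 1 ≤ i)).trans
    (by rw [Finset.filter_true_of_mem (fun k hk => (Finset.mem_Icc.1 hk).1)])).symm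

lemma card_icc_subtype (n : ℕ) :
    ((Finset.Icc 1 n).subtype (fun i => 1 ≤ i)).card = n := by
  rw [Finset.card_subtype, Finset.filter_true_of_mem (fun k hk => (Finset.mem_Icc.1 hk).1),
    Nat.card_Icc]
  omega

lemma main_bound {Ω : Type*} {m0 : MeasurableSpace Ω} (μ : Measure Ω) [IsProbabilityMeasure μ]
    (X : ℕ → Ω → ℝ) (hmeas : ∀ i, Measurable (X i))
    (hindep : iIndepFun
      (fun i : {i : ℕ // 1 ≤ i} => X i) μ)
    (hid : ∀ i : ℕ, 1 ≤ i → IdentDistrib (X i) (X 1) μ μ)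
    {K : ℝ} (hK : 0 < K)
    (hmgf : ∀ t : ℝ, Integrable (fun ω => Real.exp (t * X 1 ω)) μ ∧
      mgf (X 1) μ t ≤ Real.exp (K * t ^ 2))
    (n : ℕ) (hn : 1 ≤ n) (x : ℝ) (hx : 0 < x) :
    μ {ω | (∑ k ∈ Finset.Icc 1 n, X k ω) / n > x} ≤
      ENNReal.ofReal (Real.exp (-(n * (1 / (4 * K)) * x ^ 2))) := by
  classical
  set t₀ := x / (2 * K) with ht₀
  have ht₀pos : 0 < t₀ := by positivity
  set s : Finset {i : ℕ // 1 ≤ i} := (Finset.Icc 1 n).subtype (fun i => 1 ≤ i) with hs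
  set Z : Ω → ℝ := fun ω => ∑ k ∈ Finset.Icc 1 n, X k ω with hZ
  have hZeq : Z = ∑ i ∈ s, (fun i : {i : ℕ // 1 ≤ i} => X (i : ℕ)) i := by
    funext ω
    rw [Finset.sum_apply]
    exact sum_icc_eq_sum_subtype X n ω
  have hinti : ∀ i : {i : ℕ // 1 ≤ i}, Integrable (fun ω => Real.exp (t₀ * X (i : ℕ) ω)) μ := by
    intro i
    have h := (hid i i.2).comp (Real.measurable_exp.comp (measurable_id.const_mul t₀))
    exact h.integrable_iff.2 (hmgf t₀).1
  have hintZ : Integrable (fun ω => Real.exp (t₀ * Z ω)) μ := by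
    have h := hindep.integrable_exp_mul_sum (fun i => hmeas (i : ℕ)) (s := s)
      (fun i _ => hinti i)
    rwa [← hZeq] at h
  have hmgfZ : mgf Z μ t₀ ≤ Real.exp (n * K * t₀ ^ 2) := by
    have h1 : mgf Z μ t₀ = ∏ i ∈ s, mgf (X (i : ℕ)) μ t₀ := by
      rw [hZeq]
      exact hindep.mgf_sum (fun i => hmeas (i : ℕ)) s
    have h2 : ∀ i ∈ s, mgf (X (i : ℕ)) μ t₀ = mgf (X 1) μ t₀ := fun i _ =>
      ((hid i i.2).comp (Real.measurable_exp.comp (measurable_id.const_mul t₀))).integral_eq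
    rw [h1, Finset.prod_congr rfl h2, Finset.prod_const, hs, card_icc_subtype]
    calc (mgf (X 1) μ t₀) ^ n ≤ (Real.exp (K * t₀ ^ 2)) ^ n :=
        pow_le_pow_left₀ mgf_nonneg (hmgf t₀).2 n
    _ = Real.exp (n * (K * t₀ ^ 2)) := (Real.exp_nat_mul _ n).symm
    _ = Real.exp (n * K * t₀ ^ 2) := by ring_nf
  have hnpos : (0 : ℝ) < n := by exact_mod_cast Nat.lt_of_lt_of_le Nat.zero_lt_one hn
  have hsub : {ω | Z ω / n > x} ⊆ {ω | (n : ℝ) * x ≤ Z ω} := by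
    intro ω hω
    simp only [Set.mem_setOf_eq] at hω ⊢
    rw [gt_iff_lt, lt_div_iff₀ hnpos] at hω
    nlinarith
  have hch := measure_ge_le_exp_mul_mgf (μ := μ) (X := Z) ((n : ℝ) * x) ht₀pos.le hintZ
  have hcomb : (μ {ω | (n : ℝ) * x ≤ Z ω}).toReal ≤ Real.exp (-(n * (1 / (4 * K)) * x ^ 2)) := by
    have h3 : Real.exp (-t₀ * ((n : ℝ) * x)) * mgf Z μ t₀
        ≤ Real.exp (-t₀ * ((n : ℝ) * x)) * Real.exp (n * K * t₀ ^ 2) :=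
      mul_le_mul_of_nonneg_left hmgfZ (Real.exp_nonneg _)
    have h4 : Real.exp (-t₀ * ((n : ℝ) * x)) * Real.exp (n * K * t₀ ^ 2)
        = Real.exp (-(n * (1 / (4 * K)) * x ^ 2)) := by
      rw [← Real.exp_add]
      congr 1
      rw [ht₀]
      field_simp
      ring
    linarith [hch, show μ.real {ω | (n : ℝ) * x ≤ Z ω} = (μ {ω | (n : ℝ) * x ≤ Z ω}).toReal from rfl]
  calc μ {ω | Z ω / n > x} ≤ μ {ω | (n : ℝ) * x ≤ Z ω} := measure_mono hsub
  _ = ENNReal.ofReal ((μ {ω | (n : ℝ) * x ≤ Z ω}).toReal) :=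
      (ENNReal.ofReal_toReal (measure_ne_top _ _)).symm
  _ ≤ ENNReal.ofReal (Real.exp (-(n * (1 / (4 * K)) * x ^ 2))) :=
      ENNReal.ofReal_le_ofReal hcomb

lemma both_bounds {Ω : Type*} {m0 : MeasurableSpace Ω} (μ : Measure Ω) [IsProbabilityMeasure μ]
    (X : ℕ → Ω → ℝ) (hmeas : ∀ i, Measurable (X i))
    (hindep : iIndepFun
      (fun i : {i : ℕ // 1 ≤ i} => X i) μ)
    (hid : ∀ i : ℕ, 1 ≤ i → IdentDistrib (X i) (X 1) μ μ)
    {K : ℝ} (hK : 0 < K)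
    (hmgf : ∀ t : ℝ, Integrable (fun ω => Real.exp (t * X 1 ω)) μ ∧
      mgf (X 1) μ t ≤ Real.exp (K * t ^ 2))
    (n : ℕ) (hn : 1 ≤ n) (x : ℝ) (hx : 0 < x) :
    μ {ω | (∑ k ∈ Finset.Icc 1 n, X k ω) / n > x} ≤
      ENNReal.ofReal (Real.exp (-(n * (1 / (4 * K)) * x ^ 2))) ∧
    μ {ω | -((∑ k ∈ Finset.Icc 1 n, X k ω) / n) > x} ≤
      ENNReal.ofReal (Real.exp (-(n * (1 / (4 * K)) * x ^ 2))) := by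
  refine ⟨main_bound μ X hmeas hindep hid hK hmgf n hn x hx, ?_⟩
  set X' : ℕ → Ω → ℝ := fun i ω => -(X i ω) with hX'
  have hmeas' : ∀ i, Measurable (X' i) := fun i => (hmeas i).neg
  have hindep' : iIndepFun
      (fun i : {i : ℕ // 1 ≤ i} => X' i) μ := by
    have h := hindep.comp (g := fun _ : {i : ℕ // 1 ≤ i} => (fun y : ℝ => -y))
      (fun _ => measurable_neg)
    exact h
  have hid' : ∀ i : ℕ, 1 ≤ i → IdentDistrib (X' i) (X' 1) μ μ := fun i hi =>
    (hid i hi).comp measurable_neg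
  have hmgf' : ∀ t : ℝ, Integrable (fun ω => Real.exp (t * X' 1 ω)) μ ∧
      mgf (X' 1) μ t ≤ Real.exp (K * t ^ 2) := by
    intro t
    constructor
    · have h := (hmgf (-t)).1
      have : (fun ω => Real.exp (t * X' 1 ω)) = fun ω => Real.exp (-t * X 1 ω) := by
        funext ω
        simp [hX', neg_mul, mul_neg]
      rw [this]
      exact h
    · have heq : mgf (X' 1) μ t = mgf (X 1) μ (-t) := by
        have h1 : X' 1 = -(X 1) := rfl
        rw [h1, mgf_neg]
      rw [heq]
      calc mgf (X 1) μ (-t) ≤ Real.exp (K * (-t) ^ 2) := (hmgf (-t)).2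
      _ = Real.exp (K * t ^ 2) := by ring_nf
  have h := main_bound μ X' hmeas' hindep' hid' hK hmgf' n hn x hx
  have hset : {ω | -((∑ k ∈ Finset.Icc 1 n, X k ω) / n) > x}
      = {ω | (∑ k ∈ Finset.Icc 1 n, X' k ω) / n > x} := by
    ext ω
    simp only [Set.mem_setOf_eq, hX']
    rw [Finset.sum_neg_distrib, neg_div]
  rw [hset]
  exact h

lemma moment_from_tail {Ω : Type*} {m0 : MeasurableSpace Ω} (μ : Measure Ω)
    [IsProbabilityMeasure μ] {Y : Ω → ℝ} (hm : Measurable Y) {c : ℝ} (hc : 0 < c)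
    (h : ∀ x : ℝ, 0 < x → μ {ω | Y ω > x} ≤ ENNReal.ofReal (Real.exp (-(c * x ^ 2))) ∧
      μ {ω | -Y ω > x} ≤ ENNReal.ofReal (Real.exp (-(c * x ^ 2)))) :
    ∫⁻ ω, ENNReal.ofReal (Real.exp (c / 2 * Y ω ^ 2)) ∂μ ≤ 3 := by
  have hmf : Measurable fun ω => Real.exp (c / 2 * Y ω ^ 2) :=
    Real.measurable_exp.comp ((hm.pow_const 2).const_mul (c / 2))
  rw [lintegral_eq_lintegral_meas_lt μ (Filter.Eventually.of_forall fun ω => (Real.exp_nonneg _))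
    hmf.aemeasurable]
  have hsplit : Set.Ioi (0 : ℝ) = Set.Ioc (0 : ℝ) 1 ∪ Set.Ioi (1 : ℝ) :=
    (Set.Ioc_union_Ioi_eq_Ioi zero_le_one).symm
  rw [hsplit, lintegral_union measurableSet_Ioi (Set.Ioc_disjoint_Ioi le_rfl)]
  have h1 : ∫⁻ t in Set.Ioc (0:ℝ) 1, μ {a | t < Real.exp (c / 2 * Y a ^ 2)} ≤ 1 := by
    calc ∫⁻ t in Set.Ioc (0:ℝ) 1, μ {a | t < Real.exp (c / 2 * Y a ^ 2)}
        ≤ ∫⁻ _t in Set.Ioc (0:ℝ) 1, 1 :=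
          setLIntegral_mono' measurableSet_Ioc (fun t _ => prob_le_one)
    _ = 1 := by simp
  have h2 : ∫⁻ t in Set.Ioi (1:ℝ), μ {a | t < Real.exp (c / 2 * Y a ^ 2)} ≤ 2 := by
    have hbound : ∀ t ∈ Set.Ioi (1:ℝ), μ {a | t < Real.exp (c / 2 * Y a ^ 2)}
        ≤ 2 * ENNReal.ofReal (t ^ (-2 : ℝ)) := by
      intro t ht
      have ht1 : 1 < t := ht
      have htpos : 0 < t := by linarith
      have hlogt : 0 < Real.log t := Real.log_pos ht1
      set r := Real.sqrt (2 / c * Real.log t) with hr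
      have hrpos : 0 < r := Real.sqrt_pos.2 (by positivity)
      have hr2 : r ^ 2 = 2 / c * Real.log t := Real.sq_sqrt (by positivity)
      have hsub : {a | t < Real.exp (c / 2 * Y a ^ 2)} ⊆ {ω | Y ω > r} ∪ {ω | -Y ω > r} := by
        intro a ha
        simp only [Set.mem_setOf_eq] at ha
        have hlog : Real.log t < c / 2 * Y a ^ 2 := by
          have := Real.log_lt_log htpos ha
          rwa [Real.log_exp] at this
        have hY2 : r ^ 2 < Y a ^ 2 := by
          have h4 := mul_lt_mul_of_pos_left hlog (by positivity : (0:ℝ) < 2 / c)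
          rw [hr2]
          calc 2 / c * Real.log t < 2 / c * (c / 2 * Y a ^ 2) := h4
          _ = Y a ^ 2 := by
              field_simp
        have habs : r < |Y a| := by
          refine lt_of_pow_lt_pow_left₀ 2 (abs_nonneg (Y a)) ?_
          rw [sq_abs]
          exact hY2
        rcases lt_abs.1 habs with hca | hca
        · exact Or.inl hca
        · exact Or.inr (by simpa using hca)
      calc μ {a | t < Real.exp (c / 2 * Y a ^ 2)} ≤ μ ({ω | Y ω > r} ∪ {ω | -Y ω > r}) :=
          measure_mono hsub
      _ ≤ μ {ω | Y ω > r} + μ {ω | -Y ω > r} := measure_union_le _ _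
      _ ≤ ENNReal.ofReal (Real.exp (-(c * r ^ 2))) + ENNReal.ofReal (Real.exp (-(c * r ^ 2))) :=
          add_le_add (h r hrpos).1 (h r hrpos).2
      _ = 2 * ENNReal.ofReal (Real.exp (-(c * r ^ 2))) := by rw [two_mul]
      _ = 2 * ENNReal.ofReal (t ^ (-2 : ℝ)) := by
          congr 1
          rw [hr2]
          rw [Real.rpow_def_of_pos htpos]
          congr 1
          field_simp
    calc ∫⁻ t in Set.Ioi (1:ℝ), μ {a | t < Real.exp (c / 2 * Y a ^ 2)}
        ≤ ∫⁻ t in Set.Ioi (1:ℝ), 2 * ENNReal.ofReal (t ^ (-2 : ℝ)) :=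
          setLIntegral_mono' measurableSet_Ioi hbound
    _ = 2 * ∫⁻ t in Set.Ioi (1:ℝ), ENNReal.ofReal (t ^ (-2 : ℝ)) := lintegral_const_mul' _ _
          (by norm_num)
    _ = 2 * ENNReal.ofReal (∫ t in Set.Ioi (1:ℝ), t ^ (-2 : ℝ)) := by
        rw [← ofReal_integral_eq_lintegral_ofReal
          (integrableOn_Ioi_rpow_of_lt (by norm_num) one_pos)
          ((ae_restrict_iff' measurableSet_Ioi).2 (Filter.Eventually.of_forall
            (fun t ht => Real.rpow_nonneg (le_of_lt (lt_trans one_pos ht)) _)))]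
    _ = 2 * ENNReal.ofReal 1 := by
        rw [integral_Ioi_rpow_of_lt (by norm_num) one_pos]
        norm_num
    _ = 2 := by norm_num
  refine le_trans (add_le_add h1 h2) (by norm_num)

lemma integrable_of_lintegral_lt {Ω : Type*} {m0 : MeasurableSpace Ω} {μ : Measure Ω}
    {f : Ω → ℝ} (hmeas : Measurable f) (hnn : ∀ ω, 0 ≤ f ω)
    (h : (∫⁻ ω, ENNReal.ofReal (f ω) ∂μ) < ⊤) : Integrable f μ := by
  refine ⟨hmeas.aestronglyMeasurable, ?_⟩
  rwa [hasFiniteIntegral_iff_ofReal (Filter.Eventually.of_forall hnn)]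

lemma single_n_mgf {Ω : Type*} {m0 : MeasurableSpace Ω} (μ : Measure Ω) [IsProbabilityMeasure μ]
    (X : ℕ → Ω → ℝ) (hmeas : ∀ i, Measurable (X i))
    (hindep : iIndepFun
      (fun i : {i : ℕ // 1 ≤ i} => X i) μ)
    (hid : ∀ i : ℕ, 1 ≤ i → IdentDistrib (X i) (X 1) μ μ)
    (hint1 : Integrable (X 1) μ) (h00 : (∫ ω, X 1 ω ∂μ) = 0)
    {c₁ : ℝ} (hc₁ : 0 < c₁) {n₀ : ℕ} (hn₀ : 1 ≤ n₀)
    (hbnd : ∀ x : ℝ, 0 < x →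
      μ {ω | (∑ k ∈ Finset.Icc 1 n₀, X k ω) / n₀ > x} ≤
        ENNReal.ofReal (Real.exp (-(n₀ * c₁ * x ^ 2))) ∧
      μ {ω | -((∑ k ∈ Finset.Icc 1 n₀, X k ω) / n₀) > x} ≤
        ENNReal.ofReal (Real.exp (-(n₀ * c₁ * x ^ 2)))) :
    ∀ t : ℝ, Integrable (fun ω => Real.exp (t * X 1 ω)) μ ∧
      mgf (X 1) μ t ≤ Real.exp ((1 + 2 * Real.log 3) / c₁ * t ^ 2) := by
  classical
  have hn₀R : (0 : ℝ) < n₀ := by exact_mod_cast Nat.lt_of_lt_of_le Nat.zero_lt_one hn₀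
  set T : Ω → ℝ := fun ω => (∑ k ∈ Finset.Icc 1 n₀, X k ω) / n₀ with hT
  have hTmeas : Measurable T :=
    (Finset.measurable_sum _ (fun i _ => hmeas i)).div_const _
  have hintk : ∀ k ∈ Finset.Icc 1 n₀, Integrable (X k) μ := fun k hk =>
    ((hid k (Finset.mem_Icc.1 hk).1).integrable_iff).2 hint1
  have hTint : Integrable T μ := (integrable_finset_sum _ hintk).div_const _
  have hT0 : (∫ ω, T ω ∂μ) = 0 := by
    show (∫ ω, (∑ k ∈ Finset.Icc 1 n₀, X k ω) / (n₀ : ℝ) ∂μ) = 0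
    rw [integral_div, integral_finset_sum _ hintk]
    have : ∀ k ∈ Finset.Icc 1 n₀, (∫ ω, X k ω ∂μ) = 0 := fun k hk => by
      rw [(hid k (Finset.mem_Icc.1 hk).1).integral_eq, h00]
    rw [Finset.sum_congr rfl this]
    simp
  -- tail bounds for T give exponential square moment
  set c := (n₀ : ℝ) * c₁ with hc
  have hcpos : 0 < c := by positivity
  have htails : ∀ x : ℝ, 0 < x →
      μ {ω | T ω > x} ≤ ENNReal.ofReal (Real.exp (-(c * x ^ 2))) ∧
      μ {ω | -T ω > x} ≤ ENNReal.ofReal (Real.exp (-(c * x ^ 2))) := fun x hx => hbnd x hx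
  have hlint := moment_from_tail μ hTmeas hcpos htails
  set δ' := c / 2 with hδ'
  have hδ'pos : 0 < δ' := by positivity
  have hIexpT : Integrable (fun ω => Real.exp (δ' * T ω ^ 2)) μ := by
    refine integrable_of_lintegral_lt
      (Real.measurable_exp.comp ((hTmeas.pow_const 2).const_mul δ')) (fun ω => Real.exp_nonneg _)
      ?_
    exact lt_of_le_of_lt hlint (by norm_num)
  set M := ∫ ω, Real.exp (δ' * T ω ^ 2) ∂μ with hM
  have hM1 : 1 ≤ M := by
    calc (1 : ℝ) = ∫ _ω, (1 : ℝ) ∂μ := by simp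
    _ ≤ M := integral_mono (integrable_const 1) hIexpT (fun ω => Real.one_le_exp (by positivity))
  have hM3 : M ≤ 3 := by
    have heq : ENNReal.ofReal M = ∫⁻ ω, ENNReal.ofReal (Real.exp (δ' * T ω ^ 2)) ∂μ :=
      ofReal_integral_eq_lintegral_ofReal hIexpT
        (Filter.Eventually.of_forall (fun ω => Real.exp_nonneg _))
    have h3 : ENNReal.ofReal M ≤ ENNReal.ofReal 3 := by
      rw [heq]
      calc ∫⁻ ω, ENNReal.ofReal (Real.exp (δ' * T ω ^ 2)) ∂μ ≤ 3 := hlint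
      _ = ENNReal.ofReal 3 := by norm_num
    exact (ENNReal.ofReal_le_ofReal_iff (by norm_num)).1 h3
  set K := 1 / (2 * δ') + Real.log M / δ' with hKdef
  have hmgfT := mgf_le_of_expsq μ hTmeas hTint hT0 hδ'pos hIexpT
  have hKpos : 0 < K := by
    rw [hKdef]
    have h1 : 0 < 1 / (2 * δ') := by positivity
    have h2 : 0 ≤ Real.log M / δ' := div_nonneg (Real.log_nonneg hM1) hδ'pos.le
    linarith
  have hKbd : K * n₀ ≤ (1 + 2 * Real.log 3) / c₁ := by
    have hlog3 : Real.log M ≤ Real.log 3 := Real.log_le_log (by linarith) hM3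
    have hKeq : K * n₀ = (1 + 2 * Real.log M) / c₁ := by
      rw [hKdef, hδ', hc]
      field_simp
    rw [hKeq]
    exact (div_le_div_iff_of_pos_right hc₁).2 (by linarith)
  intro t
  -- identify sum with n₀ • T and use mgf machinery
  set Z : Ω → ℝ := fun ω => ∑ k ∈ Finset.Icc 1 n₀, X k ω with hZ
  have hZT : ∀ ω, Z ω = n₀ * T ω := by
    intro ω
    show (∑ k ∈ Finset.Icc 1 n₀, X k ω)
      = (n₀ : ℝ) * ((∑ k ∈ Finset.Icc 1 n₀, X k ω) / (n₀ : ℝ))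
    field_simp
  have hintZ : Integrable (fun ω => Real.exp (t * Z ω)) μ := by
    have h := (hmgfT (t * n₀)).1
    refine h.congr ?_
    filter_upwards with ω
    rw [hZT ω]
    ring_nf
  have hmgfZ : mgf Z μ t ≤ Real.exp (K * (t * n₀) ^ 2) := by
    have h := (hmgfT (t * (n₀ : ℝ))).2
    rw [← hM, ← hKdef] at h
    show (∫ ω, Real.exp (t * Z ω) ∂μ) ≤ Real.exp (K * (t * (n₀ : ℝ)) ^ 2)
    have heq : (∫ ω, Real.exp (t * Z ω) ∂μ) = ∫ ω, Real.exp (t * (n₀ : ℝ) * T ω) ∂μ :=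
      integral_congr_ae (Filter.Eventually.of_forall fun ω => by
        show Real.exp (t * Z ω) = Real.exp (t * (n₀ : ℝ) * T ω)
        rw [hZT ω]; ring_nf)
    rw [heq]
    exact h
  -- product structure
  set s : Finset {i : ℕ // 1 ≤ i} := (Finset.Icc 1 n₀).subtype (fun i => 1 ≤ i) with hs
  have hZeq : Z = ∑ i ∈ s, (fun i : {i : ℕ // 1 ≤ i} => X (i : ℕ)) i := by
    funext ω
    rw [Finset.sum_apply]
    exact sum_icc_eq_sum_subtype X n₀ ω
  have hprod : mgf Z μ t = (mgf (X 1) μ t) ^ n₀ := by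
    have h1 : mgf Z μ t = ∏ i ∈ s, mgf (X (i : ℕ)) μ t := by
      rw [hZeq]
      exact hindep.mgf_sum (fun i => hmeas (i : ℕ)) s
    have h2 : ∀ i ∈ s, mgf (X (i : ℕ)) μ t = mgf (X 1) μ t := fun i _ =>
      ((hid i i.2).comp (Real.measurable_exp.comp (measurable_id.const_mul t))).integral_eq
    rw [h1, Finset.prod_congr rfl h2, Finset.prod_const, hs, card_icc_subtype]
  have hmgf1 : mgf (X 1) μ t ≤ Real.exp ((1 + 2 * Real.log 3) / c₁ * t ^ 2) := by
    have hpow : (mgf (X 1) μ t) ^ n₀ ≤ (Real.exp (K * n₀ * t ^ 2)) ^ n₀ := by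
      rw [← hprod, ← Real.exp_nat_mul]
      calc mgf Z μ t ≤ Real.exp (K * (t * n₀) ^ 2) := hmgfZ
      _ ≤ Real.exp (n₀ * (K * n₀ * t ^ 2)) := by
          apply Real.exp_le_exp.2
          apply le_of_eq
          ring
    have hbase := le_of_pow_le_pow_left₀ (Nat.one_le_iff_ne_zero.1 hn₀) (Real.exp_nonneg _) hpow
    calc mgf (X 1) μ t ≤ Real.exp (K * n₀ * t ^ 2) := hbase
    _ ≤ Real.exp ((1 + 2 * Real.log 3) / c₁ * t ^ 2) := by
        apply Real.exp_le_exp.2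
        exact mul_le_mul_of_nonneg_right hKbd (sq_nonneg t)
  -- integrability of exp (t * X 1)
  have hint_exp1 : Integrable (fun ω => Real.exp (t * X 1 ω)) μ := by
    rcases eq_or_lt_of_le hn₀ with h1 | h1
    · -- n₀ = 1 : Z = X 1
      have hicc : Finset.Icc 1 n₀ = {1} := by rw [← h1]; exact Finset.Icc_self 1
      refine hintZ.congr ?_
      filter_upwards with ω
      show Real.exp (t * ∑ k ∈ Finset.Icc 1 n₀, X k ω) = Real.exp (t * X 1 ω)
      rw [hicc]
      simp
    · -- n₀ ≥ 2 : split off X 1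
      set R : Ω → ℝ := fun ω => ∑ k ∈ Finset.Icc 2 n₀, X k ω with hR
      set s₂ : Finset {i : ℕ // 1 ≤ i} := (Finset.Icc 2 n₀).subtype (fun i => 1 ≤ i) with hs₂
      have hReq : ∀ ω, R ω = ∑ i ∈ s₂, X (i : ℕ) ω := by
        intro ω
        exact ((Finset.sum_subtype_eq_sum_filter (fun k => X k ω) (s := Finset.Icc 2 n₀)
          (p := fun i => 1 ≤ i)).trans
          (by rw [Finset.filter_true_of_mem
            (fun k hk => le_trans one_le_two (Finset.mem_Icc.1 hk).1)])).symm
      have hZXR : ∀ ω, Z ω = X 1 ω + R ω := by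
        intro ω
        show (∑ k ∈ Finset.Icc 1 n₀, X k ω) = X 1 ω + ∑ k ∈ Finset.Icc 2 n₀, X k ω
        have hicc : Finset.Icc 1 n₀ = insert 1 (Finset.Icc 2 n₀) := by
          ext k
          simp only [Finset.mem_Icc, Finset.mem_insert]
          omega
        rw [hicc, Finset.sum_insert (by simp [Finset.mem_Icc])]
      have hone : (⟨1, le_rfl⟩ : {i : ℕ // 1 ≤ i}) ∉ s₂ := by
        rw [hs₂, Finset.mem_subtype]
        simp [Finset.mem_Icc]
      have hindepXR : IndepFun (X 1) R μ := by
        have h := (hindep.indepFun_finsetSum_of_notMem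
          (fun i => hmeas (i : ℕ)) hone).symm
        have hR' : (∑ i ∈ s₂, (fun i : {i : ℕ // 1 ≤ i} => X (i : ℕ)) i) = R := by
          funext ω
          rw [Finset.sum_apply]
          exact (hReq ω).symm
        rwa [hR'] at h
      have hindepE : IndepFun (fun ω => Real.exp (t * X 1 ω)) (fun ω => Real.exp (t * R ω)) μ :=
        hindepXR.comp (Real.measurable_exp.comp (measurable_id.const_mul t))
          (Real.measurable_exp.comp (measurable_id.const_mul t))
      have hmul : Integrable ((fun ω => Real.exp (t * X 1 ω)) * fun ω => Real.exp (t * R ω)) μ := by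
        refine hintZ.congr ?_
        filter_upwards with ω
        simp only [Pi.mul_apply]
        rw [hZXR ω, ← Real.exp_add]
        ring_nf
      have hRmeas : Measurable R := Finset.measurable_sum _ (fun i _ => hmeas i)
      refine hindepE.integrable_left_of_integrable_op (· * ·) 1 one_ne_zero
        (fun x y => by simp [enorm_mul]) hmul
        ((Real.measurable_exp.comp (hmeas 1 |>.const_mul t)).aestronglyMeasurable)
        ((Real.measurable_exp.comp (hRmeas.const_mul t)).aestronglyMeasurable) ?_
      intro hg
      have h5 : ∀ᵐ ω ∂μ, False := by
        filter_upwards [hg] with ω hω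
        exact (Real.exp_pos (t * R ω)).ne' (by simpa using hω)
      rw [Filter.eventually_false_iff_eq_bot, ae_eq_bot] at h5
      exact (IsProbabilityMeasure.ne_zero μ) h5
  exact ⟨hint_exp1, hmgf1⟩

/-- Extension of Hoeffding's inequality (Corollary 1.3): for i.i.d. centered random
variables, a Gaussian deviation bound valid for all `n ≥ 1` and `x > 0` holds iff
`exp (δ X₁²)` has finite expectation for some `δ > 0`; moreover, if the Gaussian bound
holds for a single `n ≥ 1` with constant `c₁` then it holds for all `n ≥ 1` with a
constant `c₂` depending only on `c₁`. -/
theorem iid_hoeffding_extension :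
    (∀ {Ω : Type*} {m0 : MeasurableSpace Ω} (μ : Measure Ω), IsProbabilityMeasure μ →
      ∀ (X : ℕ → Ω → ℝ),
        (∀ i, Measurable (X i)) →
        iIndepFun
          (fun i : {i : ℕ // 1 ≤ i} => X i) μ →
        (∀ i : ℕ, 1 ≤ i → IdentDistrib (X i) (X 1) μ μ) →
        Integrable (X 1) μ → (∫ ω, X 1 ω ∂μ) = 0 →
        ((∃ c : ℝ, 0 < c ∧ ∀ n : ℕ, 1 ≤ n → ∀ x : ℝ, 0 < x →
            μ {ω | (∑ k ∈ Finset.Icc 1 n, X k ω) / n > x} ≤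
              ENNReal.ofReal (Real.exp (-(n * c * x ^ 2))) ∧
            μ {ω | -((∑ k ∈ Finset.Icc 1 n, X k ω) / n) > x} ≤
              ENNReal.ofReal (Real.exp (-(n * c * x ^ 2)))) ↔
          (∃ δ : ℝ, 0 < δ ∧
            (∫⁻ ω, ENNReal.ofReal (Real.exp (δ * (X 1 ω) ^ 2)) ∂μ) < ⊤))) ∧
    (∀ c₁ : ℝ, 0 < c₁ →
      ∃ c₂ : ℝ, 0 < c₂ ∧
        ∀ {Ω : Type*} {m0 : MeasurableSpace Ω} (μ : Measure Ω), IsProbabilityMeasure μ →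
        ∀ (X : ℕ → Ω → ℝ),
          (∀ i, Measurable (X i)) →
          iIndepFun
            (fun i : {i : ℕ // 1 ≤ i} => X i) μ →
          (∀ i : ℕ, 1 ≤ i → IdentDistrib (X i) (X 1) μ μ) →
          Integrable (X 1) μ → (∫ ω, X 1 ω ∂μ) = 0 →
          (∃ n : ℕ, 1 ≤ n ∧ ∀ x : ℝ, 0 < x →
            μ {ω | (∑ k ∈ Finset.Icc 1 n, X k ω) / n > x} ≤
              ENNReal.ofReal (Real.exp (-(n * c₁ * x ^ 2))) ∧
            μ {ω | -((∑ k ∈ Finset.Icc 1 n, X k ω) / n) > x} ≤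
              ENNReal.ofReal (Real.exp (-(n * c₁ * x ^ 2)))) →
          ∀ n : ℕ, 1 ≤ n → ∀ x : ℝ, 0 < x →
            μ {ω | (∑ k ∈ Finset.Icc 1 n, X k ω) / n > x} ≤
              ENNReal.ofReal (Real.exp (-(n * c₂ * x ^ 2))) ∧
            μ {ω | -((∑ k ∈ Finset.Icc 1 n, X k ω) / n) > x} ≤
              ENNReal.ofReal (Real.exp (-(n * c₂ * x ^ 2)))) := by
  constructor
  · intro Ω m0 μ hprob X hmeas hindep hid hint1 h00
    haveI := hprob
    constructor
    · rintro ⟨c, hc, hbnd⟩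
      refine ⟨c / 2, by linarith, ?_⟩
      have h1 : ∀ x : ℝ, 0 < x →
          μ {ω | X 1 ω > x} ≤ ENNReal.ofReal (Real.exp (-(c * x ^ 2))) ∧
          μ {ω | -X 1 ω > x} ≤ ENNReal.ofReal (Real.exp (-(c * x ^ 2))) := by
        intro x hx
        obtain ⟨ha, hb⟩ := hbnd 1 le_rfl x hx
        have hset1 : {ω | (∑ k ∈ Finset.Icc 1 1, X k ω) / ((1 : ℕ) : ℝ) > x}
            = {ω | X 1 ω > x} := by
          ext ω; simp [Finset.Icc_self]
        have hset2 : {ω | -((∑ k ∈ Finset.Icc 1 1, X k ω) / ((1 : ℕ) : ℝ)) > x}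
            = {ω | -X 1 ω > x} := by
          ext ω; simp [Finset.Icc_self]
        have hexp : Real.exp (-(((1 : ℕ) : ℝ) * c * x ^ 2)) = Real.exp (-(c * x ^ 2)) := by
          norm_num
        rw [hset1, hexp] at ha
        rw [hset2, hexp] at hb
        exact ⟨ha, hb⟩
      have h2 := moment_from_tail μ (hmeas 1) hc h1
      exact lt_of_le_of_lt h2 (by norm_num)
    · rintro ⟨δ, hδ, hfin⟩
      have hIexp : Integrable (fun ω => Real.exp (δ * X 1 ω ^ 2)) μ :=
        integrable_of_lintegral_lt
          (Real.measurable_exp.comp (((hmeas 1).pow_const 2).const_mul δ))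
          (fun ω => Real.exp_nonneg _) hfin
      set M := ∫ ω, Real.exp (δ * X 1 ω ^ 2) ∂μ with hM
      set K := 1 / (2 * δ) + Real.log M / δ with hK
      have hM1 : 1 ≤ M := by
        calc (1 : ℝ) = ∫ _ω, (1 : ℝ) ∂μ := by simp
        _ ≤ M := integral_mono (integrable_const 1) hIexp
            (fun ω => Real.one_le_exp (by positivity))
      have hKpos : 0 < K := by
        rw [hK]
        have h1 : 0 < 1 / (2 * δ) := by positivity
        have h2 : 0 ≤ Real.log M / δ := div_nonneg (Real.log_nonneg hM1) hδ.le
        linarith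
      have hmgf : ∀ t : ℝ, Integrable (fun ω => Real.exp (t * X 1 ω)) μ ∧
          mgf (X 1) μ t ≤ Real.exp (K * t ^ 2) := by
        intro t
        have h := mgf_le_of_expsq μ (hmeas 1) hint1 h00 hδ hIexp t
        refine ⟨h.1, ?_⟩
        have h2 := h.2
        rw [← hM, ← hK] at h2
        exact h2
      refine ⟨1 / (4 * K), one_div_pos.2 (by linarith), ?_⟩
      intro n hn x hx
      exact both_bounds μ X hmeas hindep hid hKpos hmgf n hn x hx
  · intro c₁ hc₁
    have hA : 0 < 1 + 2 * Real.log 3 := by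
      have := Real.log_pos (by norm_num : (1 : ℝ) < 3)
      linarith
    have hKpos : 0 < (1 + 2 * Real.log 3) / c₁ := div_pos hA hc₁
    refine ⟨1 / (4 * ((1 + 2 * Real.log 3) / c₁)), one_div_pos.2 (by linarith), ?_⟩
    intro Ω m0 μ hprob X hmeas hindep hid hint1 h00 hex n hn x hx
    haveI := hprob
    obtain ⟨n₀, hn₀, hbnd⟩ := hex
    have hmgf := single_n_mgf μ X hmeas hindep hid hint1 h00 hc₁ hn₀ hbnd
    exact both_bounds μ X hmeas hindep hid hKpos hmgf n hn x hx
end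

section
/- Let (X_i)_{1≤i≤n} be a finite sequence of supermartingale differences adapted to a filtration (F_i). If for some constant K > 0 and all i ∈ {1,…,n}, almost surely E[exp(|X_i|) | F_{i-1}] ≤ K, then: (a) E[exp(t S_n)] ≤ exp(nK t²/(1−t)) for all t ∈ (0,1); (b) P[S_n/n > x] ≤ exp(−n(√(x+K) − √K)²) for all x > 0; and consequently (c) P[S_n/n > x] ≤ exp(−n x²/(K(1+√2)²)) if 0 < x ≤ K, and P[S_n/n > x] ≤ exp(−n x/(1+√2)²) if x > K. -/
open MeasureTheory ProbabilityTheory Filter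

lemma exp_mul_le_aux {t x : ℝ} (ht : 0 < t) (ht1 : t < 1) :
    Real.exp (t * x) ≤ 1 + t * x + t ^ 2 / (1 - t) * Real.exp |x| := by
  have h1t : (0:ℝ) < 1 - t := by linarith
  have hc : t ^ 2 ≤ t ^ 2 / (1 - t) := by
    rw [le_div_iff₀ h1t]; nlinarith
  have hc0 : 0 ≤ t ^ 2 / (1 - t) := le_trans (by positivity) hc
  have hde : ∀ y : ℝ, HasDerivAt (fun y : ℝ => Real.exp (t * y)) (t * Real.exp (t * y)) y := by
    intro y
    have := (Real.hasDerivAt_exp (t * y)).comp y ((hasDerivAt_id y).const_mul t)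
    simpa [Function.comp_def, mul_comm] using this
  rcases le_total 0 x with hx | hx
  · rw [abs_of_nonneg hx]
    set f : ℝ → ℝ := fun y => 1 + t * y + t ^ 2 / (1 - t) * Real.exp y - Real.exp (t * y) with hf
    have hderiv : ∀ y, HasDerivAt f (t + t ^ 2 / (1 - t) * Real.exp y - t * Real.exp (t * y)) y := by
      intro y
      have h2 : HasDerivAt (fun y : ℝ => 1 + t * y + t ^ 2 / (1 - t) * Real.exp y)
          (t + t ^ 2 / (1 - t) * Real.exp y) y := by
        have := (((hasDerivAt_id y).const_mul t).const_add 1).add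
          ((Real.hasDerivAt_exp y).const_mul (t ^ 2 / (1 - t)))
        simpa [Pi.add_def, mul_comm] using this
      simpa [Pi.sub_def] using h2.sub (hde y)
    have hmono : MonotoneOn f (Set.Ici 0) := by
      apply monotoneOn_of_deriv_nonneg (convex_Ici 0)
        (fun y _ => ((hderiv y).continuousAt).continuousWithinAt)
        (fun y _ => ((hderiv y).differentiableAt).differentiableWithinAt)
      intro y hy
      rw [(hderiv y).deriv]
      -- convexity of exp: exp (t*y) ≤ (1-t) + t * exp y
      have hconv : Real.exp (t * y) ≤ (1 - t) * Real.exp 0 + t * Real.exp y := by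
        have := convexOn_exp.2 (Set.mem_univ 0) (Set.mem_univ y) (by linarith : (0:ℝ) ≤ 1 - t)
          ht.le (by ring)
        simpa [smul_eq_mul] using this
      rw [Real.exp_zero] at hconv
      nlinarith [Real.exp_pos y, mul_le_mul_of_nonneg_right hc (Real.exp_pos y).le]
    have h0 : f 0 ≤ f x := hmono (by simp) (by simpa using hx) hx
    simp only [hf, mul_zero, Real.exp_zero] at h0 ⊢
    linarith
  · rw [abs_of_nonpos hx]
    set f : ℝ → ℝ := fun y => 1 + t * y + t ^ 2 / (1 - t) * Real.exp (-y) - Real.exp (t * y) with hf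
    have hderiv : ∀ y, HasDerivAt f (t - t ^ 2 / (1 - t) * Real.exp (-y) - t * Real.exp (t * y)) y := by
      intro y
      have hneg : HasDerivAt (fun y : ℝ => Real.exp (-y)) (-Real.exp (-y)) y := by
        have := (Real.hasDerivAt_exp (-y)).comp y (hasDerivAt_neg y)
        simpa [Function.comp_def] using this
      have h2 : HasDerivAt (fun y : ℝ => 1 + t * y + t ^ 2 / (1 - t) * Real.exp (-y))
          (t + t ^ 2 / (1 - t) * -Real.exp (-y)) y := by
        have := (((hasDerivAt_id y).const_mul t).const_add 1).add
          (hneg.const_mul (t ^ 2 / (1 - t)))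
        simpa [Pi.add_def, mul_comm] using this
      have := h2.sub (hde y)
      exact this.congr_deriv (by ring)
    have hmono : AntitoneOn f (Set.Iic 0) := by
      apply antitoneOn_of_deriv_nonpos (convex_Iic 0)
        (fun y _ => ((hderiv y).continuousAt).continuousWithinAt)
        (fun y _ => ((hderiv y).differentiableAt).differentiableWithinAt)
      intro y hy
      rw [interior_Iic] at hy
      rw [(hderiv y).deriv]
      have hy0 : y < 0 := hy
      -- exp (t*y) ≥ 1 + t*y and exp (-y) ≥ 1 - y ≥ -y
      have h1 : 1 + t * y ≤ Real.exp (t * y) := by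
        have := Real.add_one_le_exp (t * y); linarith
      have h2 : -y ≤ Real.exp (-y) := by
        have := Real.add_one_le_exp (-y); linarith
      -- need: t - c*exp(-y) - t*exp(ty) ≤ 0, c = t^2/(1-t)
      have key : -(t^2 * y) ≤ t ^ 2 / (1 - t) * Real.exp (-y) := by
        rw [div_mul_eq_mul_div, le_div_iff₀ h1t]
        nlinarith [mul_le_mul_of_nonneg_left h2 (sq_nonneg t),
          mul_nonneg (mul_nonneg (sq_nonneg t) (neg_nonneg.2 (le_of_lt hy0))) ht.le]
      nlinarith
    have h0 : f 0 ≤ f x := hmono (Set.mem_Iic.2 hx) (Set.mem_Iic.2 le_rfl) hx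
    simp only [hf, mul_zero, neg_zero, Real.exp_zero] at h0 ⊢
    linarith

lemma exp_mul_integrable {Ω : Type*} {m0 : MeasurableSpace Ω} {μ : Measure Ω} {X : Ω → ℝ}
    (hX : AEStronglyMeasurable X μ)
    (hXexp : Integrable (fun ω => Real.exp |X ω|) μ) {t : ℝ} (ht : 0 < t) (ht1 : t ≤ 1) :
    Integrable (fun ω => Real.exp (t * X ω)) μ := by
  refine hXexp.mono (Real.continuous_exp.comp_aestronglyMeasurable (hX.const_mul t)) ?_
  filter_upwards with ω
  rw [Real.norm_eq_abs, Real.norm_eq_abs, Real.abs_exp, Real.abs_exp]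
  apply Real.exp_le_exp.2
  calc t * X ω ≤ |t * X ω| := le_abs_self _
    _ = t * |X ω| := by rw [abs_mul, abs_of_pos ht]
    _ ≤ 1 * |X ω| := by apply mul_le_mul_of_nonneg_right ht1 (abs_nonneg _)
    _ = |X ω| := one_mul _

lemma bern_condexp_le {Ω : Type*} {m0 : MeasurableSpace Ω} (μ : Measure Ω) [IsProbabilityMeasure μ]
    {m : MeasurableSpace Ω} (hm : m ≤ m0) {X : Ω → ℝ} (hX : Integrable X μ)
    (hXexp : Integrable (fun ω => Real.exp |X ω|) μ)
    (hmg : ∀ᵐ ω ∂μ, (μ[X|m]) ω ≤ 0) {K : ℝ}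
    (hcK : ∀ᵐ ω ∂μ, (μ[fun ω => Real.exp |X ω| | m]) ω ≤ K)
    {t : ℝ} (ht : 0 < t) (ht1 : t < 1) :
    ∀ᵐ ω ∂μ, (μ[fun ω => Real.exp (t * X ω)|m]) ω ≤ 1 + K * (t ^ 2 / (1 - t)) := by
  have h1t : (0:ℝ) < 1 - t := by linarith
  set c : ℝ := t ^ 2 / (1 - t) with hc
  have hc0 : 0 ≤ c := by positivity
  set E : Ω → ℝ := fun ω => Real.exp |X ω| with hE
  set G : Ω → ℝ := (fun _ => (1:ℝ)) + (t • X + c • E) with hG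
  have hGapp : ∀ ω, G ω = 1 + t * X ω + c * E ω := by
    intro ω; simp [hG, Pi.add_apply, Pi.smul_apply, smul_eq_mul]; ring
  have hintL : Integrable (fun ω => Real.exp (t * X ω)) μ :=
    exp_mul_integrable hX.1 hXexp ht ht1.le
  have hintG : Integrable G μ :=
    (integrable_const (1:ℝ)).add ((hX.smul t).add (hXexp.smul c))
  have hmono := condExp_mono (μ := μ) (m := m) hintL hintG
    (ae_of_all _ (fun ω => by rw [hGapp ω]; exact exp_mul_le_aux ht ht1))
  have hadd1 := condExp_add (μ := μ) (m := m) (integrable_const (1:ℝ)) ((hX.smul t).add (hXexp.smul c))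
  have hadd2 := condExp_add (μ := μ) (m := m) (hX.smul t) (hXexp.smul c)
  have hs1 := condExp_smul (μ := μ) (m := m) t X
  have hs2 := condExp_smul (μ := μ) (m := m) c E
  have hcst : μ[(fun _ : Ω => (1:ℝ))|m] = fun _ => (1:ℝ) := condExp_const hm 1
  filter_upwards [hmono, hadd1, hadd2, hs1, hs2, hmg, hcK] with ω h1 h2 h3 h4 h5 h6 h7
  have hGω : (μ[G|m]) ω = 1 + t * (μ[X|m]) ω + c * (μ[E|m]) ω := by
    rw [hG, h2, Pi.add_apply, h3, Pi.add_apply, h4, h5, hcst, Pi.smul_apply, Pi.smul_apply,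
      smul_eq_mul, smul_eq_mul]
    ring
  have : (μ[fun ω => Real.exp (t * X ω)|m]) ω ≤ 1 + t * (μ[X|m]) ω + c * (μ[E|m]) ω := by
    rw [← hGω]; exact h1
  have h8 : t * (μ[X|m]) ω ≤ 0 := mul_nonpos_of_nonneg_of_nonpos ht.le h6
  have h9 : c * (μ[E|m]) ω ≤ c * K := mul_le_mul_of_nonneg_left h7 hc0
  calc (μ[fun ω => Real.exp (t * X ω)|m]) ω ≤ 1 + t * (μ[X|m]) ω + c * (μ[E|m]) ω := this
    _ ≤ 1 + 0 + c * K := by linarith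
    _ = 1 + K * c := by ring

lemma tower_step {Ω : Type*} {m0 : MeasurableSpace Ω} (μ : Measure Ω) [IsProbabilityMeasure μ]
    {m : MeasurableSpace Ω} (hm : m ≤ m0)
    {Z W : Ω → ℝ} (hZm : StronglyMeasurable[m] Z) (hZ0 : ∀ ω, 0 ≤ Z ω) (hZint : Integrable Z μ)
    (hW0 : ∀ ω, 0 ≤ W ω) (hWint : Integrable W μ) {c : ℝ} (hc0 : 0 ≤ c)
    (hcond : ∀ᵐ ω ∂μ, (μ[W|m]) ω ≤ c) :
    Integrable (fun ω => Z ω * W ω) μ ∧ ∫ ω, Z ω * W ω ∂μ ≤ c * ∫ ω, Z ω ∂μ := by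
  set Zm : ℕ → Ω → ℝ := fun j ω => min (Z ω) j with hZmdef
  have hZmsm : ∀ j, StronglyMeasurable[m] (Zm j) := fun j => hZm.inf stronglyMeasurable_const
  have hZm0 : ∀ j ω, 0 ≤ Zm j ω := fun j ω => le_min (hZ0 ω) (Nat.cast_nonneg j)
  have hZmle : ∀ j ω, Zm j ω ≤ Z ω := fun j ω => min_le_left _ _
  have hZmint : ∀ j, Integrable (Zm j) μ := by
    intro j
    refine hZint.mono ((hZmsm j).mono hm).aestronglyMeasurable ?_
    filter_upwards with ω
    rw [Real.norm_eq_abs, Real.norm_eq_abs, abs_of_nonneg (hZm0 j ω), abs_of_nonneg (hZ0 ω)]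
    exact hZmle j ω
  have hZmWint : ∀ j, Integrable (fun ω => Zm j ω * W ω) μ := by
    intro j
    refine hWint.bdd_mul ((hZmsm j).mono hm).aestronglyMeasurable (c := j) (ae_of_all _ fun ω => ?_)
    rw [Real.norm_eq_abs, abs_of_nonneg (hZm0 j ω)]
    exact min_le_right _ _
  have key : ∀ j, ∫ ω, Zm j ω * W ω ∂μ ≤ c * ∫ ω, Z ω ∂μ := by
    intro j
    have hpull : μ[Zm j * W|m] =ᵐ[μ] Zm j * μ[W|m] :=
      condExp_mul_of_stronglyMeasurable_left (hZmsm j) (hZmWint j) hWint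
    have h1 : ∫ ω, Zm j ω * W ω ∂μ = ∫ ω, (Zm j ω) * (μ[W|m]) ω ∂μ := by
      calc ∫ ω, Zm j ω * W ω ∂μ = ∫ ω, (μ[Zm j * W|m]) ω ∂μ :=
            (integral_condExp hm (f := Zm j * W)).symm
        _ = ∫ ω, (Zm j * μ[W|m]) ω ∂μ := integral_congr_ae hpull
        _ = ∫ ω, (Zm j ω) * (μ[W|m]) ω ∂μ := by simp only [Pi.mul_apply]
    rw [h1]
    have hint1 : Integrable (fun ω => Zm j ω * (μ[W|m]) ω) μ :=
      (integrable_condExp (f := Zm j * W)).congr hpull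
    have hint2 : Integrable (fun ω => c * Zm j ω) μ := (hZmint j).const_mul c
    calc ∫ ω, Zm j ω * (μ[W|m]) ω ∂μ ≤ ∫ ω, c * Zm j ω ∂μ := by
          refine integral_mono_ae hint1 hint2 ?_
          filter_upwards [hcond] with ω hω
          calc Zm j ω * (μ[W|m]) ω ≤ Zm j ω * c := mul_le_mul_of_nonneg_left hω (hZm0 j ω)
            _ = c * Zm j ω := mul_comm _ _
      _ = c * ∫ ω, Zm j ω ∂μ := integral_const_mul c _
      _ ≤ c * ∫ ω, Z ω ∂μ := by
          apply mul_le_mul_of_nonneg_left _ hc0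
          exact integral_mono (hZmint j) hZint (fun ω => hZmle j ω)
  -- monotone convergence
  have htend : Tendsto (fun j => ∫⁻ ω, ENNReal.ofReal (Zm j ω * W ω) ∂μ) atTop
      (nhds (∫⁻ ω, ENNReal.ofReal (Z ω * W ω) ∂μ)) := by
    apply lintegral_tendsto_of_tendsto_of_monotone
    · intro j
      exact (((hZmsm j).mono hm).aestronglyMeasurable.aemeasurable.mul
        hWint.1.aemeasurable).ennreal_ofReal
    · filter_upwards with ω j k hjk
      apply ENNReal.ofReal_le_ofReal
      apply mul_le_mul_of_nonneg_right _ (hW0 ω)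
      exact min_le_min le_rfl (Nat.cast_le.2 hjk)
    · filter_upwards with ω
      obtain ⟨N, hN⟩ := exists_nat_ge (Z ω)
      apply tendsto_atTop_of_eventually_const (i₀ := N)
      intro j hj
      congr 1
      rw [hZmdef]
      simp only []
      rw [min_eq_left (hN.trans (Nat.cast_le.2 hj))]
  have hlim : ∫⁻ ω, ENNReal.ofReal (Z ω * W ω) ∂μ ≤ ENNReal.ofReal (c * ∫ ω, Z ω ∂μ) := by
    refine le_of_tendsto htend (Filter.Eventually.of_forall fun j => ?_)
    rw [← ofReal_integral_eq_lintegral_ofReal (hZmWint j)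
      (Filter.Eventually.of_forall fun ω => mul_nonneg (hZm0 j ω) (hW0 ω))]
    exact ENNReal.ofReal_le_ofReal (key j)
  have hZWint : Integrable (fun ω => Z ω * W ω) μ := by
    constructor
    · exact ((hZm.mono hm).aestronglyMeasurable.mul hWint.1)
    · rw [hasFiniteIntegral_iff_ofReal (Filter.Eventually.of_forall
        fun ω => mul_nonneg (hZ0 ω) (hW0 ω))]
      exact lt_of_le_of_lt hlim ENNReal.ofReal_lt_top
  refine ⟨hZWint, ?_⟩
  have := ofReal_integral_eq_lintegral_ofReal hZWint
    (Filter.Eventually.of_forall fun ω => mul_nonneg (hZ0 ω) (hW0 ω))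
  rw [← this] at hlim
  exact (ENNReal.ofReal_le_ofReal_iff (mul_nonneg hc0 (integral_nonneg hZ0))).1 hlim

-- part (a) as a lemma
lemma bern_parta {Ω : Type*} {m0 : MeasurableSpace Ω} (μ : Measure Ω) [IsProbabilityMeasure μ]
    (ℱ : Filtration ℕ m0) (n : ℕ) (X : ℕ → Ω → ℝ) (K : ℝ) (hK : 0 < K)
    (hadp : ∀ i ∈ Finset.Icc 1 n, StronglyMeasurable[ℱ i] (X i))
    (hint : ∀ i ∈ Finset.Icc 1 n, Integrable (X i) μ)
    (hsmg : ∀ i ∈ Finset.Icc 1 n, ∀ᵐ ω ∂μ, (μ[X i|ℱ (i - 1)]) ω ≤ 0)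
    (hexpint : ∀ i ∈ Finset.Icc 1 n, Integrable (fun ω => Real.exp |X i ω|) μ)
    (hcond : ∀ i ∈ Finset.Icc 1 n,
      ∀ᵐ ω ∂μ, (μ[fun ω' => Real.exp (|X i ω'|)|ℱ (i - 1)]) ω ≤ K)
    {t : ℝ} (ht0 : 0 < t) (ht1 : t < 1) :
    Integrable (fun ω => Real.exp (t * ∑ i ∈ Finset.Icc 1 n, X i ω)) μ ∧
    ∫ ω, Real.exp (t * ∑ i ∈ Finset.Icc 1 n, X i ω) ∂μ ≤ (1 + K * (t ^ 2 / (1 - t))) ^ n := by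
  have h1t : (0:ℝ) < 1 - t := by linarith
  set c : ℝ := 1 + K * (t ^ 2 / (1 - t)) with hcdef
  have hc1 : (1:ℝ) ≤ c := by
    have h : 0 ≤ t ^ 2 / (1 - t) := by positivity
    rw [hcdef]
    nlinarith [mul_nonneg hK.le h]
  have hc0 : (0:ℝ) ≤ c := by linarith
  have main : ∀ k, k ≤ n →
      Integrable (fun ω => Real.exp (t * ∑ i ∈ Finset.Icc 1 k, X i ω)) μ ∧
      ∫ ω, Real.exp (t * ∑ i ∈ Finset.Icc 1 k, X i ω) ∂μ ≤ c ^ k := by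
    intro k
    induction k with
    | zero => intro _; simp
    | succ k ih =>
      intro hk1
      obtain ⟨ihint, ihle⟩ := ih (le_trans (Nat.le_succ k) hk1)
      have hmem : k + 1 ∈ Finset.Icc 1 n :=
        Finset.mem_Icc.2 ⟨Nat.succ_le_succ (Nat.zero_le k), hk1⟩
      have hsum : ∀ ω, ∑ i ∈ Finset.Icc 1 (k+1), X i ω
          = (∑ i ∈ Finset.Icc 1 k, X i ω) + X (k+1) ω := by
        intro ω; rw [Finset.sum_Icc_succ_top (Nat.succ_le_succ (Nat.zero_le k))]
      have hZm : StronglyMeasurable[ℱ k] (fun ω => Real.exp (t * ∑ i ∈ Finset.Icc 1 k, X i ω)) := by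
        apply Real.continuous_exp.comp_stronglyMeasurable
        apply StronglyMeasurable.const_mul
        apply Finset.stronglyMeasurable_fun_sum
        intro i hi
        have hik : i ≤ k := (Finset.mem_Icc.1 hi).2
        exact (hadp i (Finset.mem_Icc.2 ⟨(Finset.mem_Icc.1 hi).1, hik.trans (hk1.trans' (Nat.le_succ k))⟩)).mono (ℱ.mono hik)
      have hWint : Integrable (fun ω => Real.exp (t * X (k+1) ω)) μ :=
        exp_mul_integrable (hint _ hmem).1 (hexpint _ hmem) ht0 ht1.le
      have hmg' : ∀ᵐ ω ∂μ, (μ[X (k+1)|ℱ k]) ω ≤ 0 := by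
        have := hsmg _ hmem; simpa only [Nat.add_sub_cancel] using this
      have hcK' : ∀ᵐ ω ∂μ, (μ[fun ω => Real.exp (|X (k+1) ω|)|ℱ k]) ω ≤ K := by
        have := hcond _ hmem; simpa only [Nat.add_sub_cancel] using this
      have hcondW := bern_condexp_le μ (ℱ.le k) (hint _ hmem) (hexpint _ hmem) hmg' hcK' ht0 ht1
      have step := tower_step μ (ℱ.le k) hZm (fun ω => (Real.exp_pos _).le) ihint
        (fun ω => (Real.exp_pos _).le) hWint hc0 hcondW
      have hfun : (fun ω => Real.exp (t * ∑ i ∈ Finset.Icc 1 (k+1), X i ω))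
          = fun ω => Real.exp (t * ∑ i ∈ Finset.Icc 1 k, X i ω) * Real.exp (t * X (k+1) ω) := by
        funext ω; rw [hsum ω, mul_add, Real.exp_add]
      constructor
      · rw [hfun]; exact step.1
      · rw [hfun]
        calc ∫ ω, Real.exp (t * ∑ i ∈ Finset.Icc 1 k, X i ω) * Real.exp (t * X (k+1) ω) ∂μ
            ≤ c * ∫ ω, Real.exp (t * ∑ i ∈ Finset.Icc 1 k, X i ω) ∂μ := step.2
          _ ≤ c * c ^ k := mul_le_mul_of_nonneg_left ihle hc0
          _ = c ^ (k+1) := by ring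
  exact main n le_rfl

/-- Theorem 2.1: exponential inequalities for supermartingale differences under the
conditional moment condition `E[exp |X_i| | F_{i-1}] ≤ K`. -/
theorem supermartingale_bernstein_inequality
    {Ω : Type*} {m0 : MeasurableSpace Ω} (μ : Measure Ω) [IsProbabilityMeasure μ]
    (ℱ : Filtration ℕ m0) (n : ℕ) (hn : 1 ≤ n) (X : ℕ → Ω → ℝ) (K : ℝ) (hK : 0 < K)
    (hadp : ∀ i ∈ Finset.Icc 1 n, StronglyMeasurable[ℱ i] (X i))
    (hint : ∀ i ∈ Finset.Icc 1 n, Integrable (X i) μ)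
    (hsmg : ∀ i ∈ Finset.Icc 1 n, ∀ᵐ ω ∂μ, (μ[X i|ℱ (i - 1)]) ω ≤ 0)
    (hexpint : ∀ i ∈ Finset.Icc 1 n, Integrable (fun ω => Real.exp |X i ω|) μ)
    (hcond : ∀ i ∈ Finset.Icc 1 n,
      ∀ᵐ ω ∂μ, (μ[fun ω' => Real.exp (|X i ω'|)|ℱ (i - 1)]) ω ≤ K) :
    (∀ t : ℝ, t ∈ Set.Ioo (0 : ℝ) 1 →
      (∫⁻ ω, ENNReal.ofReal (Real.exp (t * ∑ i ∈ Finset.Icc 1 n, X i ω)) ∂μ) ≤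
        ENNReal.ofReal (Real.exp (n * K * t ^ 2 / (1 - t)))) ∧
    (∀ x : ℝ, 0 < x →
      μ {ω | (∑ i ∈ Finset.Icc 1 n, X i ω) / n > x} ≤
        ENNReal.ofReal (Real.exp (-(n * (Real.sqrt (x + K) - Real.sqrt K) ^ 2)))) ∧
    (∀ x : ℝ, 0 < x → x ≤ K →
      μ {ω | (∑ i ∈ Finset.Icc 1 n, X i ω) / n > x} ≤
        ENNReal.ofReal (Real.exp (-(n * x ^ 2 / (K * (1 + Real.sqrt 2) ^ 2))))) ∧
    (∀ x : ℝ, K < x →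
      μ {ω | (∑ i ∈ Finset.Icc 1 n, X i ω) / n > x} ≤
        ENNReal.ofReal (Real.exp (-(n * x / (1 + Real.sqrt 2) ^ 2)))) := by
  have hn0 : (0:ℝ) < n := by exact_mod_cast Nat.lt_of_lt_of_le Nat.zero_lt_one hn
  -- part (a)
  have parta : ∀ t : ℝ, t ∈ Set.Ioo (0 : ℝ) 1 →
      (∫⁻ ω, ENNReal.ofReal (Real.exp (t * ∑ i ∈ Finset.Icc 1 n, X i ω)) ∂μ) ≤
        ENNReal.ofReal (Real.exp (n * K * t ^ 2 / (1 - t))) := by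
    intro t ht
    obtain ⟨ht0, ht1⟩ := ht
    have h1t : (0:ℝ) < 1 - t := by linarith
    obtain ⟨hintn, hlen⟩ := bern_parta μ ℱ n X K hK hadp hint hsmg hexpint hcond ht0 ht1
    rw [← ofReal_integral_eq_lintegral_ofReal hintn
      (Filter.Eventually.of_forall fun ω => (Real.exp_pos _).le)]
    apply ENNReal.ofReal_le_ofReal
    refine hlen.trans ?_
    have hb : 1 + K * (t ^ 2 / (1 - t)) ≤ Real.exp (K * (t ^ 2 / (1 - t))) := by
      have := Real.add_one_le_exp (K * (t ^ 2 / (1 - t))); linarith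
    have h0 : (0:ℝ) ≤ 1 + K * (t ^ 2 / (1 - t)) := by
      have : 0 ≤ t ^ 2 / (1 - t) := by positivity
      nlinarith [mul_nonneg hK.le this]
    calc (1 + K * (t ^ 2 / (1 - t))) ^ n ≤ (Real.exp (K * (t ^ 2 / (1 - t)))) ^ n :=
          pow_le_pow_left₀ h0 hb n
      _ = Real.exp (n * (K * (t ^ 2 / (1 - t)))) := (Real.exp_nat_mul _ n).symm
      _ = Real.exp (n * K * t ^ 2 / (1 - t)) := by ring_nf
  -- measurability of the sum
  have hSm : Measurable (fun ω => ∑ i ∈ Finset.Icc 1 n, X i ω) := by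
    apply Finset.measurable_sum
    intro i hi
    exact ((hadp i hi).mono (ℱ.le i)).measurable
  -- part (b)
  have partb : ∀ x : ℝ, 0 < x →
      μ {ω | (∑ i ∈ Finset.Icc 1 n, X i ω) / n > x} ≤
        ENNReal.ofReal (Real.exp (-(n * (Real.sqrt (x + K) - Real.sqrt K) ^ 2))) := by
    intro x hx
    set a : ℝ := Real.sqrt K with hadef
    set b : ℝ := Real.sqrt (x + K) with hbdef
    have ha0 : 0 < a := Real.sqrt_pos.2 hK
    have hb0 : 0 < b := Real.sqrt_pos.2 (by linarith)
    have hab : a < b := Real.sqrt_lt_sqrt hK.le (by linarith)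
    have ha2 : a ^ 2 = K := Real.sq_sqrt hK.le
    have hb2 : b ^ 2 = x + K := Real.sq_sqrt (by linarith)
    set t : ℝ := 1 - a / b with htdef
    have ht0 : 0 < t := by
      rw [htdef]; rw [sub_pos, div_lt_one hb0]; exact hab
    have ht1 : t < 1 := by
      rw [htdef]; have : 0 < a / b := div_pos ha0 hb0; linarith
    have h1t : 1 - t = a / b := by rw [htdef]; ring
    -- Markov
    have hsub : {ω | (∑ i ∈ Finset.Icc 1 n, X i ω) / n > x} ⊆
        {ω | ENNReal.ofReal (Real.exp (t * (n * x))) ≤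
          ENNReal.ofReal (Real.exp (t * ∑ i ∈ Finset.Icc 1 n, X i ω))} := by
      intro ω hω
      simp only [Set.mem_setOf_eq] at hω ⊢
      apply ENNReal.ofReal_le_ofReal
      apply Real.exp_le_exp.2
      apply mul_le_mul_of_nonneg_left _ ht0.le
      rw [gt_iff_lt, lt_div_iff₀ hn0] at hω
      linarith [hω]
    have hmeas : AEMeasurable (fun ω => ENNReal.ofReal
        (Real.exp (t * ∑ i ∈ Finset.Icc 1 n, X i ω))) μ :=
      ((Real.measurable_exp.comp (hSm.const_mul t)).ennreal_ofReal).aemeasurable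
    have hmarkov := meas_ge_le_lintegral_div hmeas
      (ε := ENNReal.ofReal (Real.exp (t * (n * x))))
      (by simp [Real.exp_pos]) ENNReal.ofReal_ne_top
    have keyeq : n * K * t ^ 2 / (1 - t) - t * (n * x) = -(n * (b - a) ^ 2) := by
      have hxba : x = b ^ 2 - a ^ 2 := by rw [ha2, hb2]; ring
      rw [h1t, htdef, ← ha2, hxba]
      field_simp
      ring
    calc μ {ω | (∑ i ∈ Finset.Icc 1 n, X i ω) / n > x}
        ≤ μ {ω | ENNReal.ofReal (Real.exp (t * (n * x))) ≤
            ENNReal.ofReal (Real.exp (t * ∑ i ∈ Finset.Icc 1 n, X i ω))} := measure_mono hsub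
      _ ≤ (∫⁻ ω, ENNReal.ofReal (Real.exp (t * ∑ i ∈ Finset.Icc 1 n, X i ω)) ∂μ) /
            ENNReal.ofReal (Real.exp (t * (n * x))) := hmarkov
      _ ≤ ENNReal.ofReal (Real.exp (n * K * t ^ 2 / (1 - t))) /
            ENNReal.ofReal (Real.exp (t * (n * x))) :=
          ENNReal.div_le_div_right (parta t ⟨ht0, ht1⟩) _
      _ = ENNReal.ofReal (Real.exp (n * K * t ^ 2 / (1 - t) - t * (n * x))) := by
          rw [Real.exp_sub, ENNReal.ofReal_div_of_pos (Real.exp_pos _)]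
      _ = ENNReal.ofReal (Real.exp (-(n * (b - a) ^ 2))) := by rw [keyeq]
  -- parts (c) and (d)
  refine ⟨parta, partb, ?_, ?_⟩
  · intro x hx hxK
    refine (partb x hx).trans (ENNReal.ofReal_le_ofReal (Real.exp_le_exp.2 ?_))
    set a : ℝ := Real.sqrt K with hadef
    set b : ℝ := Real.sqrt (x + K) with hbdef
    have ha0 : 0 < a := Real.sqrt_pos.2 hK
    have hb0 : 0 < b := Real.sqrt_pos.2 (by linarith)
    have ha2 : a ^ 2 = K := Real.sq_sqrt hK.le
    have hb2 : b ^ 2 = x + K := Real.sq_sqrt (by linarith)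
    have hab : a < b := Real.sqrt_lt_sqrt hK.le (by linarith)
    have hs0 : (0:ℝ) ≤ Real.sqrt 2 := Real.sqrt_nonneg 2
    have hs2 : Real.sqrt 2 ^ 2 = 2 := Real.sq_sqrt (by norm_num)
    have hble : b ≤ Real.sqrt 2 * a := by
      rw [hbdef, hadef, ← Real.sqrt_mul (by norm_num : (0:ℝ) ≤ 2)]
      exact Real.sqrt_le_sqrt (by linarith)
    have hxeq : (b - a) * (b + a) = x := by nlinarith [ha2, hb2]
    have hpos : (0:ℝ) < K * (1 + Real.sqrt 2) ^ 2 := by positivity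
    have key : x ^ 2 / (K * (1 + Real.sqrt 2) ^ 2) ≤ (b - a) ^ 2 := by
      rw [div_le_iff₀ hpos]
      have h1 : b + a ≤ (1 + Real.sqrt 2) * a := by linarith
      have h2 : (b + a) ^ 2 ≤ ((1 + Real.sqrt 2) * a) ^ 2 :=
        pow_le_pow_left₀ (by positivity) h1 2
      have h4 : (b - a) ^ 2 * (b + a) ^ 2 ≤ (b - a) ^ 2 * ((1 + Real.sqrt 2) * a) ^ 2 :=
        mul_le_mul_of_nonneg_left h2 (sq_nonneg _)
      calc x ^ 2 = (b - a) ^ 2 * (b + a) ^ 2 := by rw [← hxeq]; ring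
        _ ≤ (b - a) ^ 2 * ((1 + Real.sqrt 2) * a) ^ 2 := h4
        _ = (b - a) ^ 2 * (K * (1 + Real.sqrt 2) ^ 2) := by rw [mul_pow, ha2]; ring
    have : n * x ^ 2 / (K * (1 + Real.sqrt 2) ^ 2) ≤ n * (b - a) ^ 2 := by
      rw [mul_div_assoc]
      exact mul_le_mul_of_nonneg_left key hn0.le
    linarith
  · intro x hxK
    have hx : 0 < x := hK.trans hxK
    refine (partb x hx).trans (ENNReal.ofReal_le_ofReal (Real.exp_le_exp.2 ?_))
    set a : ℝ := Real.sqrt K with hadef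
    set b : ℝ := Real.sqrt (x + K) with hbdef
    set u : ℝ := Real.sqrt x with hudef
    have ha0 : 0 < a := Real.sqrt_pos.2 hK
    have hb0 : 0 < b := Real.sqrt_pos.2 (by linarith)
    have hu0 : 0 < u := Real.sqrt_pos.2 hx
    have ha2 : a ^ 2 = K := Real.sq_sqrt hK.le
    have hb2 : b ^ 2 = x + K := Real.sq_sqrt (by linarith)
    have hu2 : u ^ 2 = x := Real.sq_sqrt hx.le
    have hab : a < b := Real.sqrt_lt_sqrt hK.le (by linarith)
    have hs0 : (0:ℝ) ≤ Real.sqrt 2 := Real.sqrt_nonneg 2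
    have hs2 : Real.sqrt 2 ^ 2 = 2 := Real.sq_sqrt (by norm_num)
    have hau : a ≤ u := Real.sqrt_le_sqrt hxK.le
    have hble : b ≤ Real.sqrt 2 * u := by
      rw [hbdef, hudef, ← Real.sqrt_mul (by norm_num : (0:ℝ) ≤ 2)]
      exact Real.sqrt_le_sqrt (by linarith)
    have hxeq : (b - a) * (b + a) = x := by nlinarith [ha2, hb2]
    have hpos : (0:ℝ) < (1 + Real.sqrt 2) ^ 2 := by positivity
    have key : x / (1 + Real.sqrt 2) ^ 2 ≤ (b - a) ^ 2 := by
      rw [div_le_iff₀ hpos]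
      have h1 : b + a ≤ (1 + Real.sqrt 2) * u := by linarith
      have h2 : (b + a) ^ 2 ≤ ((1 + Real.sqrt 2) * u) ^ 2 :=
        pow_le_pow_left₀ (by positivity) h1 2
      have h4 : (b - a) ^ 2 * (b + a) ^ 2 ≤ (b - a) ^ 2 * ((1 + Real.sqrt 2) * u) ^ 2 :=
        mul_le_mul_of_nonneg_left h2 (sq_nonneg _)
      have h6 : x * x ≤ (b - a) ^ 2 * (1 + Real.sqrt 2) ^ 2 * x := by
        calc x * x = (b - a) ^ 2 * (b + a) ^ 2 := by rw [← hxeq]; ring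
          _ ≤ (b - a) ^ 2 * ((1 + Real.sqrt 2) * u) ^ 2 := h4
          _ = (b - a) ^ 2 * (1 + Real.sqrt 2) ^ 2 * x := by rw [mul_pow, hu2]; ring
      exact (mul_le_mul_iff_of_pos_right hx).1 h6
    have : n * x / (1 + Real.sqrt 2) ^ 2 ≤ n * (b - a) ^ 2 := by
      rw [mul_div_assoc]
      exact mul_le_mul_of_nonneg_left key hn0.le
    linarith
end

section
/- Let (X_k)_{1≤k≤n} be independent and identically distributed real random variables with S_n = X_1 + ⋯ + X_n. If P[S_n/n > x] ≤ exp(−n c x) for some n > 1, c > 0 and all x ≥ x_1 > 0, then for every δ ∈ (0, c), E[exp(δ X_1^+)] ≤ K, where X_1^+ = max(X_1, 0) and K = exp(δ x_1) + (δ/(c−δ)) exp(−(c−δ) x_1). -/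
open MeasureTheory ProbabilityTheory Filter Set

/-- Converse part of Theorem 2.1: a one-sided exponential deviation bound for i.i.d.
partial sums implies an explicit exponential moment bound for the positive part of `X 1`. -/
theorem iid_exponential_moment_positive_part
    {Ω : Type*} {m0 : MeasurableSpace Ω} (μ : Measure Ω) [IsProbabilityMeasure μ]
    (n : ℕ) (hn : 1 < n) (X : ℕ → Ω → ℝ) (c x₁ : ℝ) (hc : 0 < c) (hx₁ : 0 < x₁)
    (hmeas : ∀ i, Measurable (X i))
    (hindep : iIndepFun (m := fun _ : {i : ℕ // i ∈ Finset.Icc 1 n} => (inferInstance : MeasurableSpace ℝ))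
      (fun i : {i : ℕ // i ∈ Finset.Icc 1 n} => X i) μ)
    (hident : ∀ i ∈ Finset.Icc 1 n, IdentDistrib (X i) (X 1) μ μ)
    (hdev : ∀ x : ℝ, x₁ ≤ x →
      μ {ω | (∑ k ∈ Finset.Icc 1 n, X k ω) / n > x} ≤ ENNReal.ofReal (Real.exp (-(n * c * x)))) :
    ∀ δ : ℝ, 0 < δ → δ < c →
      (∫⁻ ω, ENNReal.ofReal (Real.exp (δ * max (X 1 ω) 0)) ∂μ) ≤
        ENNReal.ofReal (Real.exp (δ * x₁) + δ / (c - δ) * Real.exp (-((c - δ) * x₁))) := by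
  intro δ hδ0 hδc
  have hn0 : (0:ℝ) < n := by exact_mod_cast Nat.lt_of_lt_of_le Nat.zero_lt_one hn.le
  have h1mem : (1:ℕ) ∈ Finset.Icc 1 n := by
    simp only [Finset.mem_Icc]; omega
  -- Step 1: tail bound for X 1
  have tail : ∀ x : ℝ, x₁ ≤ x →
      μ (X 1 ⁻¹' Set.Ioi x) ≤ ENNReal.ofReal (Real.exp (-(c * x))) := by
    intro x hx
    have hprod : μ (⋂ i : {i : ℕ // i ∈ Finset.Icc 1 n}, X i ⁻¹' Set.Ioi x)
        = ∏ i : {i : ℕ // i ∈ Finset.Icc 1 n}, μ (X (i : ℕ) ⁻¹' Set.Ioi x) :=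
      hindep.meas_iInter fun i => ⟨Set.Ioi x, measurableSet_Ioi, rfl⟩
    have hpow : μ (⋂ i : {i : ℕ // i ∈ Finset.Icc 1 n}, X i ⁻¹' Set.Ioi x)
        = μ (X 1 ⁻¹' Set.Ioi x) ^ n := by
      rw [hprod]
      have : ∀ i : {i : ℕ // i ∈ Finset.Icc 1 n},
          μ (X (i : ℕ) ⁻¹' Set.Ioi x) = μ (X 1 ⁻¹' Set.Ioi x) := fun i =>
        (hident i i.2).measure_mem_eq measurableSet_Ioi
      rw [Finset.prod_congr rfl fun i _ => this i, Finset.prod_const]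
      congr 1
      simp [Finset.card_univ, Fintype.card_coe]
    have hsub : (⋂ i : {i : ℕ // i ∈ Finset.Icc 1 n}, X i ⁻¹' Set.Ioi x)
        ⊆ {ω | (∑ k ∈ Finset.Icc 1 n, X k ω) / n > x} := by
      intro ω hω
      simp only [Set.mem_iInter, Set.mem_preimage, Set.mem_Ioi] at hω
      have hsum : (n : ℝ) * x < ∑ k ∈ Finset.Icc 1 n, X k ω := by
        have h := Finset.sum_lt_sum_of_nonempty ⟨1, h1mem⟩
          (f := fun _ => x) (g := fun k => X k ω) (fun k hk => hω ⟨k, hk⟩)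
        simpa [Finset.sum_const, Nat.card_Icc, nsmul_eq_mul] using h
      exact (lt_div_iff₀ hn0).mpr (by linarith)
    have key : μ (X 1 ⁻¹' Set.Ioi x) ^ n ≤ ENNReal.ofReal (Real.exp (-(c * x))) ^ n := by
      rw [← hpow]
      calc μ (⋂ i : {i : ℕ // i ∈ Finset.Icc 1 n}, X i ⁻¹' Set.Ioi x)
          ≤ μ {ω | (∑ k ∈ Finset.Icc 1 n, X k ω) / n > x} := measure_mono hsub
        _ ≤ ENNReal.ofReal (Real.exp (-(n * c * x))) := hdev x hx
        _ = ENNReal.ofReal (Real.exp (-(c * x))) ^ n := by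
            rw [← ENNReal.ofReal_pow (Real.exp_nonneg _), ← Real.exp_nat_mul]
            ring_nf
    by_contra h
    push_neg at h
    exact absurd key (not_le.mpr (ENNReal.pow_lt_pow_left (by omega) h))
  -- Step 2: the fundamental theorem of calculus for the weight
  have keyint : ∀ a : ℝ, (∫ t in (0:ℝ)..a, δ * Real.exp (δ * t)) = Real.exp (δ * a) - 1 := by
    intro a
    rw [intervalIntegral.integral_const_mul, intervalIntegral.integral_comp_mul_left
      Real.exp hδ0.ne', integral_exp]
    rw [smul_eq_mul, mul_zero, Real.exp_zero]
    field_simp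
  have hcont : Continuous fun t => δ * Real.exp (δ * t) := by continuity
  set f : Ω → ℝ := fun ω => max (X 1 ω) 0 with hf
  have f_mble : Measurable f := (hmeas 1).max measurable_const
  -- decomposition of the exponential
  have hdecomp : ∀ ω, ENNReal.ofReal (Real.exp (δ * f ω))
      = 1 + ENNReal.ofReal (∫ t in (0:ℝ)..(f ω), δ * Real.exp (δ * t)) := by
    intro ω
    rw [keyint]
    have h1 : (1:ℝ) ≤ Real.exp (δ * f ω) :=
      Real.one_le_exp (mul_nonneg hδ0.le (le_max_right _ _))
    rw [← ENNReal.ofReal_one, ← ENNReal.ofReal_add zero_le_one (by linarith)]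
    congr 1
    ring
  -- layer cake
  have layercake : (∫⁻ ω, ENNReal.ofReal (∫ t in (0:ℝ)..(f ω), δ * Real.exp (δ * t)) ∂μ)
      = ∫⁻ t in Set.Ioi (0:ℝ), μ {a | t < f a} * ENNReal.ofReal (δ * Real.exp (δ * t)) :=
    lintegral_comp_eq_lintegral_meas_lt_mul μ
      (Eventually.of_forall fun ω => le_max_right _ _) f_mble.aemeasurable
      (fun t _ => hcont.intervalIntegrable 0 t)
      (Eventually.of_forall fun t => mul_nonneg hδ0.le (Real.exp_nonneg _))
  -- identify the superlevel sets
  have hset : ∀ t ∈ Set.Ioi (0:ℝ), {a | t < f a} = X 1 ⁻¹' Set.Ioi t := by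
    intro t ht
    ext a
    simp only [Set.mem_setOf_eq, hf, lt_max_iff, Set.mem_preimage, Set.mem_Ioi]
    exact ⟨fun h => h.elim id (fun h' => absurd ht (by simp; linarith)), Or.inl⟩
  have hc' : 0 < c - δ := by linarith
  -- bound on (0, x₁]
  have I1 : (∫⁻ t in Set.Ioc (0:ℝ) x₁,
        μ (X 1 ⁻¹' Set.Ioi t) * ENNReal.ofReal (δ * Real.exp (δ * t)))
      ≤ ENNReal.ofReal (Real.exp (δ * x₁) - 1) := by
    calc (∫⁻ t in Set.Ioc (0:ℝ) x₁,
          μ (X 1 ⁻¹' Set.Ioi t) * ENNReal.ofReal (δ * Real.exp (δ * t)))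
        ≤ ∫⁻ t in Set.Ioc (0:ℝ) x₁, ENNReal.ofReal (δ * Real.exp (δ * t)) := by
          refine lintegral_mono fun t => ?_
          calc μ (X 1 ⁻¹' Set.Ioi t) * ENNReal.ofReal (δ * Real.exp (δ * t))
              ≤ 1 * ENNReal.ofReal (δ * Real.exp (δ * t)) :=
                mul_le_mul_left prob_le_one _
            _ = _ := one_mul _
      _ = ENNReal.ofReal (∫ t in Set.Ioc (0:ℝ) x₁, δ * Real.exp (δ * t)) := by
          rw [ofReal_integral_eq_lintegral_ofReal ((hcont.intervalIntegrable 0 x₁).1)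
            (Eventually.of_forall fun t => mul_nonneg hδ0.le (Real.exp_nonneg _))]
      _ = ENNReal.ofReal (Real.exp (δ * x₁) - 1) := by
          rw [← intervalIntegral.integral_of_le hx₁.le, keyint]
  -- bound on (x₁, ∞)
  have I2 : (∫⁻ t in Set.Ioi x₁,
        μ (X 1 ⁻¹' Set.Ioi t) * ENNReal.ofReal (δ * Real.exp (δ * t)))
      ≤ ENNReal.ofReal (δ / (c - δ) * Real.exp (-((c - δ) * x₁))) := by
    have step : ∀ t ∈ Set.Ioi x₁,
        μ (X 1 ⁻¹' Set.Ioi t) * ENNReal.ofReal (δ * Real.exp (δ * t))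
        ≤ ENNReal.ofReal (δ * Real.exp (-((c - δ) * t))) := by
      intro t ht
      calc μ (X 1 ⁻¹' Set.Ioi t) * ENNReal.ofReal (δ * Real.exp (δ * t))
          ≤ ENNReal.ofReal (Real.exp (-(c * t))) * ENNReal.ofReal (δ * Real.exp (δ * t)) :=
            mul_le_mul_left (tail t (le_of_lt ht)) _
        _ = ENNReal.ofReal (Real.exp (-(c * t)) * (δ * Real.exp (δ * t))) :=
            (ENNReal.ofReal_mul (Real.exp_nonneg _)).symm
        _ = ENNReal.ofReal (δ * Real.exp (-((c - δ) * t))) := by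
            congr 1
            rw [show -((c - δ) * t) = -(c * t) + δ * t by ring, Real.exp_add]
            ring
    have hInt : IntegrableOn (fun t => δ * Real.exp (-((c - δ) * t))) (Set.Ioi x₁) := by
      have h := (exp_neg_integrableOn_Ioi x₁ hc').const_mul δ
      have he : (fun t => δ * Real.exp (-(c - δ) * t))
          = fun t => δ * Real.exp (-((c - δ) * t)) := by
        funext t; rw [neg_mul]
      rwa [he] at h
    calc (∫⁻ t in Set.Ioi x₁,
          μ (X 1 ⁻¹' Set.Ioi t) * ENNReal.ofReal (δ * Real.exp (δ * t)))
        ≤ ∫⁻ t in Set.Ioi x₁, ENNReal.ofReal (δ * Real.exp (-((c - δ) * t))) :=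
          setLIntegral_mono' measurableSet_Ioi step
      _ = ENNReal.ofReal (∫ t in Set.Ioi x₁, δ * Real.exp (-((c - δ) * t))) := by
          rw [ofReal_integral_eq_lintegral_ofReal hInt
            (Eventually.of_forall fun t => mul_nonneg hδ0.le (Real.exp_nonneg _))]
      _ = ENNReal.ofReal (δ / (c - δ) * Real.exp (-((c - δ) * x₁))) := by
          congr 1
          rw [MeasureTheory.integral_const_mul]
          have := MeasureTheory.integral_comp_mul_left_Ioi (fun x => Real.exp (-x)) x₁ hc'
          simp only [smul_eq_mul] at this
          rw [this, integral_exp_neg_Ioi]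
          field_simp
  -- assemble
  calc (∫⁻ ω, ENNReal.ofReal (Real.exp (δ * f ω)) ∂μ)
      = ∫⁻ ω, (1 + ENNReal.ofReal (∫ t in (0:ℝ)..(f ω), δ * Real.exp (δ * t))) ∂μ :=
        lintegral_congr fun ω => hdecomp ω
    _ = 1 + ∫⁻ t in Set.Ioi (0:ℝ),
          μ (X 1 ⁻¹' Set.Ioi t) * ENNReal.ofReal (δ * Real.exp (δ * t)) := by
        rw [lintegral_add_left measurable_const, lintegral_one, measure_univ, layercake]
        congr 1
        exact setLIntegral_congr_fun measurableSet_Ioi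
          (fun t ht => by rw [hset t ht])
    _ = 1 + ((∫⁻ t in Set.Ioc (0:ℝ) x₁,
          μ (X 1 ⁻¹' Set.Ioi t) * ENNReal.ofReal (δ * Real.exp (δ * t)))
        + ∫⁻ t in Set.Ioi x₁,
          μ (X 1 ⁻¹' Set.Ioi t) * ENNReal.ofReal (δ * Real.exp (δ * t))) := by
        rw [← Set.Ioc_union_Ioi_eq_Ioi hx₁.le, lintegral_union measurableSet_Ioi
          (Set.Ioc_disjoint_Ioi le_rfl)]
    _ ≤ 1 + (ENNReal.ofReal (Real.exp (δ * x₁) - 1)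
        + ENNReal.ofReal (δ / (c - δ) * Real.exp (-((c - δ) * x₁)))) :=
        add_le_add_right (add_le_add I1 I2) 1
    _ = ENNReal.ofReal (Real.exp (δ * x₁) + δ / (c - δ) * Real.exp (-((c - δ) * x₁))) := by
        have h1 : (0:ℝ) ≤ Real.exp (δ * x₁) - 1 := by
          have := Real.one_le_exp (mul_nonneg hδ0.le hx₁.le)
          linarith
        have h2 : (0:ℝ) ≤ δ / (c - δ) * Real.exp (-((c - δ) * x₁)) := by positivity
        rw [← ENNReal.ofReal_add h1 h2, ← ENNReal.ofReal_one,
          ← ENNReal.ofReal_add zero_le_one (by positivity)]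
        congr 1
        ring
end
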